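/- arXiv:1703.10218 — 3 statements merged into one kernel-verified Lean document; each statement's English description precedes it below -/
import Mathlib

section
/- Suppose ψ⁻ is a backward stationary solution and ψ⁺ is a forward stationary solution such that sup over φ ∈ C(𝕋^d) of ‖K_{−N,0}φ − ψ⁻(·,0)‖_* tends to 0 as N → ∞ and sup over φ ∈ C(𝕋^d) of ‖Ǩ_{0,M}φ − ψ⁺(·,0)‖_* tends to 0 as M → ∞, and suppose the function x ↦ ψ⁻(x,0) − ψ⁺(x,0) attains its minimum at a unique point x₀ ∈ 𝕋^d. Then for every ρ̃ > 0 there exists M₀ ∈ ℕ such that for all integers N, M ≥ M₀, every φ ∈ C(𝕋^d), every x ∈ 𝕋^d, and every minimizer γ for K_{−N,M}φ at x, one has dist(γ(0), x₀) < ρ̃. -/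
open MeasureTheory

noncomputable section

/-- Euclidean space ℝ^d. -/
abbrev V (d : ℕ) := EuclideanSpace ℝ (Fin d)

/-- The torus 𝕋^d = ℝ^d/ℤ^d, as a product of circles, with its quotient distance. -/
abbrev Torus (d : ℕ) := Fin d → AddCircle (1 : ℝ)

/-- The canonical projection ℝ^d → 𝕋^d. -/
def projT {d : ℕ} (x : V d) : Torus d := fun i => (x i : AddCircle (1 : ℝ))

/-- `ζ` is an absolutely continuous curve on `[s,t]` with (square-integrable)
derivative `g`. -/
def IsAC {d : ℕ} (ζ g : ℝ → V d) (s t : ℝ) : Prop :=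
  IntegrableOn g (Set.Icc s t) ∧ IntegrableOn (fun τ => ‖g τ‖ ^ 2) (Set.Icc s t) ∧
    ∀ τ ∈ Set.Icc s t, ζ τ = ζ s + ∫ u in s..τ, g u

/-- The action 𝔸(ζ) = ∫_s^t (½|ζ̇|² − b·ζ̇) dτ − Σ_{s ≤ j < t} F_j(ζ(j)) of the curve `ζ`
with derivative `g`, for the kicked potentials `F`. -/
def action {d : ℕ} (F : ℤ → Torus d → ℝ) (b : V d) (ζ g : ℝ → V d) (s t : ℝ) : ℝ :=
  (∫ τ in s..t, ((1 : ℝ) / 2 * ‖g τ‖ ^ 2 - (inner ℝ b (g τ) : ℝ))) -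
    ∑ j ∈ Finset.Ico ⌈s⌉ ⌈t⌉, F j (projT (ζ (j : ℝ)))

/-- The action function A_{s,t}(x,x') = inf over absolutely continuous curves from
`x` to `x'`. -/
def actFn {d : ℕ} (F : ℤ → Torus d → ℝ) (b : V d) (s t : ℝ) (x x' : Torus d) : ℝ :=
  sInf {a | ∃ ζ g : ℝ → V d, IsAC ζ g s t ∧ projT (ζ s) = x ∧ projT (ζ t) = x' ∧
    action F b ζ g s t = a}

/-- The backward Lax–Oleinik operator K_{s,t}φ(x) = min_y (φ(y) + A_{s,t}(y,x)), with
the convention K_{s,s}φ = φ. -/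
def KOp {d : ℕ} (F : ℤ → Torus d → ℝ) (b : V d) (s t : ℝ) (φ : Torus d → ℝ) :
    Torus d → ℝ :=
  if s < t then fun x => sInf {a | ∃ y : Torus d, a = φ y + actFn F b s t y x} else φ

/-- The forward Lax–Oleinik operator Ǩ_{s,t}φ(x) = max_y (φ(y) − A_{s,t}(x,y)), with
the convention Ǩ_{s,s}φ = φ. -/
def KChk {d : ℕ} (F : ℤ → Torus d → ℝ) (b : V d) (s t : ℝ) (φ : Torus d → ℝ) :
    Torus d → ℝ :=
  if s < t then fun x => sSup {a | ∃ y : Torus d, a = φ y - actFn F b s t x y} else φ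

/-- The seminorm ‖ψ‖_* = min_C sup_x |ψ(x) − C|. -/
def starNorm {d : ℕ} (ψ : Torus d → ℝ) : ℝ := ⨅ C : ℝ, ⨆ x : Torus d, |ψ x - C|

/-- A minimizer for `K_{m,n}φ` at its terminal point `ζ(n)`. -/
def IsMinimizer {d : ℕ} (F : ℤ → Torus d → ℝ) (b : V d) (m n : ℤ) (φ : Torus d → ℝ)
    (ζ g : ℝ → V d) : Prop :=
  IsAC ζ g m n ∧
    KOp F b m n φ (projT (ζ (n : ℝ))) = φ (projT (ζ (m : ℝ))) + action F b ζ g m n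

/-- A curve attaining `Ǩ_{m,n}φ` at its initial point `ζ(m)`. -/
def IsMaximizer {d : ℕ} (F : ℤ → Torus d → ℝ) (b : V d) (m n : ℤ) (φ : Torus d → ℝ)
    (ζ g : ℝ → V d) : Prop :=
  IsAC ζ g m n ∧
    KChk F b m n φ (projT (ζ (m : ℝ))) = φ (projT (ζ (n : ℝ))) - action F b ζ g m n

/-- A backward stationary solution. -/
def IsBackwardSol {d : ℕ} (F : ℤ → Torus d → ℝ) (b : V d) (ψ : Torus d → ℤ → ℝ) : Prop :=
  (∀ n : ℤ, Continuous fun x => ψ x n) ∧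
    ∀ m n : ℤ, m < n → ∀ x, KOp F b m n (fun y => ψ y m) x = ψ x n

/-- A forward stationary solution. -/
def IsForwardSol {d : ℕ} (F : ℤ → Torus d → ℝ) (b : V d) (ψ : Torus d → ℤ → ℝ) : Prop :=
  (∀ n : ℤ, Continuous fun x => ψ x n) ∧
    ∀ m n : ℤ, m < n → ∀ x, KChk F b m n (fun y => ψ y n) x = ψ x m

/-- `ζ` is affine on each interval `[j-1, j]` with (left) velocity `v j`. -/
def AffineOnUnit {d : ℕ} (ζ : ℝ → V d) (v : ℤ → V d) (m n : ℤ) : Prop :=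
  ∀ j : ℤ, m < j → j ≤ n → ∀ τ ∈ Set.Icc ((j : ℝ) - 1) (j : ℝ),
    ζ τ = ζ (j : ℝ) + (τ - (j : ℝ)) • v j

/-! ### Auxiliary lemmas -/

section Aux

variable {d : ℕ}

lemma aux_exists_lift (a : AddCircle (1:ℝ)) :
    ∃ r : ℝ, (r : AddCircle (1:ℝ)) = a ∧ |r| = ‖a‖ ∧ |r| ≤ 1/2 := by
  obtain ⟨x, rfl⟩ := Quotient.exists_rep a
  refine ⟨x - round x, ?_, ?_, abs_sub_round x⟩
  · rw [eq_comm, QuotientAddGroup.eq_iff_sub_mem]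
    exact ⟨round x, by simp⟩
  · rw [AddCircle.norm_eq]; norm_num

lemma aux_exists_liftT (x : Torus d) :
    ∃ v : V d, projT v = x ∧ ∀ i, |v i| ≤ 1/2 := by
  choose r hr hb using fun i => aux_exists_lift (x i)
  choose _ h2 using hb
  exact ⟨(WithLp.toLp 2 (fun i => r i) : V d), funext fun i => hr i, h2⟩

lemma aux_norm_le (v : V d) (c : ℝ) (hc : 0 ≤ c) (h : ∀ i, |v i| ≤ c) :
    ‖v‖ ≤ Real.sqrt d * c := by
  rw [EuclideanSpace.norm_eq]
  have : ∑ i, ‖v i‖ ^ 2 ≤ ∑ _i : Fin d, c ^ 2 := by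
    refine Finset.sum_le_sum fun i _ => ?_
    rw [Real.norm_eq_abs]
    exact sq_le_sq' (by linarith [abs_nonneg (v i), (h i)] ) (h i)
  calc Real.sqrt (∑ i, ‖v i‖ ^ 2) ≤ Real.sqrt (∑ _i : Fin d, c ^ 2) :=
        Real.sqrt_le_sqrt this
    _ = Real.sqrt (d * c ^ 2) := by simp [Finset.sum_const, mul_comm]
    _ = Real.sqrt d * c := by
        rw [Real.sqrt_mul (by positivity), Real.sqrt_sq hc]

lemma aux_projT_add_int (v : V d) (k : Fin d → ℤ) :
    projT (v + (WithLp.toLp 2 (fun i => (k i : ℝ)) : V d)) = projT v := by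
  funext i
  show ((v i + (k i : ℝ) : ℝ) : AddCircle (1:ℝ)) = (v i : AddCircle (1:ℝ))
  rw [QuotientAddGroup.eq_iff_sub_mem]
  exact ⟨k i, by simp⟩

lemma aux_sub_int_of_projT_eq {v w : V d} (h : projT v = projT w) :
    ∀ i, ∃ k : ℤ, v i - w i = (k : ℝ) := by
  intro i
  have := congrFun h i
  simp only [projT] at this
  rw [QuotientAddGroup.eq_iff_sub_mem] at this
  obtain ⟨k, hk⟩ := (AddSubgroup.mem_zmultiples_iff).1 this
  exact ⟨k, by simpa using hk.symm⟩

lemma aux_cont_bdd {f : Torus d → ℝ} (hf : Continuous f) :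
    ∃ B : ℝ, 0 ≤ B ∧ ∀ x, |f x| ≤ B := by
  obtain ⟨C, hC⟩ := isCompact_univ.exists_bound_of_continuousOn hf.continuousOn
  exact ⟨max C 0, le_max_right _ _, fun x =>
    le_trans (by simpa using hC x trivial) (le_max_left _ _)⟩

lemma aux_F_bdd (F : ℤ → Torus d → ℝ)
    (hF : ∀ j : ℤ, ContDiff ℝ 2 fun x : V d => F j (projT x)) (j : ℤ) :
    ∃ c : ℝ, 0 ≤ c ∧ ∀ x : Torus d, |F j x| ≤ c := by
  obtain ⟨C, hC⟩ := (isCompact_closedBall (0:V d) ((d:ℝ)+1)).exists_bound_of_continuousOn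
    ((hF j).continuous.continuousOn)
  refine ⟨max C 0, le_max_right _ _, fun x => ?_⟩
  obtain ⟨v, hv, hvb⟩ := aux_exists_liftT x
  have hvn : ‖v‖ ≤ (d:ℝ) + 1 := by
    have h1 := aux_norm_le v (1/2) (by norm_num) hvb
    have h2 : Real.sqrt d ≤ (d:ℝ) + 1 := by
      rw [show (d:ℝ) + 1 = Real.sqrt (((d:ℝ)+1)^2) by rw [Real.sqrt_sq (by positivity)]]
      exact Real.sqrt_le_sqrt (by nlinarith [Nat.cast_nonneg (α := ℝ) d])
    nlinarith [Real.sqrt_nonneg (d:ℝ)]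
  have := hC v (by simpa [Metric.mem_closedBall, dist_zero_right] using hvn)
  rw [← hv]
  exact le_trans (by simpa using this) (le_max_left _ _)

end Aux

section Aux2

variable {d : ℕ} (F : ℤ → Torus d → ℝ) (b : V d)

lemma aux_inner_int {g : ℝ → V d} {s : Set ℝ} (h1 : IntegrableOn g s) :
    IntegrableOn (fun τ => (inner ℝ b (g τ) : ℝ)) s :=
  (innerSL ℝ b).integrable_comp h1

lemma aux_integrand_int {g : ℝ → V d} {s : Set ℝ}
    (h1 : IntegrableOn g s) (h2 : IntegrableOn (fun τ => ‖g τ‖ ^ 2) s) :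
    IntegrableOn (fun τ => (1:ℝ)/2 * ‖g τ‖ ^ 2 - (inner ℝ b (g τ) : ℝ)) s :=
  (h2.const_mul _).sub (aux_inner_int b h1)

lemma aux_ii {E : Type*} [NormedAddCommGroup E] {f : ℝ → E} {s t a c : ℝ}
    (h : IntegrableOn f (Set.Icc s t)) (hs : s ≤ a) (hac : a ≤ c) (hc : c ≤ t) :
    IntervalIntegrable f volume a c :=
  (h.mono_set (by rw [Set.uIcc_of_le hac]; exact Set.Icc_subset_Icc hs hc)).intervalIntegrable

/-- pointwise lower bound for the Lagrangian -/
lemma aux_lagr_ge (u : V d) : -(‖b‖^2/2) ≤ (1:ℝ)/2 * ‖u‖^2 - (inner ℝ b u : ℝ) := by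
  have h1 : (inner ℝ b u : ℝ) ≤ ‖b‖ * ‖u‖ := real_inner_le_norm b u
  nlinarith [sq_nonneg (‖b‖ - ‖u‖)]

lemma aux_action_ge (Fb : ℤ → ℝ) (hFb : ∀ j x, |F j x| ≤ Fb j) {ζ g : ℝ → V d}
    {s t : ℝ} (hst : s ≤ t) (h : IsAC ζ g s t) :
    -((t - s) * (‖b‖^2/2)) - ∑ j ∈ Finset.Ico ⌈s⌉ ⌈t⌉, Fb j ≤ action F b ζ g s t := by
  unfold action
  have hint : ∫ τ in s..t, (-(‖b‖^2/2)) ≤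
      ∫ τ in s..t, ((1:ℝ)/2 * ‖g τ‖^2 - (inner ℝ b (g τ) : ℝ)) := by
    refine intervalIntegral.integral_mono_on hst (by simp) ?_ (fun τ _ => aux_lagr_ge b _)
    exact aux_ii (aux_integrand_int b h.1 h.2.1) le_rfl hst le_rfl
  have hsum : ∑ j ∈ Finset.Ico ⌈s⌉ ⌈t⌉, F j (projT (ζ (j:ℝ))) ≤ ∑ j ∈ Finset.Ico ⌈s⌉ ⌈t⌉, Fb j :=
    Finset.sum_le_sum fun j _ => le_of_abs_le (hFb j _)
  have : ∫ τ in s..t, (-(‖b‖^2/2) : ℝ) = -((t - s) * (‖b‖^2/2)) := by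
    rw [intervalIntegral.integral_const, smul_eq_mul]; ring
  linarith [this ▸ hint]

/-- The straight line curve between lifts. -/
lemma aux_straight_exists {s t : ℝ} (hst : s < t) (x x' : Torus d) :
    ∃ ζ g : ℝ → V d, IsAC ζ g s t ∧ projT (ζ s) = x ∧ projT (ζ t) = x' ∧
      ∀ τ : ℝ, ‖g τ‖ ≤ Real.sqrt d / (t - s) := by
  obtain ⟨v, hv, hvb⟩ := aux_exists_liftT x
  obtain ⟨w, hw, hwb⟩ := aux_exists_liftT x'
  set u : V d := w - v with hu
  have hub : ‖u‖ ≤ Real.sqrt d := by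
    have := aux_norm_le u 1 zero_le_one (fun i => by
      have hui : u i = w i - v i := rfl
      rw [hui]
      have h1 := hvb i; have h2 := hwb i
      have := abs_sub_abs_le_abs_sub (w i) (v i)
      have := abs_sub (w i) (v i)
      calc |w i - v i| ≤ |w i| + |v i| := abs_sub _ _
        _ ≤ 1 := by linarith)
    simpa using this
  refine ⟨fun τ => v + ((τ - s)/(t - s)) • u, fun _ => (1/(t-s)) • u, ⟨?_, ?_, ?_⟩, ?_, ?_, ?_⟩
  · exact integrableOn_const (hs := measure_Icc_lt_top.ne)
  · exact integrableOn_const (hs := measure_Icc_lt_top.ne)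
  · intro τ hτ
    rw [intervalIntegral.integral_const, smul_smul]
    show v + ((τ - s) / (t - s)) • u = v + ((s - s) / (t - s)) • u + ((τ - s) * (1 / (t - s))) • u
    have h0 : (s - s)/(t-s) = 0 := by simp
    rw [h0, zero_smul, add_zero]
    congr 1
    rw [div_eq_mul_inv]
    ring
  · simpa using hv
  · have : t - s ≠ 0 := by linarith
    simp only [div_self this, one_smul, hu]
    simpa using hw
  · intro τ
    rw [norm_smul]
    have h0 : 0 < t - s := by linarith
    have : ‖(1/(t-s) : ℝ)‖ = 1/(t-s) := by
      rw [Real.norm_eq_abs, abs_of_pos (by positivity)]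
    rw [this, div_eq_mul_inv, div_eq_mul_inv, one_mul, mul_comm]
    gcongr


end Aux2

section Aux3

variable {d : ℕ} (F : ℤ → Torus d → ℝ) (b : V d)

/-- The defining set of `actFn`. -/
def actSet (s t : ℝ) (x x' : Torus d) : Set ℝ :=
  {a | ∃ ζ g : ℝ → V d, IsAC ζ g s t ∧ projT (ζ s) = x ∧ projT (ζ t) = x' ∧
    action F b ζ g s t = a}

lemma aux_actFn_def (s t : ℝ) (x x' : Torus d) :
    actFn F b s t x x' = sInf (actSet F b s t x x') := rfl

lemma aux_actSet_nonempty {s t : ℝ} (hst : s < t) (x x' : Torus d) :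
    (actSet F b s t x x').Nonempty := by
  obtain ⟨ζ, g, h1, h2, h3, _⟩ := aux_straight_exists hst x x'
  exact ⟨_, ζ, g, h1, h2, h3, rfl⟩

lemma aux_actSet_bddBelow (Fb : ℤ → ℝ) (hFb : ∀ j x, |F j x| ≤ Fb j) {s t : ℝ}
    (hst : s ≤ t) (x x' : Torus d) : BddBelow (actSet F b s t x x') := by
  refine ⟨-((t - s) * (‖b‖^2/2)) - ∑ j ∈ Finset.Ico ⌈s⌉ ⌈t⌉, Fb j, ?_⟩
  rintro a ⟨ζ, g, h1, _, _, rfl⟩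
  exact aux_action_ge F b Fb hFb hst h1

lemma aux_actFn_le_action (Fb : ℤ → ℝ) (hFb : ∀ j x, |F j x| ≤ Fb j) {s t : ℝ}
    (hst : s ≤ t) {x x' : Torus d} {ζ g : ℝ → V d} (h1 : IsAC ζ g s t)
    (h2 : projT (ζ s) = x) (h3 : projT (ζ t) = x') :
    actFn F b s t x x' ≤ action F b ζ g s t :=
  csInf_le (aux_actSet_bddBelow F b Fb hFb hst x x') ⟨ζ, g, h1, h2, h3, rfl⟩

lemma aux_actFn_ge (Fb : ℤ → ℝ) (hFb : ∀ j x, |F j x| ≤ Fb j) {s t : ℝ}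
    (hst : s < t) (x x' : Torus d) :
    -((t - s) * (‖b‖^2/2)) - ∑ j ∈ Finset.Ico ⌈s⌉ ⌈t⌉, Fb j ≤ actFn F b s t x x' :=
  le_csInf (aux_actSet_nonempty F b hst x x')
    (by rintro a ⟨ζ, g, h1, _, _, rfl⟩; exact aux_action_ge F b Fb hFb hst.le h1)

lemma aux_exists_curve (Fb : ℤ → ℝ) (hFb : ∀ j x, |F j x| ≤ Fb j) {s t : ℝ}
    (hst : s < t) (x x' : Torus d) {η : ℝ} (hη : 0 < η) :
    ∃ ζ g : ℝ → V d, IsAC ζ g s t ∧ projT (ζ s) = x ∧ projT (ζ t) = x' ∧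
      action F b ζ g s t < actFn F b s t x x' + η := by
  have h := (csInf_lt_iff (aux_actSet_bddBelow F b Fb hFb hst.le x x')
    (aux_actSet_nonempty F b hst x x')).1 (lt_add_of_pos_right _ hη)
  obtain ⟨a, ⟨ζ, g, h1, h2, h3, rfl⟩, ha⟩ := h
  exact ⟨ζ, g, h1, h2, h3, ha⟩

lemma aux_actFn_le_Amax (Fb : ℤ → ℝ) (hFb : ∀ j x, |F j x| ≤ Fb j) {s t : ℝ}
    (hst : s < t) (h1t : 1 ≤ t - s) (x x' : Torus d) :
    actFn F b s t x x' ≤ (t - s) * ((d:ℝ)/2 + ‖b‖ * Real.sqrt d)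
      + ∑ j ∈ Finset.Ico ⌈s⌉ ⌈t⌉, Fb j := by
  obtain ⟨ζ, g, hAC, h2, h3, hg⟩ := aux_straight_exists hst x x'
  refine le_trans (aux_actFn_le_action F b Fb hFb hst.le hAC h2 h3) ?_
  unfold action
  have hd0 : 0 < t - s := by linarith
  have hgb : ∀ τ, ‖g τ‖ ≤ Real.sqrt d := fun τ =>
    le_trans (hg τ) (by
      rw [div_le_iff₀ hd0]
      nlinarith [Real.sqrt_nonneg (d:ℝ)])
  have hpt : ∀ τ, ((1:ℝ)/2 * ‖g τ‖^2 - (inner ℝ b (g τ) : ℝ)) ≤ (d:ℝ)/2 + ‖b‖ * Real.sqrt d := by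
    intro τ
    have h1 : -(inner ℝ b (g τ) : ℝ) ≤ ‖b‖ * ‖g τ‖ := by
      have := abs_real_inner_le_norm b (g τ)
      have := neg_abs_le (inner ℝ b (g τ) : ℝ)
      linarith
    have h2 : ‖g τ‖^2 ≤ (d:ℝ) := by
      have := hgb τ
      nlinarith [norm_nonneg (g τ), Real.sq_sqrt (Nat.cast_nonneg (α := ℝ) d)]
    have h3 : ‖b‖ * ‖g τ‖ ≤ ‖b‖ * Real.sqrt d := by
      gcongr; exact hgb τ
    nlinarith
  have hint : ∫ τ in s..t, ((1:ℝ)/2 * ‖g τ‖^2 - (inner ℝ b (g τ) : ℝ)) ≤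
      ∫ τ in s..t, ((d:ℝ)/2 + ‖b‖ * Real.sqrt d) := by
    refine intervalIntegral.integral_mono_on hst.le
      (aux_ii (aux_integrand_int b hAC.1 hAC.2.1) le_rfl hst.le le_rfl) (by simp)
      (fun τ _ => hpt τ)
  have hc : ∫ τ in s..t, ((d:ℝ)/2 + ‖b‖ * Real.sqrt d) = (t-s) * ((d:ℝ)/2 + ‖b‖ * Real.sqrt d) := by
    rw [intervalIntegral.integral_const, smul_eq_mul]
  have hsum : -∑ j ∈ Finset.Ico ⌈s⌉ ⌈t⌉, F j (projT (ζ (j:ℝ))) ≤ ∑ j ∈ Finset.Ico ⌈s⌉ ⌈t⌉, Fb j := by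
    have : ∑ j ∈ Finset.Ico ⌈s⌉ ⌈t⌉, (-(Fb j)) ≤ ∑ j ∈ Finset.Ico ⌈s⌉ ⌈t⌉, F j (projT (ζ (j:ℝ))) :=
      Finset.sum_le_sum fun j _ => neg_le_of_abs_le (hFb j _)
    have h2 : ∑ j ∈ Finset.Ico ⌈s⌉ ⌈t⌉, (-(Fb j)) = -∑ j ∈ Finset.Ico ⌈s⌉ ⌈t⌉, Fb j := by
      rw [Finset.sum_neg_distrib]
    linarith [h2 ▸ this]
  linarith [hc ▸ hint]

end Aux3

section Aux4

variable {d : ℕ} (F : ℤ → Torus d → ℝ) (b : V d)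

lemma aux_ae_single {E : Type*} (f₁ f₂ : ℝ → E) (c : ℝ) (h : ∀ τ, τ ≠ c → f₁ τ = f₂ τ) :
    f₁ =ᵐ[volume] f₂ := by
  have hsub : {τ | ¬ f₁ τ = f₂ τ} ⊆ {c} := by
    intro τ hτ
    by_contra hne
    exact hτ (h τ hne)
  exact measure_mono_null hsub (measure_singleton c)

lemma aux_IsAC_restrict {ζ g : ℝ → V d} {s t s' t' : ℝ} (h : IsAC ζ g s t)
    (hs : s ≤ s') (hst : s' ≤ t') (ht : t' ≤ t) : IsAC ζ g s' t' := by
  have hsub : Set.Icc s' t' ⊆ Set.Icc s t := Set.Icc_subset_Icc hs ht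
  refine ⟨h.1.mono_set hsub, h.2.1.mono_set hsub, fun τ hτ => ?_⟩
  have h1 := h.2.2 τ ⟨le_trans hs hτ.1, le_trans hτ.2 ht⟩
  have h2 := h.2.2 s' ⟨hs, le_trans hst ht⟩
  have hadd : (∫ u in s..s', g u) + (∫ u in s'..τ, g u) = ∫ u in s..τ, g u :=
    intervalIntegral.integral_add_adjacent_intervals
      (aux_ii h.1 le_rfl hs (le_trans hτ.1 (le_trans hτ.2 ht)))
      (aux_ii h.1 hs hτ.1 (le_trans hτ.2 ht))
  rw [h1, h2]
  rw [← hadd]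
  abel

lemma aux_action_split {ζ g : ℝ → V d} (m k n : ℤ) (hmk : m ≤ k) (hkn : k ≤ n)
    (h : IsAC ζ g m n) :
    action F b ζ g m n = action F b ζ g m k + action F b ζ g k n := by
  unfold action
  have hmk' : (m:ℝ) ≤ k := by exact_mod_cast hmk
  have hkn' : (k:ℝ) ≤ n := by exact_mod_cast hkn
  have hint : (∫ τ in (m:ℝ)..k, ((1:ℝ)/2 * ‖g τ‖^2 - (inner ℝ b (g τ) : ℝ)))
      + (∫ τ in (k:ℝ)..n, ((1:ℝ)/2 * ‖g τ‖^2 - (inner ℝ b (g τ) : ℝ)))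
      = ∫ τ in (m:ℝ)..n, ((1:ℝ)/2 * ‖g τ‖^2 - (inner ℝ b (g τ) : ℝ)) :=
    intervalIntegral.integral_add_adjacent_intervals
      (aux_ii (aux_integrand_int b h.1 h.2.1) le_rfl hmk' hkn')
      (aux_ii (aux_integrand_int b h.1 h.2.1) hmk' hkn' le_rfl)
  have hceil : ∀ z : ℤ, ⌈(z:ℝ)⌉ = z := fun z => Int.ceil_intCast z
  rw [hceil, hceil, hceil]
  have hsplit : Finset.Ico m k ∪ Finset.Ico k n = Finset.Ico m n :=
    Finset.Ico_union_Ico_eq_Ico hmk hkn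
  have hdisj : Disjoint (Finset.Ico m k) (Finset.Ico k n) :=
    Finset.Ico_disjoint_Ico_consecutive m k n
  have hsum : ∑ j ∈ Finset.Ico m n, F j (projT (ζ (j:ℝ)))
      = ∑ j ∈ Finset.Ico m k, F j (projT (ζ (j:ℝ)))
        + ∑ j ∈ Finset.Ico k n, F j (projT (ζ (j:ℝ))) := by
    rw [← hsplit, Finset.sum_union hdisj]
  rw [← hint, hsum]
  ring

end Aux4

section Aux5

variable {d : ℕ} (F : ℤ → Torus d → ℝ) (b : V d)

lemma aux_actFn_triangle (Fb : ℤ → ℝ) (hFb : ∀ j x, |F j x| ≤ Fb j) (m k n : ℤ)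
    (h1 : m < k) (h2 : k < n) (x y z : Torus d) :
    actFn F b m n x z ≤ actFn F b m k x y + actFn F b k n y z := by
  refine le_of_forall_pos_le_add fun η hη => ?_
  have hmk : (m:ℝ) < k := by exact_mod_cast h1
  have hkn : (k:ℝ) < n := by exact_mod_cast h2
  obtain ⟨ζ₁, g₁, hAC₁, hs₁, ht₁, ha₁⟩ := aux_exists_curve F b Fb hFb hmk x y (half_pos hη)
  obtain ⟨ζ₂, g₂, hAC₂, hs₂, ht₂, ha₂⟩ := aux_exists_curve F b Fb hFb hkn y z (half_pos hη)
  have hproj : projT (ζ₁ (k:ℝ)) = projT (ζ₂ (k:ℝ)) := by rw [ht₁, hs₂]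
  choose kv hkv using aux_sub_int_of_projT_eq hproj
  set w : V d := (WithLp.toLp 2 (fun i => (kv i : ℝ)) : V d) with hwdef
  have hζw : ζ₂ (k:ℝ) + w = ζ₁ (k:ℝ) := by
    ext i
    show ζ₂ (k:ℝ) i + (kv i : ℝ) = ζ₁ (k:ℝ) i
    have := hkv i; linarith
  have hprojw : ∀ v : V d, projT (v + w) = projT v := fun v => aux_projT_add_int v kv
  set ζ : ℝ → V d := fun τ => if τ ≤ (k:ℝ) then ζ₁ τ else ζ₂ τ + w with hζdef
  set g : ℝ → V d := fun τ => if τ ≤ (k:ℝ) then g₁ τ else g₂ τ with hgdef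
  -- basic agreement facts
  have hgEq1 : Set.EqOn g g₁ (Set.Icc (m:ℝ) (k:ℝ)) := fun τ hτ => if_pos hτ.2
  have hgEq2 : ∀ τ ∈ Set.Ioc (k:ℝ) (n:ℝ), g τ = g₂ τ := fun τ hτ => if_neg (not_le.2 hτ.1)
  -- integrability of g on the two pieces
  have hgInt1 : IntegrableOn g (Set.Icc (m:ℝ) (k:ℝ)) :=
    ((hAC₁.1).congr_fun (fun τ hτ => (hgEq1 hτ).symm) measurableSet_Icc)
  have hgInt2 : IntegrableOn g (Set.Icc (k:ℝ) (n:ℝ)) := by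
    rw [integrableOn_Icc_iff_integrableOn_Ioc]
    exact ((hAC₂.1.mono_set Set.Ioc_subset_Icc_self).congr_fun
      (fun τ hτ => (hgEq2 τ hτ).symm) measurableSet_Ioc)
  have hgInt : IntegrableOn g (Set.Icc (m:ℝ) (n:ℝ)) := by
    have := hgInt1.union hgInt2
    rwa [Set.Icc_union_Icc_eq_Icc hmk.le hkn.le] at this
  -- same for ‖g‖^2
  have hg2Eq1 : Set.EqOn (fun τ => ‖g τ‖^2) (fun τ => ‖g₁ τ‖^2) (Set.Icc (m:ℝ) (k:ℝ)) :=
    fun τ hτ => by simp only [hgEq1 hτ]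
  have hg2Int1 : IntegrableOn (fun τ => ‖g τ‖^2) (Set.Icc (m:ℝ) (k:ℝ)) :=
    ((hAC₁.2.1).congr_fun (fun τ hτ => (hg2Eq1 hτ).symm) measurableSet_Icc)
  have hg2Int2 : IntegrableOn (fun τ => ‖g τ‖^2) (Set.Icc (k:ℝ) (n:ℝ)) := by
    rw [integrableOn_Icc_iff_integrableOn_Ioc]
    exact ((hAC₂.2.1.mono_set Set.Ioc_subset_Icc_self).congr_fun
      (fun τ hτ => by simp only [hgEq2 τ hτ]) measurableSet_Ioc)
  have hg2Int : IntegrableOn (fun τ => ‖g τ‖^2) (Set.Icc (m:ℝ) (n:ℝ)) := by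
    have := hg2Int1.union hg2Int2
    rwa [Set.Icc_union_Icc_eq_Icc hmk.le hkn.le] at this
  -- interval integral congruences
  have hic1 : ∀ τ1 τ2 : ℝ, (m:ℝ) ≤ τ1 → τ1 ≤ τ2 → τ2 ≤ (k:ℝ) →
      (∫ u in τ1..τ2, g u) = ∫ u in τ1..τ2, g₁ u := by
    intro τ1 τ2 ha hb hc
    refine intervalIntegral.integral_congr fun u hu => ?_
    rw [Set.uIcc_of_le hb] at hu
    exact hgEq1 ⟨le_trans ha hu.1, le_trans hu.2 hc⟩
  have hic2 : ∀ τ2 : ℝ, (k:ℝ) ≤ τ2 → τ2 ≤ (n:ℝ) →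
      (∫ u in (k:ℝ)..τ2, g u) = ∫ u in (k:ℝ)..τ2, g₂ u := by
    intro τ2 hb hc
    refine intervalIntegral.integral_congr_ae (Filter.Eventually.of_forall fun u hu => ?_)
    rw [Set.uIoc_of_le hb] at hu
    exact hgEq2 u ⟨hu.1, le_trans hu.2 hc⟩
  -- the curve is AC
  have hAC : IsAC ζ g (m:ℝ) (n:ℝ) := by
    refine ⟨hgInt, hg2Int, fun τ hτ => ?_⟩
    have hζm : ζ (m:ℝ) = ζ₁ (m:ℝ) := if_pos hmk.le
    by_cases hτk : τ ≤ (k:ℝ)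
    · have hζτ : ζ τ = ζ₁ τ := if_pos hτk
      rw [hζτ, hζm, hAC₁.2.2 τ ⟨hτ.1, hτk⟩, hic1 (m:ℝ) τ le_rfl hτ.1 hτk]
    · push_neg at hτk
      have hζτ : ζ τ = ζ₂ τ + w := if_neg (not_le.2 hτk)
      have hII1 : IntervalIntegrable g volume (m:ℝ) (k:ℝ) :=
        aux_ii hgInt1 le_rfl hmk.le le_rfl
      have hII2 : IntervalIntegrable g volume (k:ℝ) τ :=
        aux_ii hgInt2 le_rfl hτk.le hτ.2
      have hadd : (∫ u in (m:ℝ)..(k:ℝ), g u) + (∫ u in (k:ℝ)..τ, g u)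
          = ∫ u in (m:ℝ)..τ, g u :=
        intervalIntegral.integral_add_adjacent_intervals hII1 hII2
      rw [hζτ, hζm, hAC₂.2.2 τ ⟨hτk.le, hτ.2⟩, ← hadd,
        hic1 (m:ℝ) (k:ℝ) le_rfl hmk.le le_rfl, hic2 τ hτk.le hτ.2]
      rw [hAC₁.2.2 (k:ℝ) ⟨hmk.le, le_rfl⟩] at hζw
      have hre : (ζ₂ (k:ℝ) + ∫ u in (k:ℝ)..τ, g₂ u) + w
          = (ζ₂ (k:ℝ) + w) + ∫ u in (k:ℝ)..τ, g₂ u := by abel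
      rw [hre, hζw]
      abel
  -- endpoints
  have hend1 : projT (ζ (m:ℝ)) = x := by
    have : ζ (m:ℝ) = ζ₁ (m:ℝ) := if_pos hmk.le
    rw [this, hs₁]
  have hend2 : projT (ζ (n:ℝ)) = z := by
    have : ζ (n:ℝ) = ζ₂ (n:ℝ) + w := if_neg (not_le.2 hkn)
    rw [this, hprojw, ht₂]
  -- action splits
  have hact : action F b ζ g (m:ℝ) (n:ℝ)
      = action F b ζ₁ g₁ (m:ℝ) (k:ℝ) + action F b ζ₂ g₂ (k:ℝ) (n:ℝ) := by
    unfold action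
    have hintL : IntegrableOn (fun τ => (1:ℝ)/2 * ‖g τ‖^2 - (inner ℝ b (g τ):ℝ))
        (Set.Icc (m:ℝ) (k:ℝ)) := aux_integrand_int b hgInt1 hg2Int1
    have hintR : IntegrableOn (fun τ => (1:ℝ)/2 * ‖g τ‖^2 - (inner ℝ b (g τ):ℝ))
        (Set.Icc (k:ℝ) (n:ℝ)) := aux_integrand_int b hgInt2 hg2Int2
    have hadd : (∫ τ in (m:ℝ)..(k:ℝ), ((1:ℝ)/2 * ‖g τ‖^2 - (inner ℝ b (g τ):ℝ)))
        + (∫ τ in (k:ℝ)..(n:ℝ), ((1:ℝ)/2 * ‖g τ‖^2 - (inner ℝ b (g τ):ℝ)))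
        = ∫ τ in (m:ℝ)..(n:ℝ), ((1:ℝ)/2 * ‖g τ‖^2 - (inner ℝ b (g τ):ℝ)) :=
      intervalIntegral.integral_add_adjacent_intervals
        (aux_ii hintL le_rfl hmk.le le_rfl) (aux_ii hintR le_rfl hkn.le le_rfl)
    have hcong1 : (∫ τ in (m:ℝ)..(k:ℝ), ((1:ℝ)/2 * ‖g τ‖^2 - (inner ℝ b (g τ):ℝ)))
        = ∫ τ in (m:ℝ)..(k:ℝ), ((1:ℝ)/2 * ‖g₁ τ‖^2 - (inner ℝ b (g₁ τ):ℝ)) := by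
      refine intervalIntegral.integral_congr fun u hu => ?_
      rw [Set.uIcc_of_le hmk.le] at hu
      simp only [hgEq1 hu]
    have hcong2 : (∫ τ in (k:ℝ)..(n:ℝ), ((1:ℝ)/2 * ‖g τ‖^2 - (inner ℝ b (g τ):ℝ)))
        = ∫ τ in (k:ℝ)..(n:ℝ), ((1:ℝ)/2 * ‖g₂ τ‖^2 - (inner ℝ b (g₂ τ):ℝ)) := by
      refine intervalIntegral.integral_congr_ae (Filter.Eventually.of_forall fun u hu => ?_)
      rw [Set.uIoc_of_le hkn.le] at hu
      simp only [hgEq2 u hu]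
    have hceil : ∀ z : ℤ, ⌈(z:ℝ)⌉ = z := fun z => Int.ceil_intCast z
    rw [hceil, hceil, hceil]
    have hsum : ∑ j ∈ Finset.Ico m n, F j (projT (ζ (j:ℝ)))
        = ∑ j ∈ Finset.Ico m k, F j (projT (ζ₁ (j:ℝ)))
          + ∑ j ∈ Finset.Ico k n, F j (projT (ζ₂ (j:ℝ))) := by
      rw [← Finset.Ico_union_Ico_eq_Ico h1.le h2.le,
        Finset.sum_union (Finset.Ico_disjoint_Ico_consecutive m k n)]
      congr 1
      · refine Finset.sum_congr rfl fun j hj => ?_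
        rw [Finset.mem_Ico] at hj
        have : ζ (j:ℝ) = ζ₁ (j:ℝ) := if_pos (by exact_mod_cast hj.2.le)
        rw [this]
      · refine Finset.sum_congr rfl fun j hj => ?_
        rw [Finset.mem_Ico] at hj
        by_cases hjk : j = k
        · subst hjk
          have : ζ (j:ℝ) = ζ₁ (j:ℝ) := if_pos le_rfl
          rw [this, hproj]
        · have hj2 : (k:ℝ) < (j:ℝ) := by
            exact_mod_cast lt_of_le_of_ne hj.1 (Ne.symm hjk)
          have : ζ (j:ℝ) = ζ₂ (j:ℝ) + w := if_neg (not_le.2 hj2)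
          rw [this, hprojw]
    rw [← hadd, hcong1, hcong2, hsum]
    ring
  calc actFn F b (m:ℝ) (n:ℝ) x z ≤ action F b ζ g (m:ℝ) (n:ℝ) :=
        aux_actFn_le_action F b Fb hFb (le_trans hmk.le hkn.le) hAC hend1 hend2
    _ = action F b ζ₁ g₁ (m:ℝ) (k:ℝ) + action F b ζ₂ g₂ (k:ℝ) (n:ℝ) := hact
    _ ≤ (actFn F b (m:ℝ) (k:ℝ) x y + η/2) + (actFn F b (k:ℝ) (n:ℝ) y z + η/2) := by
        linarith
    _ = actFn F b (m:ℝ) (k:ℝ) x y + actFn F b (k:ℝ) (n:ℝ) y z + η := by ring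

end Aux5

section Aux6

variable {d : ℕ} (F : ℤ → Torus d → ℝ) (b : V d)

lemma aux_energy_bound (Fb : ℤ → ℝ) (hFb : ∀ j x, |F j x| ≤ Fb j) (M : ℕ)
    {ζ g : ℝ → V d} (hAC : IsAC ζ g 0 (M:ℝ)) (B : ℝ)
    (hact : action F b ζ g 0 (M:ℝ) ≤ B) :
    ∫ τ in (0:ℝ)..(M:ℝ), ‖g τ‖^2
      ≤ 4*(B + (∑ j ∈ Finset.Ico (0:ℤ) (M:ℤ), Fb j) + (M:ℝ)*‖b‖^2) := by
  have hM0 : (0:ℝ) ≤ (M:ℝ) := by positivity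
  have hceil : Finset.Ico ⌈(0:ℝ)⌉ ⌈(M:ℝ)⌉ = Finset.Ico (0:ℤ) (M:ℤ) := by
    norm_num [Int.ceil_natCast]
  set SF := ∑ j ∈ Finset.Ico (0:ℤ) (M:ℤ), Fb j with hSF
  have hsum : ∑ j ∈ Finset.Ico ⌈(0:ℝ)⌉ ⌈(M:ℝ)⌉, F j (projT (ζ (j:ℝ))) ≤ SF := by
    rw [hceil]
    exact Finset.sum_le_sum fun j _ => le_of_abs_le (hFb j _)
  have hLint : ∫ τ in (0:ℝ)..(M:ℝ), ((1:ℝ)/2 * ‖g τ‖^2 - (inner ℝ b (g τ):ℝ)) ≤ B + SF := by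
    have : action F b ζ g 0 (M:ℝ)
        = (∫ τ in (0:ℝ)..(M:ℝ), ((1:ℝ)/2 * ‖g τ‖^2 - (inner ℝ b (g τ):ℝ)))
          - ∑ j ∈ Finset.Ico ⌈(0:ℝ)⌉ ⌈(M:ℝ)⌉, F j (projT (ζ (j:ℝ))) := rfl
    rw [this] at hact
    have key := add_le_add hact hsum
    rwa [sub_add_cancel] at key
  have hII2 : IntervalIntegrable (fun τ => ‖g τ‖^2) volume 0 (M:ℝ) :=
    aux_ii hAC.2.1 le_rfl hM0 le_rfl
  have hIIL : IntervalIntegrable (fun τ => (1:ℝ)/2 * ‖g τ‖^2 - (inner ℝ b (g τ):ℝ)) volume 0 (M:ℝ) :=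
    aux_ii (aux_integrand_int b hAC.1 hAC.2.1) le_rfl hM0 le_rfl
  have hmono : ∫ τ in (0:ℝ)..(M:ℝ), ((1:ℝ)/4 * ‖g τ‖^2 - ‖b‖^2)
      ≤ ∫ τ in (0:ℝ)..(M:ℝ), ((1:ℝ)/2 * ‖g τ‖^2 - (inner ℝ b (g τ):ℝ)) := by
    refine intervalIntegral.integral_mono_on hM0 ((hII2.const_mul _).sub
      (intervalIntegrable_const)) hIIL fun τ _ => ?_
    have h1 : (inner ℝ b (g τ) : ℝ) ≤ ‖b‖ * ‖g τ‖ := real_inner_le_norm b (g τ)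
    nlinarith [sq_nonneg (‖g τ‖ - 2*‖b‖), norm_nonneg (g τ), norm_nonneg b]
  have hcalc : ∫ τ in (0:ℝ)..(M:ℝ), ((1:ℝ)/4 * ‖g τ‖^2 - ‖b‖^2)
      = (1:ℝ)/4 * (∫ τ in (0:ℝ)..(M:ℝ), ‖g τ‖^2) - (M:ℝ)*‖b‖^2 := by
    rw [intervalIntegral.integral_sub (hII2.const_mul _) intervalIntegrable_const,
      intervalIntegral.integral_const_mul, intervalIntegral.integral_const, smul_eq_mul]
    ring
  linarith [hcalc ▸ hmono]

lemma aux_shift_curve (Fb : ℤ → ℝ) (M : ℕ) (hM : 1 ≤ M) {ζ g : ℝ → V d}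
    (hAC : IsAC ζ g 0 (M:ℝ)) (w : V d) :
    ∃ ζ' g' : ℝ → V d, IsAC ζ' g' 0 (M:ℝ) ∧ ζ' 0 = ζ 0 ∧ ζ' (M:ℝ) = ζ (M:ℝ) + w ∧
      action F b ζ' g' 0 (M:ℝ) ≤ action F b ζ g 0 (M:ℝ)
        + ‖w‖/2 * (∫ τ in (0:ℝ)..(M:ℝ), ‖g τ‖^2)
        + (M:ℝ) * (‖w‖/2 + ‖w‖^2/2 + ‖b‖*‖w‖) := by
  have hM1 : (1:ℝ) ≤ (M:ℝ) := by exact_mod_cast hM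
  have hM0 : (0:ℝ) ≤ (M:ℝ)-1 := by linarith
  set c : ℝ := (M:ℝ) - 1 with hc
  set ind : ℝ → ℝ := fun τ => if c < τ then 1 else 0 with hinddef
  have hind_eq : ind = (Set.Ioi c).indicator (fun _ => (1:ℝ)) := by
    funext τ; simp [hinddef, Set.indicator_apply, Set.mem_Ioi]
  have hind01 : ∀ τ, ind τ = 0 ∨ ind τ = 1 := by
    intro τ; by_cases h : c < τ <;> simp [hinddef, h]
  have hindIcc : IntegrableOn ind (Set.Icc (0:ℝ) (M:ℝ)) := by
    rw [hind_eq]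
    exact (integrableOn_const (hs := measure_Icc_lt_top.ne)).indicator measurableSet_Ioi
  -- indicator-times-integrable is integrable
  have hmul_int : ∀ (cf : ℝ → ℝ), IntegrableOn cf (Set.Icc (0:ℝ) (M:ℝ)) →
      IntegrableOn (fun τ => ind τ * cf τ) (Set.Icc (0:ℝ) (M:ℝ)) := by
    intro cf hcf
    have : (fun τ => ind τ * cf τ) = (Set.Ioi c).indicator cf := by
      funext τ
      by_cases h : c < τ <;>
        simp [hinddef, h, Set.indicator_apply, Set.mem_Ioi]
    rw [this]
    exact hcf.indicator measurableSet_Ioi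
  set ζ' : ℝ → V d := fun τ => ζ τ + (max 0 (τ - c)) • w with hζ'def
  set g' : ℝ → V d := fun τ => g τ + ind τ • w with hg'def
  have hζ'0 : ζ' 0 = ζ 0 := by
    simp only [hζ'def]
    rw [max_eq_left (by linarith), zero_smul, add_zero]
  have hζ'M : ζ' (M:ℝ) = ζ (M:ℝ) + w := by
    simp only [hζ'def]
    rw [show (M:ℝ) - c = 1 by rw [hc]; ring, max_eq_right (by linarith), one_smul]
  -- integrability of g'
  have hg'Int : IntegrableOn g' (Set.Icc (0:ℝ) (M:ℝ)) :=
    hAC.1.add (hindIcc.smul_const w)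
  -- pointwise expansion of ‖g'‖²
  have hptsq : ∀ τ, ‖g' τ‖^2 = ‖g τ‖^2 + ind τ * (2*(inner ℝ (g τ) w : ℝ) + ‖w‖^2) := by
    intro τ
    rcases hind01 τ with h | h
    · simp only [hg'def, h, zero_smul, add_zero, zero_mul]
    · simp only [hg'def, h, one_smul, one_mul]
      rw [norm_add_sq_real]; ring
  have hg'2Int : IntegrableOn (fun τ => ‖g' τ‖^2) (Set.Icc (0:ℝ) (M:ℝ)) := by
    have heq : (fun τ => ‖g' τ‖^2)
        = fun τ => ‖g τ‖^2 + ind τ * (2*(inner ℝ (g τ) w : ℝ) + ‖w‖^2) := funext hptsq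
    rw [heq]
    refine hAC.2.1.add (hmul_int _ ?_)
    have hi : IntegrableOn (fun τ => (inner ℝ (g τ) w : ℝ)) (Set.Icc (0:ℝ) (M:ℝ)) := by
      have h1 := aux_inner_int (d := d) w hAC.1
      have heq : (fun τ => (inner ℝ (g τ) w : ℝ)) = fun τ => (inner ℝ w (g τ) : ℝ) := by
        funext τ; exact real_inner_comm _ _
      rw [heq]; exact h1
    exact (hi.const_mul 2).add (integrableOn_const (hs := measure_Icc_lt_top.ne))
  -- the integral of ind
  have hindint : ∀ τ ∈ Set.Icc (0:ℝ) (M:ℝ), (∫ u in (0:ℝ)..τ, ind u) = max 0 (τ - c) := by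
    intro τ hτ
    by_cases hτc : τ ≤ c
    · have h0 : (∫ u in (0:ℝ)..τ, ind u) = ∫ u in (0:ℝ)..τ, (0:ℝ) := by
        refine intervalIntegral.integral_congr fun u hu => ?_
        rw [Set.uIcc_of_le hτ.1] at hu
        simp [hinddef, not_lt.2 (le_trans hu.2 hτc)]
      rw [h0, max_eq_left (by linarith)]
      simp
    · push_neg at hτc
      have hII1 : IntervalIntegrable ind volume 0 c := aux_ii hindIcc le_rfl hM0 (by linarith)
      have hII2 : IntervalIntegrable ind volume c τ := aux_ii hindIcc hM0 hτc.le hτ.2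
      have hadd : (∫ u in (0:ℝ)..c, ind u) + (∫ u in c..τ, ind u) = ∫ u in (0:ℝ)..τ, ind u :=
        intervalIntegral.integral_add_adjacent_intervals hII1 hII2
      have h1 : (∫ u in (0:ℝ)..c, ind u) = 0 := by
        have : (∫ u in (0:ℝ)..c, ind u) = ∫ u in (0:ℝ)..c, (0:ℝ) := by
          refine intervalIntegral.integral_congr fun u hu => ?_
          rw [Set.uIcc_of_le hM0] at hu
          simp [hinddef, not_lt.2 hu.2]
        simp [this]
      have h2 : (∫ u in c..τ, ind u) = τ - c := by
        have : (∫ u in c..τ, ind u) = ∫ u in c..τ, (1:ℝ) := by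
          refine intervalIntegral.integral_congr_ae (Filter.Eventually.of_forall fun u hu => ?_)
          rw [Set.uIoc_of_le hτc.le] at hu
          simp [hinddef, hu.1]
        rw [this, intervalIntegral.integral_const, smul_eq_mul, mul_one]
      rw [← hadd, h1, h2, max_eq_right (by linarith), zero_add]
  -- ζ' is AC with derivative g'
  have hAC' : IsAC ζ' g' 0 (M:ℝ) := by
    refine ⟨hg'Int, hg'2Int, fun τ hτ => ?_⟩
    have hIg : IntervalIntegrable g volume 0 τ := aux_ii hAC.1 le_rfl hτ.1 hτ.2
    have hIi : IntervalIntegrable (fun u => ind u • w) volume 0 τ :=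
      aux_ii (hindIcc.smul_const w) le_rfl hτ.1 hτ.2
    have : (∫ u in (0:ℝ)..τ, g' u) = (∫ u in (0:ℝ)..τ, g u) + ∫ u in (0:ℝ)..τ, ind u • w := by
      simp only [hg'def]
      exact intervalIntegral.integral_add hIg hIi
    rw [this, intervalIntegral.integral_smul_const, hindint τ hτ]
    have hζτ := hAC.2.2 τ hτ
    show ζ τ + (max 0 (τ - c)) • w
        = ζ' 0 + ((∫ u in (0:ℝ)..τ, g u) + (max 0 (τ - c)) • w)
    rw [hζ'0, hζτ]
    abel
  -- the action difference D
  set D : ℝ → ℝ := fun τ => ind τ * ((inner ℝ (g τ) w : ℝ) + ‖w‖^2/2 - (inner ℝ b w : ℝ)) with hD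
  have hgwInt : IntegrableOn (fun τ => (inner ℝ (g τ) w : ℝ)) (Set.Icc (0:ℝ) (M:ℝ)) := by
    have h1 := aux_inner_int (d := d) w hAC.1
    have heq : (fun τ => (inner ℝ (g τ) w : ℝ)) = fun τ => (inner ℝ w (g τ) : ℝ) := by
      funext τ; exact real_inner_comm _ _
    rw [heq]; exact h1
  have hDInt : IntegrableOn D (Set.Icc (0:ℝ) (M:ℝ)) := by
    refine hmul_int _ ?_
    exact (hgwInt.add (integrableOn_const (hs := measure_Icc_lt_top.ne))).sub
      (integrableOn_const (hs := measure_Icc_lt_top.ne))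
  have hptL : ∀ τ, (1:ℝ)/2 * ‖g' τ‖^2 - (inner ℝ b (g' τ):ℝ)
      = ((1:ℝ)/2 * ‖g τ‖^2 - (inner ℝ b (g τ):ℝ)) + D τ := by
    intro τ
    rcases hind01 τ with h | h
    · simp only [hg'def, hD, h, zero_smul, add_zero, zero_mul]
    · simp only [hg'def, hD, h, one_smul, one_mul]
      rw [norm_add_sq_real, inner_add_right]
      ring
  have hM0' : (0:ℝ) ≤ (M:ℝ) := by linarith
  have hIL : IntervalIntegrable (fun τ => (1:ℝ)/2 * ‖g τ‖^2 - (inner ℝ b (g τ):ℝ)) volume 0 (M:ℝ) :=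
    aux_ii (aux_integrand_int b hAC.1 hAC.2.1) le_rfl hM0' le_rfl
  have hID : IntervalIntegrable D volume 0 (M:ℝ) := aux_ii hDInt le_rfl hM0' le_rfl
  have hintEq : ∫ τ in (0:ℝ)..(M:ℝ), ((1:ℝ)/2 * ‖g' τ‖^2 - (inner ℝ b (g' τ):ℝ))
      = (∫ τ in (0:ℝ)..(M:ℝ), ((1:ℝ)/2 * ‖g τ‖^2 - (inner ℝ b (g τ):ℝ)))
        + ∫ τ in (0:ℝ)..(M:ℝ), D τ := by
    rw [show (fun τ => (1:ℝ)/2 * ‖g' τ‖^2 - (inner ℝ b (g' τ):ℝ))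
        = fun τ => ((1:ℝ)/2 * ‖g τ‖^2 - (inner ℝ b (g τ):ℝ)) + D τ from funext hptL]
    exact intervalIntegral.integral_add hIL hID
  have hsumEq : ∑ j ∈ Finset.Ico ⌈(0:ℝ)⌉ ⌈(M:ℝ)⌉, F j (projT (ζ' (j:ℝ)))
      = ∑ j ∈ Finset.Ico ⌈(0:ℝ)⌉ ⌈(M:ℝ)⌉, F j (projT (ζ (j:ℝ))) := by
    refine Finset.sum_congr rfl fun j hj => ?_
    rw [Finset.mem_Ico] at hj
    have hjM : j ≤ (M:ℤ) - 1 := by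
      have := hj.2
      rw [Int.ceil_natCast] at this
      omega
    have hjc : (j:ℝ) ≤ c := by
      rw [hc]
      have : ((j:ℤ):ℝ) ≤ (((M:ℤ) - 1 : ℤ):ℝ) := by exact_mod_cast hjM
      push_cast at this ⊢
      linarith
    have : ζ' (j:ℝ) = ζ (j:ℝ) := by
      show ζ (j:ℝ) + (max 0 ((j:ℝ) - c)) • w = ζ (j:ℝ)
      rw [max_eq_left (by linarith), zero_smul, add_zero]
    rw [this]
  have hactEq : action F b ζ' g' 0 (M:ℝ)
      = action F b ζ g 0 (M:ℝ) + ∫ τ in (0:ℝ)..(M:ℝ), D τ := by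
    show (∫ τ in (0:ℝ)..(M:ℝ), ((1:ℝ)/2 * ‖g' τ‖^2 - (inner ℝ b (g' τ):ℝ)))
        - ∑ j ∈ Finset.Ico ⌈(0:ℝ)⌉ ⌈(M:ℝ)⌉, F j (projT (ζ' (j:ℝ))) = _
    rw [hintEq, hsumEq]
    show _ = (∫ τ in (0:ℝ)..(M:ℝ), ((1:ℝ)/2 * ‖g τ‖^2 - (inner ℝ b (g τ):ℝ)))
        - ∑ j ∈ Finset.Ico ⌈(0:ℝ)⌉ ⌈(M:ℝ)⌉, F j (projT (ζ (j:ℝ)))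
        + ∫ τ in (0:ℝ)..(M:ℝ), D τ
    ring
  -- bound the integral of D
  have hII2 : IntervalIntegrable (fun τ => ‖g τ‖^2) volume 0 (M:ℝ) :=
    aux_ii hAC.2.1 le_rfl hM0' le_rfl
  have hDle : ∫ τ in (0:ℝ)..(M:ℝ), D τ
      ≤ ‖w‖/2 * (∫ τ in (0:ℝ)..(M:ℝ), ‖g τ‖^2) + (M:ℝ) * (‖w‖/2 + ‖w‖^2/2 + ‖b‖*‖w‖) := by
    have hmono : ∫ τ in (0:ℝ)..(M:ℝ), D τ
        ≤ ∫ τ in (0:ℝ)..(M:ℝ), (‖w‖/2 * ‖g τ‖^2 + (‖w‖/2 + ‖w‖^2/2 + ‖b‖*‖w‖)) := by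
      refine intervalIntegral.integral_mono_on hM0' hID
        ((hII2.const_mul _).add intervalIntegrable_const) fun τ _ => ?_
      have hnw : (0:ℝ) ≤ ‖w‖ := norm_nonneg w
      have hng : (0:ℝ) ≤ ‖g τ‖ := norm_nonneg (g τ)
      have hnb : (0:ℝ) ≤ ‖b‖ := norm_nonneg b
      rcases hind01 τ with h | h
      · simp only [hD, h, zero_mul]
        positivity
      · simp only [hD, h, one_mul]
        have h1 : (inner ℝ (g τ) w : ℝ) ≤ ‖g τ‖ * ‖w‖ := real_inner_le_norm _ _
        have h2 : -(inner ℝ b w : ℝ) ≤ ‖b‖ * ‖w‖ := by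
          have := abs_real_inner_le_norm b w
          have := neg_abs_le (inner ℝ b w : ℝ)
          linarith
        nlinarith [mul_nonneg hnw (sq_nonneg (‖g τ‖ - 1))]
    have hcalc : ∫ τ in (0:ℝ)..(M:ℝ), (‖w‖/2 * ‖g τ‖^2 + (‖w‖/2 + ‖w‖^2/2 + ‖b‖*‖w‖))
        = ‖w‖/2 * (∫ τ in (0:ℝ)..(M:ℝ), ‖g τ‖^2) + (M:ℝ) * (‖w‖/2 + ‖w‖^2/2 + ‖b‖*‖w‖) := by
      rw [intervalIntegral.integral_add (hII2.const_mul _) intervalIntegrable_const,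
        intervalIntegral.integral_const_mul, intervalIntegral.integral_const, smul_eq_mul]
      ring
    linarith [hcalc ▸ hmono]
  exact ⟨ζ', g', ⟨hg'Int, hg'2Int, by
    intro τ hτ
    have hIg : IntervalIntegrable g volume 0 τ := aux_ii hAC.1 le_rfl hτ.1 hτ.2
    have hIi : IntervalIntegrable (fun u => ind u • w) volume 0 τ :=
      aux_ii (hindIcc.smul_const w) le_rfl hτ.1 hτ.2
    have hadd2 : (∫ u in (0:ℝ)..τ, g' u) = (∫ u in (0:ℝ)..τ, g u) + ∫ u in (0:ℝ)..τ, ind u • w := by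
      simp only [hg'def]
      exact intervalIntegral.integral_add hIg hIi
    rw [hadd2, intervalIntegral.integral_smul_const, hindint τ hτ]
    have hζτ := hAC.2.2 τ hτ
    show ζ τ + (max 0 (τ - c)) • w
        = ζ' 0 + ((∫ u in (0:ℝ)..τ, g u) + (max 0 (τ - c)) • w)
    rw [hζ'0, hζτ]
    abel⟩, hζ'0, hζ'M, by rw [hactEq]; linarith [hDle]⟩

end Aux6

section Aux7

variable {d : ℕ} (F : ℤ → Torus d → ℝ) (b : V d)

lemma aux_ceil_Ico (M : ℕ) : Finset.Ico ⌈(0:ℝ)⌉ ⌈(M:ℝ)⌉ = Finset.Ico (0:ℤ) (M:ℤ) := by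
  norm_num [Int.ceil_natCast]

set_option maxHeartbeats 1000000 in
lemma aux_actFn_lip (Fb : ℤ → ℝ) (hFb0 : ∀ j, 0 ≤ Fb j) (hFb : ∀ j x, |F j x| ≤ Fb j)
    (M : ℕ) (hM : 1 ≤ M) :
    ∃ L : ℝ, 0 ≤ L ∧ ∀ y z z' : Torus d,
      actFn F b 0 (M:ℝ) y z ≤ actFn F b 0 (M:ℝ) y z' + L * dist z z' := by
  have hM1 : (1:ℝ) ≤ (M:ℝ) := by exact_mod_cast hM
  have hM0 : (0:ℝ) < (M:ℝ) := by linarith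
  have hsd : (0:ℝ) ≤ Real.sqrt d := Real.sqrt_nonneg _
  have hnb : (0:ℝ) ≤ ‖b‖ := norm_nonneg b
  set SF : ℝ := ∑ j ∈ Finset.Ico (0:ℤ) (M:ℤ), Fb j with hSFdef
  have hSF0 : 0 ≤ SF := Finset.sum_nonneg fun j _ => hFb0 j
  set AM : ℝ := (M:ℝ) * ((d:ℝ)/2 + ‖b‖ * Real.sqrt d) + SF with hAMdef
  have hAM0 : 0 ≤ AM :=
    add_nonneg (mul_nonneg hM0.le (by positivity)) hSF0
  set E : ℝ := 4*((AM + 1) + SF + (M:ℝ)*‖b‖^2) with hEdef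
  have hE0 : 0 ≤ E := by positivity
  set CM : ℝ := E/2 + (M:ℝ)/2 + (M:ℝ)*Real.sqrt d/2 + (M:ℝ)*‖b‖ with hCMdef
  have hCM0 : 0 ≤ CM := by positivity
  refine ⟨Real.sqrt d * CM, by positivity, fun y z z' => ?_⟩
  refine le_of_forall_pos_le_add fun η hη => ?_
  obtain ⟨ζ, g, hAC, hy, hz', hact⟩ :=
    aux_exists_curve F b Fb hFb hM0 y z' (lt_min hη one_pos)
  have hAmax : actFn F b 0 (M:ℝ) y z' ≤ AM := by
    have := aux_actFn_le_Amax F b Fb hFb hM0 (by linarith) y z'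
    rw [aux_ceil_Ico] at this
    rw [hAMdef, hSFdef]
    calc actFn F b 0 (M:ℝ) y z' ≤ ((M:ℝ) - 0) * ((d:ℝ)/2 + ‖b‖ * Real.sqrt d)
        + ∑ j ∈ Finset.Ico (0:ℤ) (M:ℤ), Fb j := this
      _ = _ := by ring_nf
  have hactB : action F b ζ g 0 (M:ℝ) ≤ AM + 1 := by
    have h1 : min η 1 ≤ 1 := min_le_right _ _
    linarith
  have hI : ∫ τ in (0:ℝ)..(M:ℝ), ‖g τ‖^2 ≤ E := by
    have := aux_energy_bound F b Fb hFb M hAC (AM+1) hactB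
    rw [hEdef, hSFdef]
    linarith
  have hI0 : 0 ≤ ∫ τ in (0:ℝ)..(M:ℝ), ‖g τ‖^2 :=
    intervalIntegral.integral_nonneg hM0.le (fun τ _ => sq_nonneg _)
  -- the shift vector
  choose r hr hre hrb using fun i => aux_exists_lift (z i - z' i)
  set w : V d := (WithLp.toLp 2 (fun i => r i) : V d) with hwdef
  have hwd : ∀ i, |w i| ≤ dist z z' := by
    intro i
    have h1 : |r i| = ‖z i - z' i‖ := hre i
    have h2 : ‖z i - z' i‖ = dist (z i) (z' i) := (dist_eq_norm _ _).symm
    have h3 : dist (z i) (z' i) ≤ dist z z' := dist_le_pi_dist z z' i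
    calc |w i| = |r i| := rfl
      _ ≤ dist z z' := by rw [h1, h2]; exact h3
  have hwnorm : ‖w‖ ≤ Real.sqrt d * dist z z' := aux_norm_le w (dist z z') dist_nonneg hwd
  have hwhalf : ‖w‖ ≤ Real.sqrt d := by
    have := aux_norm_le w 1 zero_le_one (fun i => le_trans (hrb i) (by norm_num))
    simpa using this
  have hw0 : 0 ≤ ‖w‖ := norm_nonneg w
  obtain ⟨ζ', g', hAC', h0, hMend, hact'⟩ := aux_shift_curve F b Fb M hM hAC w
  have hy' : projT (ζ' 0) = y := by rw [h0]; exact hy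
  have hz : projT (ζ' (M:ℝ)) = z := by
    rw [hMend]
    funext i
    show ((ζ (M:ℝ) i + r i : ℝ) : AddCircle (1:ℝ)) = z i
    have hadd : ((ζ (M:ℝ) i + r i : ℝ) : AddCircle (1:ℝ))
        = ((ζ (M:ℝ) i : ℝ) : AddCircle (1:ℝ)) + ((r i : ℝ) : AddCircle (1:ℝ)) := rfl
    have h1 : ((ζ (M:ℝ) i : ℝ) : AddCircle (1:ℝ)) = z' i := congrFun hz' i
    rw [hadd, h1, hr i]
    show z' i + (z i - z' i) = z i
    abel
  have hfinal : action F b ζ' g' 0 (M:ℝ) ≤ action F b ζ g 0 (M:ℝ)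
      + (Real.sqrt d * CM) * dist z z' := by
    have h1 : ‖w‖/2 * (∫ τ in (0:ℝ)..(M:ℝ), ‖g τ‖^2) ≤ ‖w‖/2 * E := by
      apply mul_le_mul_of_nonneg_left hI (by positivity)
    have h2 : ‖w‖^2/2 ≤ Real.sqrt d * ‖w‖ / 2 := by nlinarith
    have h3 : ‖w‖ * CM ≤ (Real.sqrt d * dist z z') * CM :=
      mul_le_mul_of_nonneg_right hwnorm hCM0
    have h4 : (M:ℝ) * (‖w‖/2 + ‖w‖^2/2 + ‖b‖*‖w‖)
        ≤ (M:ℝ) * (‖w‖/2 + Real.sqrt d * ‖w‖/2 + ‖b‖*‖w‖) := by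
      apply mul_le_mul_of_nonneg_left _ hM0.le
      linarith
    have h5 : ‖w‖/2 * E + (M:ℝ)*(‖w‖/2 + Real.sqrt d * ‖w‖/2 + ‖b‖*‖w‖) = ‖w‖ * CM := by
      rw [hCMdef]; ring
    calc action F b ζ' g' 0 (M:ℝ)
        ≤ action F b ζ g 0 (M:ℝ) + ‖w‖/2 * (∫ τ in (0:ℝ)..(M:ℝ), ‖g τ‖^2)
          + (M:ℝ) * (‖w‖/2 + ‖w‖^2/2 + ‖b‖*‖w‖) := hact'
      _ ≤ action F b ζ g 0 (M:ℝ) + ‖w‖/2 * E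
          + (M:ℝ) * (‖w‖/2 + Real.sqrt d * ‖w‖/2 + ‖b‖*‖w‖) := by linarith
      _ = action F b ζ g 0 (M:ℝ) + ‖w‖ * CM := by linarith [h5]
      _ ≤ action F b ζ g 0 (M:ℝ) + (Real.sqrt d * CM) * dist z z' := by
          rw [mul_assoc] at h3 ⊢
          linarith [h3]
  have hmin : min η 1 ≤ η := min_le_left _ _
  calc actFn F b 0 (M:ℝ) y z ≤ action F b ζ' g' 0 (M:ℝ) :=
        aux_actFn_le_action F b Fb hFb hM0.le hAC' hy' hz
    _ ≤ action F b ζ g 0 (M:ℝ) + (Real.sqrt d * CM) * dist z z' := hfinal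
    _ ≤ (actFn F b 0 (M:ℝ) y z' + min η 1) + (Real.sqrt d * CM) * dist z z' := by linarith
    _ ≤ actFn F b 0 (M:ℝ) y z' + Real.sqrt d * CM * dist z z' + η := by linarith

end Aux7

section Aux8

variable {d : ℕ} (F : ℤ → Torus d → ℝ) (b : V d)

def KSet (s t : ℝ) (φ : Torus d → ℝ) (x : Torus d) : Set ℝ :=
  {a | ∃ y : Torus d, a = φ y + actFn F b s t y x}

lemma aux_KOp_eq {s t : ℝ} (hst : s < t) (φ : Torus d → ℝ) (x : Torus d) :
    KOp F b s t φ x = sInf (KSet F b s t φ x) := by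
  unfold KOp KSet
  rw [if_pos hst]

lemma aux_KSet_nonempty (s t : ℝ) (φ : Torus d → ℝ) (x : Torus d) :
    (KSet F b s t φ x).Nonempty :=
  ⟨_, (fun _ => 0 : Torus d), rfl⟩

lemma aux_KSet_bddBelow (Fb : ℤ → ℝ) (hFb : ∀ j x, |F j x| ≤ Fb j) {s t : ℝ}
    (hst : s < t) (φ : Torus d → ℝ) {mφ : ℝ} (hmφ : ∀ y, mφ ≤ φ y) (x : Torus d) :
    BddBelow (KSet F b s t φ x) := by
  refine ⟨mφ + (-((t - s) * (‖b‖^2/2)) - ∑ j ∈ Finset.Ico ⌈s⌉ ⌈t⌉, Fb j), ?_⟩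
  rintro a ⟨y, rfl⟩
  have := aux_actFn_ge F b Fb hFb hst y x
  have := hmφ y
  linarith

lemma aux_KOp_le (Fb : ℤ → ℝ) (hFb : ∀ j x, |F j x| ≤ Fb j) {s t : ℝ}
    (hst : s < t) (φ : Torus d → ℝ) {mφ : ℝ} (hmφ : ∀ y, mφ ≤ φ y) (x y : Torus d) :
    KOp F b s t φ x ≤ φ y + actFn F b s t y x := by
  rw [aux_KOp_eq F b hst]
  exact csInf_le (aux_KSet_bddBelow F b Fb hFb hst φ hmφ x) ⟨y, rfl⟩

lemma aux_le_KOp {s t : ℝ} (hst : s < t) (φ : Torus d → ℝ) (x : Torus d) {c : ℝ}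
    (h : ∀ y, c ≤ φ y + actFn F b s t y x) : c ≤ KOp F b s t φ x := by
  rw [aux_KOp_eq F b hst]
  exact le_csInf (aux_KSet_nonempty F b s t φ x) (by rintro a ⟨y, rfl⟩; exact h y)

lemma aux_KOp_exists_lt (Fb : ℤ → ℝ) (hFb : ∀ j x, |F j x| ≤ Fb j) {s t : ℝ}
    (hst : s < t) (φ : Torus d → ℝ) {mφ : ℝ} (hmφ : ∀ y, mφ ≤ φ y) (x : Torus d)
    {η : ℝ} (hη : 0 < η) :
    ∃ y : Torus d, φ y + actFn F b s t y x < KOp F b s t φ x + η := by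
  have h := (csInf_lt_iff (aux_KSet_bddBelow F b Fb hFb hst φ hmφ x)
    (aux_KSet_nonempty F b s t φ x)).1
    (by rw [← aux_KOp_eq F b hst]; exact lt_add_of_pos_right _ hη)
  obtain ⟨a, ⟨y, rfl⟩, ha⟩ := h
  exact ⟨y, by rw [aux_KOp_eq F b hst]; rw [aux_KOp_eq F b hst] at ha; exact ha⟩

lemma aux_KOp_bdd (Fb : ℤ → ℝ) (hFb : ∀ j x, |F j x| ≤ Fb j) {s t : ℝ}
    (hst : s < t) (h1t : 1 ≤ t - s) (φ : Torus d → ℝ) {Bφ : ℝ} (hBφ : ∀ y, |φ y| ≤ Bφ) :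
    ∃ B : ℝ, ∀ x, |KOp F b s t φ x| ≤ B := by
  set Amin : ℝ := -((t - s) * (‖b‖^2/2)) - ∑ j ∈ Finset.Ico ⌈s⌉ ⌈t⌉, Fb j with hAmin
  set Amax : ℝ := (t - s) * ((d:ℝ)/2 + ‖b‖ * Real.sqrt d) + ∑ j ∈ Finset.Ico ⌈s⌉ ⌈t⌉, Fb j
    with hAmax
  refine ⟨max (Bφ + Amax) (-(-Bφ + Amin)), fun x => abs_le.2 ⟨?_, ?_⟩⟩
  · have h1 : -Bφ + Amin ≤ KOp F b s t φ x := by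
      refine aux_le_KOp F b hst φ x fun y => ?_
      have h2 := aux_actFn_ge F b Fb hFb hst y x
      have h3 := (abs_le.1 (hBφ y)).1
      rw [hAmin]
      linarith
    have := le_max_right (Bφ + Amax) (-(-Bφ + Amin))
    linarith
  · have h1 : KOp F b s t φ x ≤ Bφ + Amax := by
      have h2 := aux_KOp_le F b Fb hFb hst φ (fun y => (abs_le.1 (hBφ y)).1) x (fun _ => 0)
      have h3 := aux_actFn_le_Amax F b Fb hFb hst h1t (fun _ => 0 : Torus d) x
      have h4 := (abs_le.1 (hBφ (fun _ => 0))).2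
      rw [hAmax]
      linarith
    exact le_trans h1 (le_max_left _ _)

def KChkSet (s t : ℝ) (φ : Torus d → ℝ) (x : Torus d) : Set ℝ :=
  {a | ∃ y : Torus d, a = φ y - actFn F b s t x y}

lemma aux_KChk_eq {s t : ℝ} (hst : s < t) (φ : Torus d → ℝ) (x : Torus d) :
    KChk F b s t φ x = sSup (KChkSet F b s t φ x) := by
  unfold KChk KChkSet
  rw [if_pos hst]

lemma aux_KChk_eval (M : ℕ) (hM : 1 ≤ M) (L : ℝ)
    (hLip : ∀ y z z' : Torus d, actFn F b 0 (M:ℝ) y z ≤ actFn F b 0 (M:ℝ) y z' + L * dist z z')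
    (x y : Torus d) :
    KChk F b 0 (M:ℝ) (fun u => -(L * dist u x)) y = -(actFn F b 0 (M:ℝ) y x) := by
  have hM0 : (0:ℝ) < (M:ℝ) := by
    have : (1:ℝ) ≤ (M:ℝ) := by exact_mod_cast hM
    linarith
  rw [aux_KChk_eq F b hM0]
  have hub : ∀ a ∈ KChkSet F b 0 (M:ℝ) (fun u => -(L * dist u x)) y,
      a ≤ -(actFn F b 0 (M:ℝ) y x) := by
    rintro a ⟨u, rfl⟩
    have h1 := hLip y x u
    have h2 : dist x u = dist u x := dist_comm x u
    rw [h2] at h1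
    show -(L * dist u x) - actFn F b 0 (M:ℝ) y u ≤ -(actFn F b 0 (M:ℝ) y x)
    linarith
  apply le_antisymm
  · exact csSup_le ⟨_, x, rfl⟩ hub
  · refine le_csSup ⟨_, hub⟩ ⟨x, ?_⟩
    show -(actFn F b 0 (M:ℝ) y x) = -(L * dist x x) - actFn F b 0 (M:ℝ) y x
    rw [dist_self]
    ring

lemma aux_starNorm_lt {f : Torus d → ℝ} {ε B : ℝ} (hB : ∀ x, |f x| ≤ B)
    (h : starNorm f < ε) : ∃ C : ℝ, ∀ x, |f x - C| ≤ ε := by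
  unfold starNorm at h
  obtain ⟨C, hC⟩ := exists_lt_of_ciInf_lt h
  refine ⟨C, fun x => ?_⟩
  have hb : BddAbove (Set.range fun x : Torus d => |f x - C|) := by
    refine ⟨B + |C|, ?_⟩
    rintro _ ⟨x, rfl⟩
    calc |f x - C| ≤ |f x| + |C| := abs_sub _ _
      _ ≤ B + |C| := by linarith [hB x]
  exact le_trans (le_ciSup hb x) hC.le

end Aux8

set_option maxHeartbeats 1000000 in
theorem statement3' {d : ℕ} (F : ℤ → Torus d → ℝ)
    (hF : ∀ j : ℤ, ContDiff ℝ 2 fun x : V d => F j (projT x)) (b : V d)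
    (ψm ψp : Torus d → ℤ → ℝ)
    (hψm : IsBackwardSol F b ψm) (hψp : IsForwardSol F b ψp)
    (hconvm : ∀ ε : ℝ, 0 < ε → ∃ N₁ : ℕ, ∀ N : ℕ, N₁ ≤ N → ∀ φ : Torus d → ℝ,
      Continuous φ → starNorm (fun x => KOp F b (-(N : ℝ)) 0 φ x - ψm x 0) < ε)
    (hconvp : ∀ ε : ℝ, 0 < ε → ∃ M₁ : ℕ, ∀ M : ℕ, M₁ ≤ M → ∀ φ : Torus d → ℝ,
      Continuous φ → starNorm (fun x => KChk F b 0 (M : ℝ) φ x - ψp x 0) < ε)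
    (x₀ : Torus d)
    (hmin : ∀ x : Torus d, ψm x₀ 0 - ψp x₀ 0 ≤ ψm x 0 - ψp x 0)
    (huniq : ∀ x : Torus d, x ≠ x₀ → ψm x₀ 0 - ψp x₀ 0 < ψm x 0 - ψp x 0)
    (ρ' : ℝ) (hρ' : 0 < ρ') :
    ∃ M₀ : ℕ, ∀ N M : ℕ, M₀ ≤ N → M₀ ≤ M → ∀ φ : Torus d → ℝ, Continuous φ →
      ∀ ζ g : ℝ → V d, IsMinimizer F b (-(N : ℤ)) (M : ℤ) φ ζ g →
        dist (projT (ζ 0)) x₀ < ρ' := by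
  classical
  choose Fb hFb0 hFb using aux_F_bdd F hF
  have hψmc : Continuous fun y => ψm y 0 := hψm.1 0
  have hψpc : Continuous fun y => ψp y 0 := hψp.1 0
  obtain ⟨Bm, _, hBm⟩ := aux_cont_bdd hψmc
  obtain ⟨Bp, _, hBp⟩ := aux_cont_bdd hψpc
  by_cases hS : ∃ y : Torus d, ρ' ≤ dist y x₀
  swap
  · push_neg at hS
    exact ⟨1, fun N M _ _ φ _ ζ g _ => hS _⟩
  obtain ⟨y₀, hy₀⟩ := hS
  set S : Set (Torus d) := {y | ρ' ≤ dist y x₀} with hSdef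
  have hScl : IsClosed S :=
    isClosed_le continuous_const (Continuous.dist continuous_id continuous_const)
  have hScomp : IsCompact S := hScl.isCompact
  have hhc : ContinuousOn (fun y => ψm y 0 - ψp y 0) S := (hψmc.sub hψpc).continuousOn
  obtain ⟨y₁, hy₁S, hy₁min⟩ := hScomp.exists_isMinOn ⟨y₀, hy₀⟩ hhc
  have hy₁ne : y₁ ≠ x₀ := by
    intro he
    have h1 : ρ' ≤ dist y₁ x₀ := hy₁S
    rw [he, dist_self] at h1
    linarith
  set δ : ℝ := (ψm y₁ 0 - ψp y₁ 0) - (ψm x₀ 0 - ψp x₀ 0) with hδdef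
  have hδ0 : 0 < δ := by
    have := huniq y₁ hy₁ne
    rw [hδdef]
    linarith
  set ε : ℝ := δ/5 with hεdef
  have hε0 : 0 < ε := by rw [hεdef]; linarith
  obtain ⟨N₁, hN₁⟩ := hconvm ε hε0
  obtain ⟨M₁, hM₁⟩ := hconvp ε hε0
  refine ⟨max (max N₁ M₁) 1, fun N M hN hM φ hφ ζ g hmzr => ?_⟩
  have hN1 : 1 ≤ N := le_trans (le_max_right _ _) hN
  have hM1 : 1 ≤ M := le_trans (le_max_right _ _) hM
  have hNN₁ : N₁ ≤ N := le_trans (le_trans (le_max_left _ _) (le_max_left _ _)) hN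
  have hMM₁ : M₁ ≤ M := le_trans (le_trans (le_max_right _ _) (le_max_left _ _)) hM
  obtain ⟨Bφ, _, hBφ⟩ := aux_cont_bdd hφ
  have hmφ : ∀ y, -Bφ ≤ φ y := fun y => (abs_le.1 (hBφ y)).1
  have hcast1 : ((-(N:ℤ) : ℤ) : ℝ) = -(N:ℝ) := by push_cast; ring
  have hcast2 : (((M:ℤ) : ℤ) : ℝ) = (M:ℝ) := by push_cast; ring
  have hNR1 : (1:ℝ) ≤ (N:ℝ) := by exact_mod_cast hN1
  have hMR1 : (1:ℝ) ≤ (M:ℝ) := by exact_mod_cast hM1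
  have hsR : -(N:ℝ) < 0 := by linarith
  have h0t : (0:ℝ) < (M:ℝ) := by linarith
  have hst : -(N:ℝ) < (M:ℝ) := by linarith
  have hmZ : -(N:ℤ) < 0 := by
    have : (1:ℤ) ≤ (N:ℤ) := by exact_mod_cast hN1
    omega
  have hnZ : (0:ℤ) < (M:ℤ) := by
    have : (1:ℤ) ≤ (M:ℤ) := by exact_mod_cast hM1
    omega
  obtain ⟨hAC, hKmin⟩ := hmzr
  rw [hcast1, hcast2] at hAC hKmin
  have hACz : IsAC ζ g ((-(N:ℤ) : ℤ) : ℝ) (((M:ℤ) : ℤ) : ℝ) := by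
    rw [hcast1, hcast2]; exact hAC
  have hsplit := aux_action_split F b (ζ := ζ) (g := g) (-(N:ℤ)) 0 (M:ℤ) hmZ.le hnZ.le hACz
  rw [hcast1, hcast2, Int.cast_zero] at hsplit
  have hAC1 : IsAC ζ g (-(N:ℝ)) 0 := aux_IsAC_restrict hAC le_rfl hsR.le h0t.le
  have hAC2 : IsAC ζ g 0 (M:ℝ) := aux_IsAC_restrict hAC hsR.le h0t.le le_rfl
  set ys : Torus d := projT (ζ 0) with hys
  set xe : Torus d := projT (ζ (M:ℝ)) with hxe
  set xs : Torus d := projT (ζ (-(N:ℝ))) with hxs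
  -- Step A : the minimizer realizes the inf of G
  have hA : KOp F b (-(N:ℝ)) 0 φ ys + actFn F b 0 (M:ℝ) ys xe
      ≤ KOp F b (-(N:ℝ)) (M:ℝ) φ xe := by
    rw [hKmin, hsplit]
    have h1 : KOp F b (-(N:ℝ)) 0 φ ys ≤ φ xs + action F b ζ g (-(N:ℝ)) 0 := by
      have h2 := aux_KOp_le F b Fb hFb hsR φ hmφ ys xs
      have h3 := aux_actFn_le_action F b Fb hFb hsR.le hAC1 hxs.symm hys.symm
      linarith
    have h4 : actFn F b 0 (M:ℝ) ys xe ≤ action F b ζ g 0 (M:ℝ) :=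
      aux_actFn_le_action F b Fb hFb h0t.le hAC2 hys.symm hxe.symm
    linarith
  -- Step B : G at any point dominates
  have hB : ∀ y, KOp F b (-(N:ℝ)) (M:ℝ) φ xe
      ≤ KOp F b (-(N:ℝ)) 0 φ y + actFn F b 0 (M:ℝ) y xe := by
    intro y
    refine le_of_forall_pos_le_add fun η hη => ?_
    obtain ⟨y', hy'⟩ := aux_KOp_exists_lt F b Fb hFb hsR φ hmφ y hη
    have htri := aux_actFn_triangle F b Fb hFb (-(N:ℤ)) 0 (M:ℤ) hmZ hnZ y' y xe
    rw [hcast1, hcast2, Int.cast_zero] at htri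
    have hKle := aux_KOp_le F b Fb hFb hst φ hmφ xe y'
    linarith
  have hGmin : ∀ y, KOp F b (-(N:ℝ)) 0 φ ys + actFn F b 0 (M:ℝ) ys xe
      ≤ KOp F b (-(N:ℝ)) 0 φ y + actFn F b 0 (M:ℝ) y xe :=
    fun y => le_trans hA (hB y)
  -- Step C : compare K_{-N,0}φ with ψm + C
  have hsnm := hN₁ N hNN₁ φ hφ
  obtain ⟨BK, hBK⟩ := aux_KOp_bdd F b Fb hFb hsR (by linarith) φ hBφ
  have hbd1 : ∀ x, |KOp F b (-(N:ℝ)) 0 φ x - ψm x 0| ≤ BK + Bm := by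
    intro x
    calc |KOp F b (-(N:ℝ)) 0 φ x - ψm x 0| ≤ |KOp F b (-(N:ℝ)) 0 φ x| + |ψm x 0| :=
          abs_sub _ _
      _ ≤ BK + Bm := by linarith [hBK x, hBm x]
  obtain ⟨C, hC⟩ := aux_starNorm_lt hbd1 hsnm
  -- Step D : compare actFn(·, xe) with -ψp - C'
  obtain ⟨L, hL0, hLip⟩ := aux_actFn_lip F b Fb hFb0 hFb M hM1
  set φL : Torus d → ℝ := fun u => -(L * dist u xe) with hφL
  have hφLc : Continuous φL := (continuous_const.mul (continuous_id.dist continuous_const)).neg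
  have hsnp := hM₁ M hMM₁ φL hφLc
  have hKCeq : ∀ y, KChk F b 0 (M:ℝ) φL y = -(actFn F b 0 (M:ℝ) y xe) :=
    aux_KChk_eval F b M hM1 L hLip xe
  have hfun : (fun x => KChk F b 0 (M:ℝ) φL x - ψp x 0)
      = fun x => -(actFn F b 0 (M:ℝ) x xe) - ψp x 0 := funext fun x => by rw [hKCeq x]
  rw [hfun] at hsnp
  have hbd2 : ∀ x, |-(actFn F b 0 (M:ℝ) x xe) - ψp x 0| ≤
      |(-(((M:ℝ) - 0) * (‖b‖^2/2)) - ∑ j ∈ Finset.Ico ⌈(0:ℝ)⌉ ⌈(M:ℝ)⌉, Fb j : ℝ)|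
      + |(((M:ℝ) - 0) * ((d:ℝ)/2 + ‖b‖ * Real.sqrt d)
          + ∑ j ∈ Finset.Ico ⌈(0:ℝ)⌉ ⌈(M:ℝ)⌉, Fb j : ℝ)| + Bp := by
    intro x
    have hge := aux_actFn_ge F b Fb hFb h0t x xe
    have hle := aux_actFn_le_Amax F b Fb hFb h0t (by linarith) x xe
    have h4 := abs_le.1 (hBp x)
    have h5 := le_abs_self (-(((M:ℝ) - 0) * (‖b‖^2/2))
      - ∑ j ∈ Finset.Ico ⌈(0:ℝ)⌉ ⌈(M:ℝ)⌉, Fb j)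
    have h6 := neg_abs_le (-(((M:ℝ) - 0) * (‖b‖^2/2))
      - ∑ j ∈ Finset.Ico ⌈(0:ℝ)⌉ ⌈(M:ℝ)⌉, Fb j)
    have h7 := le_abs_self (((M:ℝ) - 0) * ((d:ℝ)/2 + ‖b‖ * Real.sqrt d)
      + ∑ j ∈ Finset.Ico ⌈(0:ℝ)⌉ ⌈(M:ℝ)⌉, Fb j)
    have h8 := neg_abs_le (((M:ℝ) - 0) * ((d:ℝ)/2 + ‖b‖ * Real.sqrt d)
      + ∑ j ∈ Finset.Ico ⌈(0:ℝ)⌉ ⌈(M:ℝ)⌉, Fb j)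
    apply abs_le.2
    constructor <;> linarith
  obtain ⟨C', hC'⟩ := aux_starNorm_lt hbd2 hsnp
  -- Step E : conclusion
  by_contra hcon
  push_neg at hcon
  have hyS : ys ∈ S := hcon
  have hhy : ψm y₁ 0 - ψp y₁ 0 ≤ ψm ys 0 - ψp ys 0 := (isMinOn_iff.1 hy₁min) ys hyS
  have e1 := (abs_le.1 (hC ys)).1
  have e2 := (abs_le.1 (hC x₀)).2
  have e3 := (abs_le.1 (hC' ys)).2
  have e4 := (abs_le.1 (hC' x₀)).1
  have hcmp := hGmin x₀
  have hfin : δ ≤ 4*ε := by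
    rw [hδdef]
    linarith
  rw [hεdef] at hfin
  linarith

theorem statement3 {d : ℕ} (F : ℤ → Torus d → ℝ)
    (hF : ∀ j : ℤ, ContDiff ℝ 2 fun x : V d => F j (projT x)) (b : V d)
    (ψm ψp : Torus d → ℤ → ℝ)
    (hψm : IsBackwardSol F b ψm) (hψp : IsForwardSol F b ψp)
    -- sup_φ ‖K_{−N,0}φ − ψ⁻(·,0)‖_* → 0 as N → ∞:
    (hconvm : ∀ ε : ℝ, 0 < ε → ∃ N₁ : ℕ, ∀ N : ℕ, N₁ ≤ N → ∀ φ : Torus d → ℝ,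
      Continuous φ → starNorm (fun x => KOp F b (-(N : ℝ)) 0 φ x - ψm x 0) < ε)
    -- sup_φ ‖Ǩ_{0,M}φ − ψ⁺(·,0)‖_* → 0 as M → ∞:
    (hconvp : ∀ ε : ℝ, 0 < ε → ∃ M₁ : ℕ, ∀ M : ℕ, M₁ ≤ M → ∀ φ : Torus d → ℝ,
      Continuous φ → starNorm (fun x => KChk F b 0 (M : ℝ) φ x - ψp x 0) < ε)
    -- x₀ is the unique minimum point of ψ⁻(·,0) − ψ⁺(·,0):
    (x₀ : Torus d)
    (hmin : ∀ x : Torus d, ψm x₀ 0 - ψp x₀ 0 ≤ ψm x 0 - ψp x 0)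
    (huniq : ∀ x : Torus d, x ≠ x₀ → ψm x₀ 0 - ψp x₀ 0 < ψm x 0 - ψp x 0)
    (ρ' : ℝ) (hρ' : 0 < ρ') :
    ∃ M₀ : ℕ, ∀ N M : ℕ, M₀ ≤ N → M₀ ≤ M → ∀ φ : Torus d → ℝ, Continuous φ →
      ∀ ζ g : ℝ → V d, IsMinimizer F b (-(N : ℤ)) (M : ℤ) φ ζ g →
        dist (projT (ζ 0)) x₀ < ρ' := by
  exact statement3' F hF b ψm ψp hψm hψp hconvm hconvp x₀ hmin huniq ρ' hρ'
end
end

section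
/- Let m < n be integers, φ ∈ C(𝕋^d), and let γ be a minimizer for K_{m,n}φ at γ(n). Then for every integer j with m ≤ j ≤ n: (i) K_{m,j}φ(x) ≥ Ǩ_{j,n}(K_{m,n}φ)(x) for all x ∈ 𝕋^d, and (ii) K_{m,j}φ(γ(j)) = Ǩ_{j,n}(K_{m,n}φ)(γ(j)). (Here K_{m,m}φ = Ǩ_{n,n}φ = φ by convention.) -/
open MeasureTheory

noncomputable section

namespace S5

variable {d : ℕ}

lemma projT_add_sub {a c : V d} (h : projT a = projT c) (w : V d) :
    projT (w + (a - c)) = projT w := by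
  funext i
  have hi : ((a i : ℝ) : AddCircle (1:ℝ)) = ((c i : ℝ) : AddCircle (1:ℝ)) := congrFun h i
  show (((w + (a - c)) i : ℝ) : AddCircle (1:ℝ)) = ((w i : ℝ) : AddCircle (1:ℝ))
  have hw : (w + (a - c)) i = w i + (a i - c i) := rfl
  rw [hw, sub_eq_add_neg, QuotientAddGroup.mk_add, QuotientAddGroup.mk_add,
    QuotientAddGroup.mk_neg, hi]
  simp

lemma exists_rep (x : Torus d) : ∃ v : V d, projT v = x ∧ ‖v‖ ≤ Real.sqrt d := by
  have h := Fact.mk (by norm_num : (0:ℝ) < 1)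
  have hrep : ∀ i, ∃ r : ℝ, r ∈ Set.Icc (0:ℝ) 1 ∧ (r : AddCircle (1:ℝ)) = x i := by
    intro i
    obtain ⟨⟨r, hr⟩, hrx⟩ := (AddCircle.equivIco 1 0).symm.surjective (x i)
    exact ⟨r, ⟨hr.1, hr.2.le.trans (by norm_num)⟩, by rw [← hrx]; rfl⟩
  choose r hr hrx using hrep
  refine ⟨(WithLp.toLp 2 (fun i => r i) : V d), funext hrx, ?_⟩
  rw [EuclideanSpace.norm_eq]
  apply Real.sqrt_le_sqrt
  calc ∑ i : Fin d, ‖(WithLp.toLp 2 (fun i => r i) : V d) i‖ ^ 2 ≤ ∑ _i : Fin d, (1:ℝ) := by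
        refine Finset.sum_le_sum fun i _ => ?_
        have h1 : |r i| ≤ 1 := abs_le.mpr ⟨by linarith [(hr i).1], (hr i).2⟩
        calc ‖(WithLp.toLp 2 (fun i => r i) : V d) i‖ ^ 2 = |r i| ^ 2 := rfl
          _ ≤ 1 ^ 2 := by nlinarith [abs_nonneg (r i)]
          _ = 1 := one_pow 2
    _ = d := by simp

variable (F : ℤ → Torus d → ℝ) (b : V d)

lemma lag_integrableOn {ζ g : ℝ → V d} {s t : ℝ} (h : IsAC ζ g s t) :
    IntegrableOn (fun τ => (1:ℝ)/2 * ‖g τ‖ ^ 2 - (inner ℝ b (g τ) : ℝ)) (Set.Icc s t) :=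
  (h.2.1.const_mul _).sub (h.1.const_inner b)

lemma g_intervalIntegrable {ζ g : ℝ → V d} {s t : ℝ} (h : IsAC ζ g s t)
    {a c : ℝ} (hsub : Set.uIoc a c ⊆ Set.Icc s t) :
    IntervalIntegrable g volume a c :=
  intervalIntegrable_iff.mpr (h.1.mono_set hsub)

lemma lag_intervalIntegrable {ζ g : ℝ → V d} {s t : ℝ} (h : IsAC ζ g s t)
    {a c : ℝ} (hsub : Set.uIoc a c ⊆ Set.Icc s t) :
    IntervalIntegrable (fun τ => (1:ℝ)/2 * ‖g τ‖ ^ 2 - (inner ℝ b (g τ) : ℝ)) volume a c :=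
  intervalIntegrable_iff.mpr ((lag_integrableOn b h).mono_set hsub)

lemma uIoc_sub {s t a c : ℝ} (hsa : s ≤ a) (hac : a ≤ c) (hct : c ≤ t) :
    Set.uIoc a c ⊆ Set.Icc s t := by
  rw [Set.uIoc_of_le hac]
  exact fun x hx => ⟨hsa.trans hx.1.le, hx.2.trans hct⟩

lemma action_ge (C : ℤ → ℝ) (hC : ∀ j x, |F j x| ≤ C j) {ζ g : ℝ → V d} {s t : ℝ}
    (hst : s ≤ t) (h : IsAC ζ g s t) :
    -(t - s) * (‖b‖ ^ 2 / 2) - (∑ j ∈ Finset.Ico ⌈s⌉ ⌈t⌉, C j) ≤ action F b ζ g s t := by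
  have hker : (t - s) * (-(‖b‖ ^ 2 / 2)) ≤
      ∫ τ in s..t, ((1:ℝ)/2 * ‖g τ‖ ^ 2 - (inner ℝ b (g τ) : ℝ)) := by
    have hpt : ∀ τ ∈ Set.Icc s t, -(‖b‖ ^ 2 / 2) ≤ (1:ℝ)/2 * ‖g τ‖ ^ 2 - (inner ℝ b (g τ) : ℝ) := by
      intro τ _
      have h1 : (inner ℝ b (g τ) : ℝ) ≤ ‖b‖ * ‖g τ‖ := real_inner_le_norm b (g τ)
      nlinarith [sq_nonneg (‖b‖ - ‖g τ‖)]
    have hmono := intervalIntegral.integral_mono_on (f := fun _ : ℝ => -(‖b‖ ^ 2 / 2))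
      (g := fun τ => (1:ℝ)/2 * ‖g τ‖ ^ 2 - (inner ℝ b (g τ) : ℝ)) hst
      (intervalIntegrable_const)
      (lag_intervalIntegrable b h (uIoc_sub le_rfl hst le_rfl)) hpt
    rw [intervalIntegral.integral_const] at hmono
    have hsm : (t - s) • (-(‖b‖ ^ 2 / 2)) = (t - s) * (-(‖b‖ ^ 2 / 2)) := by rw [smul_eq_mul]
    linarith [hsm ▸ hmono]
  have hsum : ∑ j ∈ Finset.Ico ⌈s⌉ ⌈t⌉, F j (projT (ζ (j:ℝ))) ≤ ∑ j ∈ Finset.Ico ⌈s⌉ ⌈t⌉, C j :=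
    Finset.sum_le_sum fun j _ => (abs_le.mp (hC j _)).2
  show _ ≤ (∫ τ in s..t, ((1 : ℝ) / 2 * ‖g τ‖ ^ 2 - (inner ℝ b (g τ) : ℝ))) -
    ∑ j ∈ Finset.Ico ⌈s⌉ ⌈t⌉, F j (projT (ζ (j : ℝ)))
  nlinarith [hker, hsum]

lemma straight_exists (s t : ℝ) (hst : s < t) (x x' : Torus d) :
    ∃ ζ g : ℝ → V d, IsAC ζ g s t ∧ projT (ζ s) = x ∧ projT (ζ t) = x' := by
  obtain ⟨p, hp, -⟩ := exists_rep x
  obtain ⟨q, hq, -⟩ := exists_rep x'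
  set g0 : V d := (t - s)⁻¹ • (q - p) with hg0
  refine ⟨fun τ => p + (τ - s) • g0, fun _ => g0, ⟨?_, ?_, ?_⟩, ?_, ?_⟩
  · exact (integrableOn_const_iff).mpr (Or.inr measure_Icc_lt_top)
  · exact (integrableOn_const_iff).mpr (Or.inr measure_Icc_lt_top)
  · intro τ hτ
    rw [intervalIntegral.integral_const]
    simp
  · simp [hp]
  · have hq' : (t - s) • g0 = q - p := by
      rw [hg0, smul_smul, mul_inv_cancel₀ (sub_ne_zero.mpr hst.ne'), one_smul]
    show projT (p + (t - s) • g0) = x'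
    rw [show p + (t - s) • g0 = q by rw [hq']; abel]
    exact hq

lemma isac_restrict_left {ζ g : ℝ → V d} {s t u : ℝ} (h : IsAC ζ g s u)
    (htu : t ≤ u) : IsAC ζ g s t := by
  have hsub : Set.Icc s t ⊆ Set.Icc s u := Set.Icc_subset_Icc le_rfl htu
  exact ⟨h.1.mono_set hsub, h.2.1.mono_set hsub,
    fun τ hτ => h.2.2 τ ⟨hτ.1, hτ.2.trans htu⟩⟩

lemma isac_restrict_right {ζ g : ℝ → V d} {s t u : ℝ} (h : IsAC ζ g s u)
    (hst : s ≤ t) (htu : t ≤ u) : IsAC ζ g t u := by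
  have hsub : Set.Icc t u ⊆ Set.Icc s u := Set.Icc_subset_Icc hst le_rfl
  refine ⟨h.1.mono_set hsub, h.2.1.mono_set hsub, fun τ hτ => ?_⟩
  have h1 := h.2.2 τ ⟨hst.trans hτ.1, hτ.2⟩
  have h2 := h.2.2 t ⟨hst, htu⟩
  have h3 : (∫ u' in s..τ, g u') - (∫ u' in s..t, g u') = ∫ u' in t..τ, g u' :=
    intervalIntegral.integral_interval_sub_left
      (g_intervalIntegrable h (uIoc_sub le_rfl (hst.trans hτ.1) hτ.2))
      (g_intervalIntegrable h (uIoc_sub le_rfl hst htu))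
  rw [h1, h2, ← h3]
  abel

lemma action_split {m j n : ℤ} (hmj : m ≤ j) (hjn : j ≤ n) {ζ g : ℝ → V d}
    (h : IsAC ζ g (m:ℝ) (n:ℝ)) :
    action F b ζ g (m:ℝ) (n:ℝ) = action F b ζ g (m:ℝ) (j:ℝ) + action F b ζ g (j:ℝ) (n:ℝ) := by
  have hmjR : (m:ℝ) ≤ (j:ℝ) := by exact_mod_cast hmj
  have hjnR : (j:ℝ) ≤ (n:ℝ) := by exact_mod_cast hjn
  have hker : (∫ τ in (m:ℝ)..(n:ℝ), ((1:ℝ)/2 * ‖g τ‖ ^ 2 - (inner ℝ b (g τ) : ℝ))) =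
      (∫ τ in (m:ℝ)..(j:ℝ), ((1:ℝ)/2 * ‖g τ‖ ^ 2 - (inner ℝ b (g τ) : ℝ))) +
      (∫ τ in (j:ℝ)..(n:ℝ), ((1:ℝ)/2 * ‖g τ‖ ^ 2 - (inner ℝ b (g τ) : ℝ))) :=
    (intervalIntegral.integral_add_adjacent_intervals
      (lag_intervalIntegrable b h (uIoc_sub le_rfl hmjR hjnR))
      (lag_intervalIntegrable b h (uIoc_sub hmjR hjnR le_rfl))).symm
  have hsum : ∑ i ∈ Finset.Ico ⌈(m:ℝ)⌉ ⌈(n:ℝ)⌉, F i (projT (ζ (i:ℝ))) =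
      (∑ i ∈ Finset.Ico ⌈(m:ℝ)⌉ ⌈(j:ℝ)⌉, F i (projT (ζ (i:ℝ)))) +
      (∑ i ∈ Finset.Ico ⌈(j:ℝ)⌉ ⌈(n:ℝ)⌉, F i (projT (ζ (i:ℝ)))) := by
    simp only [Int.ceil_intCast]
    rw [← Finset.Ico_union_Ico_eq_Ico hmj hjn,
      Finset.sum_union (Finset.Ico_disjoint_Ico_consecutive m j n)]
  unfold action
  rw [hker, hsum]
  ring

/-- Concatenation of admissible curves. -/
lemma concat {m j n : ℤ} (hmj : m < j) (hjn : j < n)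
    {ζ₁ g₁ ζ₂ g₂ : ℝ → V d} (h₁ : IsAC ζ₁ g₁ (m:ℝ) (j:ℝ)) (h₂ : IsAC ζ₂ g₂ (j:ℝ) (n:ℝ))
    (hmatch : projT (ζ₁ (j:ℝ)) = projT (ζ₂ (j:ℝ))) :
    ∃ ζ g : ℝ → V d, IsAC ζ g (m:ℝ) (n:ℝ) ∧ projT (ζ (m:ℝ)) = projT (ζ₁ (m:ℝ)) ∧
      projT (ζ (n:ℝ)) = projT (ζ₂ (n:ℝ)) ∧
      action F b ζ g (m:ℝ) (n:ℝ) = action F b ζ₁ g₁ (m:ℝ) (j:ℝ) + action F b ζ₂ g₂ (j:ℝ) (n:ℝ) := by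
  have hmjR : (m:ℝ) < (j:ℝ) := by exact_mod_cast hmj
  have hjnR : (j:ℝ) < (n:ℝ) := by exact_mod_cast hjn
  set k : V d := ζ₁ (j:ℝ) - ζ₂ (j:ℝ) with hk
  set ζ : ℝ → V d := fun τ => if τ ≤ (j:ℝ) then ζ₁ τ else ζ₂ τ + k with hζ
  set g : ℝ → V d := fun τ => if τ ≤ (j:ℝ) then g₁ τ else g₂ τ with hgdef
  have hae : g =ᶠ[ae (volume.restrict (Set.Icc (j:ℝ) (n:ℝ)))] g₂ := by
    have h0 : ∀ᵐ (τ:ℝ) ∂volume, τ ≠ (j:ℝ) := by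
      rw [MeasureTheory.ae_iff]
      simp only [ne_eq, not_not]
      rw [show {a : ℝ | a = (j:ℝ)} = {(j:ℝ)} from rfl]
      exact Real.volume_singleton
    filter_upwards [ae_restrict_of_ae h0, ae_restrict_mem measurableSet_Icc] with τ hne hmem
    have : ¬ τ ≤ (j:ℝ) := fun hle => hne (le_antisymm hle hmem.1)
    simp [hgdef, this]
  have haeN : (fun τ => ‖g τ‖ ^ 2) =ᶠ[ae (volume.restrict (Set.Icc (j:ℝ) (n:ℝ)))]
      (fun τ => ‖g₂ τ‖ ^ 2) := by filter_upwards [hae] with τ h; rw [h]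
  have hg1 : ∀ τ : ℝ, τ ≤ (j:ℝ) → g τ = g₁ τ := fun τ h => if_pos h
  have hIccUnion : Set.Icc (m:ℝ) (n:ℝ) = Set.Icc (m:ℝ) (j:ℝ) ∪ Set.Icc (j:ℝ) (n:ℝ) :=
    (Set.Icc_union_Icc_eq_Icc hmjR.le hjnR.le).symm
  have hgInt : IntegrableOn g (Set.Icc (m:ℝ) (n:ℝ)) := by
    rw [hIccUnion]
    refine IntegrableOn.union ?_ ?_
    · exact h₁.1.congr_fun (fun τ hτ => (hg1 τ hτ.2).symm) measurableSet_Icc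
    · exact h₂.1.congr hae.symm
  have hgNInt : IntegrableOn (fun τ => ‖g τ‖ ^ 2) (Set.Icc (m:ℝ) (n:ℝ)) := by
    rw [hIccUnion]
    refine IntegrableOn.union ?_ ?_
    · exact h₁.2.1.congr_fun (fun τ hτ => by rw [hg1 τ hτ.2]) measurableSet_Icc
    · exact h₂.2.1.congr haeN.symm
  have hInt_mj : IntervalIntegrable g volume (m:ℝ) (j:ℝ) :=
    intervalIntegrable_iff.mpr (hgInt.mono_set (uIoc_sub le_rfl hmjR.le hjnR.le))
  have hg_eq_g1_int : ∀ τ : ℝ, (m:ℝ) ≤ τ → τ ≤ (j:ℝ) →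
      (∫ u in (m:ℝ)..τ, g u) = ∫ u in (m:ℝ)..τ, g₁ u := by
    intro τ h1 h2
    apply intervalIntegral.integral_congr
    intro u hu
    rw [Set.uIcc_of_le h1] at hu
    exact hg1 u (hu.2.trans h2)
  have hg_eq_g2_int : ∀ τ : ℝ, (j:ℝ) < τ → τ ≤ (n:ℝ) →
      (∫ u in (j:ℝ)..τ, g u) = ∫ u in (j:ℝ)..τ, g₂ u := by
    intro τ h1 h2
    apply intervalIntegral.integral_congr_ae
    apply Filter.Eventually.of_forall
    intro u hu
    rw [Set.uIoc_of_le h1.le] at hu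
    have : ¬ u ≤ (j:ℝ) := not_le.mpr hu.1
    simp [hgdef, this]
  have hζm : ζ (m:ℝ) = ζ₁ (m:ℝ) := if_pos hmjR.le
  have hthird : ∀ τ ∈ Set.Icc (m:ℝ) (n:ℝ), ζ τ = ζ (m:ℝ) + ∫ u in (m:ℝ)..τ, g u := by
    intro τ hτ
    rw [hζm]
    by_cases hτj : τ ≤ (j:ℝ)
    · have hz : ζ τ = ζ₁ τ := if_pos hτj
      rw [hz, h₁.2.2 τ ⟨hτ.1, hτj⟩, hg_eq_g1_int τ hτ.1 hτj]
    · push_neg at hτj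
      have hζτ : ζ τ = ζ₂ τ + k := if_neg (not_le.mpr hτj)
      have hsplit : (∫ u in (m:ℝ)..τ, g u) =
          (∫ u in (m:ℝ)..(j:ℝ), g u) + ∫ u in (j:ℝ)..τ, g u :=
        (intervalIntegral.integral_add_adjacent_intervals hInt_mj
          (intervalIntegrable_iff.mpr (hgInt.mono_set
            (uIoc_sub hmjR.le hτj.le hτ.2)))).symm
      rw [hζτ, h₂.2.2 τ ⟨hτj.le, hτ.2⟩, hsplit, hg_eq_g1_int (j:ℝ) hmjR.le le_rfl,
        hg_eq_g2_int τ hτj hτ.2, hk]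
      have hj1 : ζ₁ (j:ℝ) = ζ₁ (m:ℝ) + ∫ u in (m:ℝ)..(j:ℝ), g₁ u :=
        h₁.2.2 (j:ℝ) ⟨hmjR.le, le_rfl⟩
      rw [show ζ₂ (j:ℝ) + (∫ u in (j:ℝ)..τ, g₂ u) + (ζ₁ (j:ℝ) - ζ₂ (j:ℝ)) =
        ζ₁ (j:ℝ) + ∫ u in (j:ℝ)..τ, g₂ u by abel, hj1]
      abel
  have hIsAC : IsAC ζ g (m:ℝ) (n:ℝ) := ⟨hgInt, hgNInt, hthird⟩
  have hend2 : projT (ζ (n:ℝ)) = projT (ζ₂ (n:ℝ)) := by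
    have hz : ζ (n:ℝ) = ζ₂ (n:ℝ) + k := if_neg (not_le.mpr hjnR)
    rw [hz, hk]
    exact projT_add_sub hmatch _
  have hLker : (∫ τ in (m:ℝ)..(n:ℝ), ((1:ℝ)/2 * ‖g τ‖ ^ 2 - (inner ℝ b (g τ) : ℝ))) =
      (∫ τ in (m:ℝ)..(j:ℝ), ((1:ℝ)/2 * ‖g₁ τ‖ ^ 2 - (inner ℝ b (g₁ τ) : ℝ))) +
      (∫ τ in (j:ℝ)..(n:ℝ), ((1:ℝ)/2 * ‖g₂ τ‖ ^ 2 - (inner ℝ b (g₂ τ) : ℝ))) := by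
    have hadj := (intervalIntegral.integral_add_adjacent_intervals
      (lag_intervalIntegrable b hIsAC (uIoc_sub le_rfl hmjR.le hjnR.le))
      (lag_intervalIntegrable b hIsAC (uIoc_sub hmjR.le hjnR.le le_rfl))).symm
    rw [hadj]
    congr 1
    · apply intervalIntegral.integral_congr
      intro u hu
      rw [Set.uIcc_of_le hmjR.le] at hu
      dsimp only
      rw [hg1 u hu.2]
    · apply intervalIntegral.integral_congr_ae
      apply Filter.Eventually.of_forall
      intro u hu
      rw [Set.uIoc_of_le hjnR.le] at hu
      have hnle : ¬ u ≤ (j:ℝ) := not_le.mpr hu.1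
      rw [show g u = g₂ u from if_neg hnle]
  have hFsum : ∑ i ∈ Finset.Ico ⌈(m:ℝ)⌉ ⌈(n:ℝ)⌉, F i (projT (ζ (i:ℝ))) =
      (∑ i ∈ Finset.Ico ⌈(m:ℝ)⌉ ⌈(j:ℝ)⌉, F i (projT (ζ₁ (i:ℝ)))) +
      (∑ i ∈ Finset.Ico ⌈(j:ℝ)⌉ ⌈(n:ℝ)⌉, F i (projT (ζ₂ (i:ℝ)))) := by
    simp only [Int.ceil_intCast]
    rw [← Finset.Ico_union_Ico_eq_Ico hmj.le hjn.le,
      Finset.sum_union (Finset.Ico_disjoint_Ico_consecutive m j n)]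
    congr 1
    · apply Finset.sum_congr rfl
      intro i hi
      have hij : (i:ℝ) ≤ (j:ℝ) := by
        have := (Finset.mem_Ico.mp hi).2
        exact_mod_cast this.le
      rw [show ζ (i:ℝ) = ζ₁ (i:ℝ) from if_pos hij]
    · apply Finset.sum_congr rfl
      intro i hi
      have hji : j ≤ i := (Finset.mem_Ico.mp hi).1
      rcases eq_or_lt_of_le hji with heq | hlt
      · rw [← heq, show ζ (j:ℝ) = ζ₁ (j:ℝ) from if_pos le_rfl, hmatch]
      · have hnle : ¬ (i:ℝ) ≤ (j:ℝ) := not_le.mpr (by exact_mod_cast hlt)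
        rw [show ζ (i:ℝ) = ζ₂ (i:ℝ) + k from if_neg hnle, hk, projT_add_sub hmatch]
  refine ⟨ζ, g, hIsAC, by rw [hζm], hend2, ?_⟩
  unfold action
  rw [hLker, hFsum]
  ring

end S5

theorem statement5 {d : ℕ} (F : ℤ → Torus d → ℝ)
    (hF : ∀ j : ℤ, ContDiff ℝ 2 fun x : V d => F j (projT x)) (b : V d)
    (m n : ℤ) (hmn : m < n) (φ : Torus d → ℝ) (hφ : Continuous φ)
    (ζ g : ℝ → V d) (hmin : IsMinimizer F b m n φ ζ g) :
    ∀ j : ℤ, m ≤ j → j ≤ n →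
      (∀ x : Torus d, KChk F b j n (KOp F b m n φ) x ≤ KOp F b m j φ x) ∧
      KOp F b m j φ (projT (ζ (j : ℝ))) =
        KChk F b j n (KOp F b m n φ) (projT (ζ (j : ℝ))) := by
  obtain ⟨hAC, hval⟩ := hmin
  have hmnR : (m:ℝ) < (n:ℝ) := by exact_mod_cast hmn
  -- bounds on the potentials
  have hCex : ∀ jj : ℤ, ∃ Cj : ℝ, ∀ x : Torus d, |F jj x| ≤ Cj := by
    intro jj
    obtain ⟨Cj, hCj⟩ := (isCompact_closedBall (0 : V d) (Real.sqrt d)).exists_bound_of_continuousOn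
      (hF jj).continuous.continuousOn
    refine ⟨Cj, fun x => ?_⟩
    obtain ⟨v, hv, hvn⟩ := S5.exists_rep x
    have hb := hCj v (Metric.mem_closedBall.mpr (by rwa [dist_zero_right]))
    rw [← hv]
    exact hb
  choose C hC using hCex
  -- lower bound for φ
  obtain ⟨cφ, hcφ⟩ := isCompact_univ.exists_bound_of_continuousOn hφ.continuousOn
  have hφlb : ∀ y : Torus d, -cφ ≤ φ y := by
    intro y
    have := hcφ y trivial
    rw [Real.norm_eq_abs] at this
    linarith [(abs_le.mp this).1]
  -- unfolding lemmas
  have hKOp_eq : ∀ (p q : ℤ), (p:ℝ) < (q:ℝ) → ∀ (φ' : Torus d → ℝ) (x : Torus d),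
      KOp F b p q φ' x = sInf {a | ∃ y : Torus d, a = φ' y + actFn F b p q y x} := by
    intro p q hpq φ' x
    rw [KOp, if_pos hpq]
  have hKChk_eq : ∀ (p q : ℤ), (p:ℝ) < (q:ℝ) → ∀ (φ' : Torus d → ℝ) (x : Torus d),
      KChk F b p q φ' x = sSup {a | ∃ y : Torus d, a = φ' y - actFn F b p q x y} := by
    intro p q hpq φ' x
    rw [KChk, if_pos hpq]
  have hKOp_refl : ∀ (p : ℤ) (φ' : Torus d → ℝ), KOp F b p p φ' = φ' := by
    intro p φ'
    rw [KOp, if_neg (lt_irrefl _)]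
  have hKChk_refl : ∀ (p : ℤ) (φ' : Torus d → ℝ), KChk F b p p φ' = φ' := by
    intro p φ'
    rw [KChk, if_neg (lt_irrefl _)]
  -- action function facts
  set LB : ℤ → ℤ → ℝ := fun p q =>
    -((q:ℝ) - (p:ℝ)) * (‖b‖ ^ 2 / 2) - (∑ i ∈ Finset.Ico p q, C i) with hLB
  have hceil : ∀ p q : ℤ, (Finset.Ico ⌈(p:ℝ)⌉ ⌈(q:ℝ)⌉) = Finset.Ico p q := by
    intro p q
    simp [Int.ceil_intCast]
  have hbdd : ∀ p q : ℤ, (p:ℝ) ≤ (q:ℝ) → ∀ x y : Torus d,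
      LB p q ∈ lowerBounds {a | ∃ ζ' g' : ℝ → V d, IsAC ζ' g' (p:ℝ) (q:ℝ) ∧
        projT (ζ' (p:ℝ)) = x ∧ projT (ζ' (q:ℝ)) = y ∧ action F b ζ' g' (p:ℝ) (q:ℝ) = a} := by
    rintro p q hpq x y a ⟨ζ', g', h', -, -, rfl⟩
    have := S5.action_ge F b C hC hpq h'
    rw [hceil p q] at this
    exact this
  have hactFn_le : ∀ p q : ℤ, (p:ℝ) ≤ (q:ℝ) → ∀ (ζ' g' : ℝ → V d), IsAC ζ' g' (p:ℝ) (q:ℝ) →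
      actFn F b p q (projT (ζ' (p:ℝ))) (projT (ζ' (q:ℝ))) ≤ action F b ζ' g' (p:ℝ) (q:ℝ) := by
    intro p q hpq ζ' g' h'
    exact csInf_le ⟨LB p q, hbdd p q hpq _ _⟩ ⟨ζ', g', h', rfl, rfl, rfl⟩
  have hactFn_ne : ∀ p q : ℤ, (p:ℝ) < (q:ℝ) → ∀ x y : Torus d,
      {a | ∃ ζ' g' : ℝ → V d, IsAC ζ' g' (p:ℝ) (q:ℝ) ∧ projT (ζ' (p:ℝ)) = x ∧
        projT (ζ' (q:ℝ)) = y ∧ action F b ζ' g' (p:ℝ) (q:ℝ) = a}.Nonempty := by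
    intro p q hpq x y
    obtain ⟨ζ', g', h', hx, hy⟩ := S5.straight_exists (p:ℝ) (q:ℝ) hpq x y
    exact ⟨action F b ζ' g' (p:ℝ) (q:ℝ), ζ', g', h', hx, hy, rfl⟩
  have hactFn_ge : ∀ p q : ℤ, (p:ℝ) < (q:ℝ) → ∀ x y : Torus d,
      LB p q ≤ actFn F b p q x y := by
    intro p q hpq x y
    exact le_csInf (hactFn_ne p q hpq x y) (hbdd p q hpq.le x y)
  -- KOp facts (for p < q)
  have hKOp_le : ∀ p q : ℤ, (p:ℝ) < (q:ℝ) → ∀ x y : Torus d,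
      KOp F b p q φ x ≤ φ y + actFn F b p q y x := by
    intro p q hpq x y
    rw [hKOp_eq p q hpq]
    refine csInf_le ⟨-cφ + LB p q, ?_⟩ ⟨y, rfl⟩
    rintro a ⟨z, rfl⟩
    exact add_le_add (hφlb z) (hactFn_ge p q hpq z x)
  -- Markov property
  have markov : ∀ j : ℤ, m ≤ j → j < n → ∀ x y : Torus d,
      KOp F b m n φ y ≤ KOp F b m j φ x + actFn F b j n x y := by
    intro j hmj hjn x y
    have hjnR : (j:ℝ) < (n:ℝ) := by exact_mod_cast hjn
    rcases eq_or_lt_of_le hmj with heq | hlt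
    · subst heq
      rw [hKOp_refl]
      exact hKOp_le m n hmnR y x
    · have hmjR : (m:ℝ) < (j:ℝ) := by exact_mod_cast hlt
      refine le_of_forall_pos_le_add ?_
      intro ε hε
      -- near-optimal z for KOp m j φ x
      have hSx := hKOp_eq m j hmjR φ x
      have hS_ne : {a | ∃ y : Torus d, a = φ y + actFn F b m j y x}.Nonempty := ⟨_, x, rfl⟩
      obtain ⟨a, ⟨z, rfl⟩, halt⟩ := exists_lt_of_csInf_lt hS_ne
        (show sInf {a | ∃ y : Torus d, a = φ y + actFn F b m j y x}
          < KOp F b m j φ x + ε/3 by rw [hSx] at *; linarith)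
      -- near-optimal curve for actFn m j z x
      obtain ⟨a₁, ⟨ζ₁, g₁, h₁, hz1, hx1, ha₁⟩, ha₁lt⟩ := exists_lt_of_csInf_lt
        (hactFn_ne m j hmjR z x)
        (show actFn F b m j z x < actFn F b m j z x + ε/3 by linarith)
      -- near-optimal curve for actFn j n x y
      obtain ⟨a₂, ⟨ζ₂, g₂, h₂, hx2, hy2, ha₂⟩, ha₂lt⟩ := exists_lt_of_csInf_lt
        (hactFn_ne j n hjnR x y)
        (show actFn F b j n x y < actFn F b j n x y + ε/3 by linarith)
      obtain ⟨ζ', g', h', hs', he', hact'⟩ := S5.concat F b hlt hjn h₁ h₂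
        (hx1.trans hx2.symm)
      have hstep : KOp F b m n φ y ≤ φ z + action F b ζ' g' (m:ℝ) (n:ℝ) := by
        have h5 : actFn F b m n z y ≤ action F b ζ' g' (m:ℝ) (n:ℝ) := by
          have := hactFn_le m n hmnR.le ζ' g' h'
          rwa [hs', hz1, he', hy2] at this
        linarith [hKOp_le m n hmnR y z]
      rw [hact', ha₁, ha₂] at hstep
      linarith
  -- Main proof
  intro j hmj hjn
  rcases eq_or_lt_of_le hjn with heqn | hltn
  · subst heqn
    rw [hKChk_refl]
    exact ⟨fun x => le_rfl, rfl⟩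
  · have hjnR : (j:ℝ) < (n:ℝ) := by exact_mod_cast hltn
    have hmjR : (m:ℝ) ≤ (j:ℝ) := by exact_mod_cast hmj
    -- part (i)
    have part1 : ∀ x : Torus d, KChk F b j n (KOp F b m n φ) x ≤ KOp F b m j φ x := by
      intro x
      rw [hKChk_eq j n hjnR]
      refine csSup_le ⟨KOp F b m n φ x - actFn F b j n x x, x, rfl⟩ ?_
      rintro a ⟨y, rfl⟩
      linarith [markov j hmj hltn x y]
    refine ⟨part1, ?_⟩
    -- part (ii)
    refine le_antisymm ?_ (part1 (projT (ζ (j:ℝ))))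
    rw [hKChk_eq j n hjnR]
    have hbddA : BddAbove {a | ∃ y : Torus d,
        a = KOp F b m n φ y - actFn F b j n (projT (ζ (j:ℝ))) y} := by
      refine ⟨KOp F b m j φ (projT (ζ (j:ℝ))), ?_⟩
      rintro a ⟨y, rfl⟩
      linarith [markov j hmj hltn (projT (ζ (j:ℝ))) y]
    have hAC_r : IsAC ζ g (j:ℝ) (n:ℝ) := S5.isac_restrict_right hAC hmjR hjnR.le
    have h2 : actFn F b j n (projT (ζ (j:ℝ))) (projT (ζ (n:ℝ))) ≤
        action F b ζ g (j:ℝ) (n:ℝ) := hactFn_le j n hjnR.le ζ g hAC_r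
    have hsplit := S5.action_split F b hmj hltn.le hAC
    have hkey : KOp F b m j φ (projT (ζ (j:ℝ))) ≤
        KOp F b m n φ (projT (ζ (n:ℝ))) - actFn F b j n (projT (ζ (j:ℝ))) (projT (ζ (n:ℝ))) := by
      rcases eq_or_lt_of_le hmj with heq | hlt
      · subst heq
        rw [hKOp_refl]
        rw [hval]
        have hsplit2 := S5.action_split F b (le_refl m) hmn.le hAC
        -- action m m : degenerate; avoid: use directly j = m
        -- actFn m n ≤ action m n
        have h2' : actFn F b m n (projT (ζ (m:ℝ))) (projT (ζ (n:ℝ))) ≤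
            action F b ζ g (m:ℝ) (n:ℝ) := hactFn_le m n hmnR.le ζ g hAC
        linarith
      · have hmjR' : (m:ℝ) < (j:ℝ) := by exact_mod_cast hlt
        have hAC_l : IsAC ζ g (m:ℝ) (j:ℝ) := S5.isac_restrict_left hAC hjnR.le
        have h3 : actFn F b m j (projT (ζ (m:ℝ))) (projT (ζ (j:ℝ))) ≤
            action F b ζ g (m:ℝ) (j:ℝ) := hactFn_le m j hmjR ζ g hAC_l
        have h4 := hKOp_le m j hmjR' (projT (ζ (j:ℝ))) (projT (ζ (m:ℝ)))
        rw [hval]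
        linarith
    exact le_csSup_of_le hbddA ⟨projT (ζ (n:ℝ)), rfl⟩ hkey
end
end

section
/- Let m < n be integers with n − m ≥ 2 and φ ∈ C(𝕋^d), and let γ and σ be two minimizers for K_{m,n}φ (at terminal points γ(n) and σ(n) respectively). Minimizing curves are affine on each interval [j−1, j] between consecutive integers, so the left velocities v_j = γ̇(j−) and η_j = σ̇(j−) ∈ ℝ^d are defined for m < j ≤ n. Then for every integer j with m < j < n there exists a constant K_j, depending only on d and the C² norm of F_j, such that |v_j − η_j| ≤ K_j · dist(γ(j), σ(j)). The same conclusion holds for two curves attaining the maximum defining Ǩ_{m,n}φ. -/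
open MeasureTheory

noncomputable section

namespace S7
variable {d : ℕ}

def intShift (k : Fin d → ℤ) : V d := WithLp.toLp 2 (fun i => (k i : ℝ))

lemma intShift_apply (k : Fin d → ℤ) (i : Fin d) : intShift k i = (k i : ℝ) := rfl

lemma coe_eq_coe_addCircle {a c : ℝ} (h : (c - a) ∈ AddSubgroup.zmultiples (1:ℝ)) :
    (a : AddCircle (1:ℝ)) = (c : AddCircle (1:ℝ)) := by
  symm; rw [QuotientAddGroup.eq_iff_sub_mem]; exact h

lemma projT_add_intShift (x : V d) (k : Fin d → ℤ) : projT (x + intShift k) = projT x := by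
  funext i
  show (((x + intShift k) i : ℝ) : AddCircle (1:ℝ)) = _
  rw [PiLp.add_apply]
  symm
  apply coe_eq_coe_addCircle
  rw [intShift_apply]
  simp only [add_sub_cancel_left]
  exact ⟨k i, by simp⟩

lemma projT_sub_intShift (x : V d) (k : Fin d → ℤ) : projT (x - intShift k) = projT x := by
  have := projT_add_intShift (x - intShift k) k
  simpa using this.symm

lemma exists_intShift_of_projT_eq {a c : V d} (h : projT a = projT c) :
    ∃ k : Fin d → ℤ, c = a + intShift k := by
  have h' : ∀ i, ∃ z : ℤ, c i - a i = (z : ℝ) := by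
    intro i
    have h2 : (a i - c i) ∈ AddSubgroup.zmultiples (1:ℝ) := by
      rw [← QuotientAddGroup.eq_iff_sub_mem]
      exact congrFun h i
    obtain ⟨z, hz⟩ := h2
    exact ⟨-z, by push_cast; simp at hz ⊢; linarith [hz]⟩
  choose k hk using h'
  refine ⟨k, ?_⟩
  ext i
  rw [PiLp.add_apply, intShift_apply]
  linarith [hk i]

lemma projT_surjective : Function.Surjective (projT (d := d)) := by
  intro y
  have h : ∀ i, ∃ r : ℝ, (r : AddCircle (1:ℝ)) = y i := fun i => Quotient.exists_rep (y i)
  choose r hr using h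
  exact ⟨WithLp.toLp 2 (fun i => r i : Fin d → ℝ), funext fun i => hr i⟩

/-- a good lift: `‖(y + k) - x‖ ≤ √d * dist (projT x) (projT y)`. -/
lemma exists_good_lift (x y : V d) :
    ∃ k : Fin d → ℤ, ‖(y + intShift k) - x‖ ≤ Real.sqrt d * dist (projT x) (projT y) := by
  set D := dist (projT x) (projT y) with hD
  have hD0 : 0 ≤ D := dist_nonneg
  refine ⟨fun i => round (x i - y i), ?_⟩
  have hcoord : ∀ i, |y i + (round (x i - y i) : ℝ) - x i| ≤ D := by
    intro i
    have h1 : dist (projT x i) (projT y i) ≤ D := dist_le_pi_dist (projT x) (projT y) i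
    have h2 : dist ((x i : AddCircle (1:ℝ))) ((y i : AddCircle (1:ℝ))) = ‖((x i - y i : ℝ) : AddCircle (1:ℝ))‖ := by
      rw [dist_eq_norm]; norm_cast
    have h3 : ‖((x i - y i : ℝ) : AddCircle (1:ℝ))‖ = |(x i - y i) - round ((1:ℝ)⁻¹ * (x i - y i)) * 1| :=
      AddCircle.norm_eq 1
    have : dist (projT x i) (projT y i) = |(x i - y i) - (round (x i - y i) : ℝ)| := by
      show dist ((x i : AddCircle (1:ℝ))) ((y i : AddCircle (1:ℝ))) = _
      rw [h2, h3]; norm_num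
    rw [this] at h1
    calc |y i + (round (x i - y i) : ℝ) - x i| = |(x i - y i) - (round (x i - y i) : ℝ)| := by
          rw [abs_sub_comm]; ring_nf
      _ ≤ D := h1
  have key : ‖(y + intShift (fun i => round (x i - y i))) - x‖ ≤ Real.sqrt (d * D ^ 2) := by
    rw [EuclideanSpace.norm_eq]
    apply Real.sqrt_le_sqrt
    have hle : ∀ i : Fin d, ‖((y + intShift (fun i => round (x i - y i))) - x) i‖ ^ 2 ≤ D ^ 2 := by
      intro i
      have hco : ((y + intShift (fun i => round (x i - y i))) - x) i
          = y i + (round (x i - y i) : ℝ) - x i := by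
        rw [PiLp.sub_apply, PiLp.add_apply, intShift_apply]
      rw [hco, Real.norm_eq_abs]
      apply sq_le_sq'
      · linarith [abs_nonneg (y i + (round (x i - y i) : ℝ) - x i)]
      · exact hcoord i
    calc ∑ i, ‖((y + intShift (fun i => round (x i - y i))) - x) i‖ ^ 2
        ≤ ∑ _i : Fin d, D ^ 2 := Finset.sum_le_sum (fun i _ => hle i)
      _ = d * D ^ 2 := by rw [Finset.sum_const]; simp [mul_comm]
  have : Real.sqrt (d * D ^ 2) = Real.sqrt d * D := by
    rw [Real.sqrt_mul (by positivity), Real.sqrt_sq hD0]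
  rw [this] at key
  exact key


lemma periodic_bounded {E : Type*} [NormedAddCommGroup E] (f : V d → E) (hf : Continuous f)
    (hper : ∀ x k, f (x + intShift k) = f x) : ∃ M : ℝ, ∀ x, ‖f x‖ ≤ M := by
  obtain ⟨C, hC⟩ := (isCompact_closedBall (0 : V d) (d + 1)).exists_bound_of_continuousOn
    hf.continuousOn
  refine ⟨C, fun x => ?_⟩
  set k : Fin d → ℤ := fun i => -⌊x i⌋ with hk
  have hmem : x + intShift k ∈ Metric.closedBall (0 : V d) (d + 1) := by
    rw [Metric.mem_closedBall, dist_zero_right, EuclideanSpace.norm_eq]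
    have hle : ∀ i : Fin d, ‖(x + intShift k) i‖ ^ 2 ≤ 1 := by
      intro i
      rw [PiLp.add_apply, intShift_apply, hk]
      push_cast
      rw [Real.norm_eq_abs]
      have h1 : x i + -(⌊x i⌋ : ℝ) = Int.fract (x i) := by rw [Int.fract]; ring
      rw [h1]
      have h2 : 0 ≤ Int.fract (x i) := Int.fract_nonneg _
      have h3 : Int.fract (x i) < 1 := Int.fract_lt_one _
      rw [abs_of_nonneg h2]
      nlinarith
    have : ∑ i, ‖(x + intShift k) i‖ ^ 2 ≤ (d : ℝ) := by
      calc ∑ i, ‖(x + intShift k) i‖ ^ 2 ≤ ∑ _i : Fin d, (1:ℝ) :=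
            Finset.sum_le_sum fun i _ => hle i
        _ = d := by simp
    calc Real.sqrt (∑ i, ‖(x + intShift k) i‖ ^ 2) ≤ Real.sqrt d := Real.sqrt_le_sqrt this
      _ ≤ d + 1 := by
          rw [show ((d:ℝ)+1) = Real.sqrt ((d+1)^2) by rw [Real.sqrt_sq (by positivity)]]
          apply Real.sqrt_le_sqrt; nlinarith
  calc ‖f x‖ = ‖f (x + intShift k)‖ := by rw [hper]
    _ ≤ C := hC _ hmem

/-- Taylor estimate with a uniform constant for a periodic C² function. -/
lemma taylor_bound (Fh : V d → ℝ) (hFh : ContDiff ℝ 2 Fh)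
    (hper : ∀ x k, Fh (x + intShift k) = Fh x) :
    ∃ L : ℝ, 0 ≤ L ∧ ∀ x w : V d, |Fh (x + w) - Fh x - fderiv ℝ Fh x w| ≤ L * ‖w‖ ^ 2 := by
  have hdiff : Differentiable ℝ Fh := hFh.differentiable (by norm_num)
  have hf' : ContDiff ℝ 1 (fderiv ℝ Fh) := hFh.fderiv_right (by norm_num)
  have hf'diff : Differentiable ℝ (fderiv ℝ Fh) := hf'.differentiable (by norm_num)
  have hf'per : ∀ x k, fderiv ℝ Fh (x + intShift k) = fderiv ℝ Fh x := by
    intro x k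
    have h1 : Fh = fun u => Fh (u + intShift k) := by funext u; rw [hper]
    conv_rhs => rw [h1]
    have h2 : HasFDerivAt (fun u : V d => Fh (u + intShift k))
        (fderiv ℝ Fh (x + intShift k)) x := by
      have := (hdiff (x + intShift k)).hasFDerivAt
      exact this.comp x ((hasFDerivAt_id x).add_const (intShift k))
    exact (h2.fderiv).symm
  have hf'' : Continuous (fderiv ℝ (fderiv ℝ Fh)) := hf'.continuous_fderiv one_ne_zero
  have hf''per : ∀ x k, fderiv ℝ (fderiv ℝ Fh) (x + intShift k) = fderiv ℝ (fderiv ℝ Fh) x := by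
    intro x k
    have h1 : fderiv ℝ Fh = fun u => fderiv ℝ Fh (u + intShift k) := by
      funext u; rw [hf'per]
    conv_rhs => rw [h1]
    have h2 : HasFDerivAt (fun u : V d => fderiv ℝ Fh (u + intShift k))
        (fderiv ℝ (fderiv ℝ Fh) (x + intShift k)) x := by
      have := (hf'diff (x + intShift k)).hasFDerivAt
      exact this.comp x ((hasFDerivAt_id x).add_const (intShift k))
    exact (h2.fderiv).symm
  obtain ⟨L₀, hL₀⟩ := periodic_bounded (fderiv ℝ (fderiv ℝ Fh)) hf'' hf''per
  have hL₀0 : 0 ≤ L₀ := le_trans (norm_nonneg (fderiv ℝ (fderiv ℝ Fh) 0)) (hL₀ 0)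
  -- fderiv Fh is L₀-Lipschitz
  have hlip : ∀ x y : V d, ‖fderiv ℝ Fh y - fderiv ℝ Fh x‖ ≤ L₀ * ‖y - x‖ := by
    intro x y
    exact Convex.norm_image_sub_le_of_norm_fderiv_le
      (fun z _ => hf'diff z) (fun z _ => hL₀ z) convex_univ (Set.mem_univ x) (Set.mem_univ y)
  refine ⟨L₀, hL₀0, fun x w => ?_⟩
  have seg : Convex ℝ (segment ℝ x (x + w)) := convex_segment x (x + w)
  have hbound : ∀ z ∈ segment ℝ x (x + w), ‖fderiv ℝ Fh z - fderiv ℝ Fh x‖ ≤ L₀ * ‖w‖ := by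
    intro z hz
    rw [segment_eq_image' ℝ x (x + w)] at hz
    obtain ⟨t, ht, rfl⟩ := hz
    calc ‖fderiv ℝ Fh (x + t • (x + w - x)) - fderiv ℝ Fh x‖
        ≤ L₀ * ‖x + t • (x + w - x) - x‖ := hlip _ _
      _ ≤ L₀ * ‖w‖ := by
          apply mul_le_mul_of_nonneg_left _ hL₀0
          have h4 : x + t • (x + w - x) - x = t • w := by
            simp only [add_sub_cancel_left]
          rw [h4, norm_smul, Real.norm_eq_abs, abs_of_nonneg ht.1]
          nlinarith [norm_nonneg w, ht.2, ht.1]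
  have main := Convex.norm_image_sub_le_of_norm_hasFDerivWithin_le'
    (f := Fh) (f' := fun z => fderiv ℝ Fh z) (φ := fderiv ℝ Fh x) (C := L₀ * ‖w‖)
    (s := segment ℝ x (x + w))
    (fun z _ => (hdiff z).hasFDerivAt.hasFDerivWithinAt)
    (fun z hz => hbound z hz) seg (left_mem_segment ℝ x (x + w)) (right_mem_segment ℝ x (x + w))
  calc |Fh (x + w) - Fh x - (fderiv ℝ Fh x) w|
      = ‖Fh (x + w) - Fh x - (fderiv ℝ Fh x) (x + w - x)‖ := by
        rw [Real.norm_eq_abs, show x + w - x = w by abel]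
    _ ≤ L₀ * ‖w‖ * ‖x + w - x‖ := main
    _ = L₀ * ‖w‖ ^ 2 := by rw [show x + w - x = w by abel]; ring

lemma linear_eq_zero_of_le_quadratic (C : ℝ) (ℓ : V d → ℝ)
    (hsmul : ∀ (t : ℝ) (w : V d), ℓ (t • w) = t * ℓ w)
    (h : ∀ w, ℓ w ≤ C * ‖w‖ ^ 2) : ∀ w, ℓ w = 0 := by
  have key : ∀ w, ℓ w ≤ 0 := by
    intro w
    have h2 : ∀ ε : ℝ, 0 < ε → ℓ w ≤ 0 + ε := by
      intro ε hε
      rcases le_or_gt (C * ‖w‖ ^ 2) 0 with hc | hc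
      · have := h w; linarith
      · set t : ℝ := min 1 (ε / (C * ‖w‖ ^ 2)) with ht
        have ht0 : 0 < t := lt_min one_pos (div_pos hε hc)
        have h3 : t * ℓ w = ℓ (t • w) := (hsmul t w).symm
        have h4 : ℓ (t • w) ≤ C * ‖t • w‖ ^ 2 := h (t • w)
        have h5 : ‖t • w‖ ^ 2 = t ^ 2 * ‖w‖ ^ 2 := by
          rw [norm_smul, Real.norm_eq_abs, mul_pow, sq_abs]
        have h6 : t * ℓ w ≤ t ^ 2 * (C * ‖w‖ ^ 2) := by
          rw [h3]; calc ℓ (t • w) ≤ C * ‖t • w‖ ^ 2 := h4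
            _ = t ^ 2 * (C * ‖w‖ ^ 2) := by rw [h5]; ring
        have h7 : ℓ w ≤ t * (C * ‖w‖ ^ 2) := by
          have := mul_le_mul_of_nonneg_left h6 (le_of_lt (inv_pos.mpr ht0))
          calc ℓ w = t⁻¹ * (t * ℓ w) := by field_simp
            _ ≤ t⁻¹ * (t ^ 2 * (C * ‖w‖ ^ 2)) := this
            _ = t * (C * ‖w‖ ^ 2) := by field_simp
        have h8 : t * (C * ‖w‖ ^ 2) ≤ ε := by
          have : t ≤ ε / (C * ‖w‖ ^ 2) := min_le_right _ _
          calc t * (C * ‖w‖ ^ 2) ≤ (ε / (C * ‖w‖ ^ 2)) * (C * ‖w‖ ^ 2) :=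
                mul_le_mul_of_nonneg_right this (le_of_lt hc)
            _ = ε := div_mul_cancel₀ _ hc.ne'
        linarith
    linarith [le_of_forall_pos_le_add h2]
  intro w
  have h1 := key w
  have h2 := key (-w)
  have h3 : ℓ (-w) = -ℓ w := by
    have := hsmul (-1) w; simpa using this
  linarith

lemma lower_bound_upgrade (L : ℝ) (hL : 0 ≤ L) (Fh : V d → ℝ)
    (hT : ∀ x w, |Fh (x + w) - Fh x - fderiv ℝ Fh x w| ≤ L * ‖w‖ ^ 2)
    (f : V d → ℝ) (x₀ p p₁ : V d)
    (hup : ∀ w, f (x₀ + w) ≤ f x₀ + inner ℝ p w + 1/2 * ‖w‖ ^ 2)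
    (hlo : ∀ w, f x₀ + (inner ℝ p₁ w : ℝ) - 1/2 * ‖w‖ ^ 2 + Fh (x₀ + w) - Fh x₀ ≤ f (x₀ + w)) :
    ∀ w, f x₀ + (inner ℝ p w : ℝ) - (1/2 + L) * ‖w‖ ^ 2 ≤ f (x₀ + w) := by
  set D := fderiv ℝ Fh x₀ with hD
  have hlo' : ∀ w, f x₀ + (inner ℝ p₁ w : ℝ) + D w - (1/2 + L) * ‖w‖ ^ 2 ≤ f (x₀ + w) := by
    intro w
    have h1 := hlo w
    have h2 := (abs_le.mp (hT x₀ w)).1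
    nlinarith [h1, h2]
  have hlin : ∀ w : V d, (inner ℝ p₁ w : ℝ) + D w - inner ℝ p w = 0 := by
    apply linear_eq_zero_of_le_quadratic (1 + L)
    · intro t w
      rw [real_inner_smul_right, real_inner_smul_right, ContinuousLinearMap.map_smul]
      simp; ring
    · intro w
      have h1 := hlo' w
      have h2 := hup w
      nlinarith [h1, h2]
  intro w
  have := hlo' w
  have h2 := hlin w
  nlinarith [this, h2]

lemma slope_compare (C : ℝ) (hC : 0 ≤ C) (f : V d → ℝ) (x₀ y₀ p q : V d)
    (hup1 : ∀ w, f (x₀ + w) ≤ f x₀ + inner ℝ p w + C * ‖w‖ ^ 2)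
    (hlo1 : ∀ w, f x₀ + (inner ℝ p w : ℝ) - C * ‖w‖ ^ 2 ≤ f (x₀ + w))
    (hup2 : ∀ w, f (y₀ + w) ≤ f y₀ + inner ℝ q w + C * ‖w‖ ^ 2) :
    ‖p - q‖ ≤ 6 * C * ‖y₀ - x₀‖ := by
  set δ := y₀ - x₀ with hδ
  set u := p - q with hu
  have key : ∀ w, (inner ℝ u w : ℝ) ≤ 3 * C * (‖δ‖ ^ 2 + ‖w‖ ^ 2) := by
    intro w
    have e1 : x₀ + (δ + w) = y₀ + w := by rw [hδ]; abel
    have h1 : f x₀ + (inner ℝ p (δ + w) : ℝ) - C * ‖δ + w‖ ^ 2 ≤ f (y₀ + w) := by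
      rw [← e1]; exact hlo1 (δ + w)
    have h2 := hup2 w
    have h3 : f (x₀ + δ) ≤ f x₀ + (inner ℝ p δ : ℝ) + C * ‖δ‖ ^ 2 := hup1 δ
    have e2 : x₀ + δ = y₀ := by rw [hδ]; abel
    rw [e2] at h3
    have h4 : (inner ℝ p (δ + w) : ℝ) = inner ℝ p δ + inner ℝ p w := inner_add_right p δ w
    have h5 : ‖δ + w‖ ^ 2 ≤ 2 * ‖δ‖ ^ 2 + 2 * ‖w‖ ^ 2 := by
      nlinarith [norm_add_le δ w, norm_nonneg δ, norm_nonneg w, sq_nonneg (‖δ‖ - ‖w‖),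
        norm_nonneg (δ + w)]
    have h6 : (inner ℝ u w : ℝ) = inner ℝ p w - inner ℝ q w := by
      rw [hu, inner_sub_left]
    nlinarith [h1, h2, h3]
  rcases eq_or_ne u 0 with h | h
  · rw [hu] at h; rw [hu, h]; simp; positivity
  · have hu0 : 0 < ‖u‖ := norm_pos_iff.mpr h
    have step : ∀ ε' : ℝ, 0 < ε' → ‖u‖ ≤ 6 * C * ‖δ‖ + 3 * C * ε' := by
      intro ε' hε'
      have hs0 : 0 < ‖δ‖ + ε' := by positivity
      have hw := key (((‖δ‖ + ε') / ‖u‖) • u)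
      rw [real_inner_smul_right, real_inner_self_eq_norm_sq] at hw
      have hnw : ‖((‖δ‖ + ε') / ‖u‖) • u‖ = ‖δ‖ + ε' := by
        rw [norm_smul, Real.norm_eq_abs, abs_of_pos (div_pos hs0 hu0)]
        field_simp
      rw [hnw] at hw
      have hw' : (‖δ‖ + ε') * ‖u‖ ≤ 3 * C * (‖δ‖ ^ 2 + (‖δ‖ + ε') ^ 2) := by
        have heq : (‖δ‖ + ε') / ‖u‖ * ‖u‖ ^ 2 = (‖δ‖ + ε') * ‖u‖ := by field_simp
        linarith [hw, heq.symm ▸ hw]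
      nlinarith [hw', norm_nonneg δ, hε', hC,
        mul_nonneg (mul_nonneg hC (norm_nonneg δ)) hε'.le]
    have : ∀ ε : ℝ, 0 < ε → ‖u‖ ≤ 6 * C * ‖δ‖ + ε := by
      intro ε hε
      have h1 := step (ε / (3 * C + 1)) (by positivity)
      have h2 : 3 * C * (ε / (3 * C + 1)) ≤ ε := by
        rw [div_eq_mul_inv]
        have h3 : (3 * C + 1) > 0 := by linarith
        rw [show 3 * C * (ε * (3 * C + 1)⁻¹) = ε * (3 * C) * (3 * C + 1)⁻¹ by ring]
        calc ε * (3 * C) * (3 * C + 1)⁻¹ ≤ ε * (3 * C + 1) * (3 * C + 1)⁻¹ := by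
              apply mul_le_mul_of_nonneg_right _ (le_of_lt (inv_pos.mpr h3))
              nlinarith
          _ = ε := by field_simp
      linarith
    exact le_of_forall_pos_le_add this

lemma intInt {E : Type*} [NormedAddCommGroup E] {f : ℝ → E} {s t a c : ℝ}
    (hf : IntegrableOn f (Set.Icc s t)) (h1 : s ≤ a) (h2 : a ≤ c) (h3 : c ≤ t) :
    IntervalIntegrable f volume a c := by
  apply IntegrableOn.intervalIntegrable
  rw [Set.uIcc_of_le h2]
  exact hf.mono_set (Set.Icc_subset_Icc h1 h3)

lemma ae_ne_pt (c : ℝ) : ∀ᵐ x : ℝ ∂volume, x ≠ c := by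
  rw [MeasureTheory.ae_iff]
  have : {x : ℝ | ¬x ≠ c} = {c} := by ext x; simp
  rw [this]
  exact measure_singleton c

section withFb
variable {F : ℤ → Torus d → ℝ} {b : V d}

lemma lag_integrableOn {ζ g : ℝ → V d} {s t : ℝ} (h : IsAC ζ g s t) :
    IntegrableOn (fun τ => (1:ℝ)/2 * ‖g τ‖ ^ 2 - (inner ℝ b (g τ) : ℝ)) (Set.Icc s t) := by
  apply Integrable.sub
  · exact h.2.1.const_mul _
  · have := (innerSL ℝ b).integrable_comp h.1
    simpa using this

lemma lag_intervalIntegrable {ζ g : ℝ → V d} {s t a c : ℝ} (h : IsAC ζ g s t)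
    (h1 : s ≤ a) (h2 : a ≤ c) (h3 : c ≤ t) :
    IntervalIntegrable (fun τ => (1:ℝ)/2 * ‖g τ‖ ^ 2 - (inner ℝ b (g τ) : ℝ)) volume a c :=
  intInt (lag_integrableOn (b := b) h) h1 h2 h3

lemma isAC_mono {ζ g : ℝ → V d} {s t u r : ℝ} (h : IsAC ζ g s t)
    (h1 : s ≤ u) (h2 : u ≤ r) (h3 : r ≤ t) : IsAC ζ g u r := by
  refine ⟨h.1.mono_set (Set.Icc_subset_Icc h1 h3),
    h.2.1.mono_set (Set.Icc_subset_Icc h1 h3), fun τ hτ => ?_⟩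
  have hζτ := h.2.2 τ ⟨le_trans h1 hτ.1, le_trans hτ.2 h3⟩
  have hζu := h.2.2 u ⟨h1, le_trans h2 h3⟩
  have hsub : (∫ x in s..τ, g x) - ∫ x in s..u, g x = ∫ x in u..τ, g x :=
    intervalIntegral.integral_interval_sub_left
      (intInt h.1 (le_refl s) (le_trans h1 hτ.1) (le_trans hτ.2 h3))
      (intInt h.1 (le_refl s) h1 (le_trans h2 h3))
  rw [hζτ, hζu]
  rw [← hsub]
  abel

lemma integral_velocity {ζ g : ℝ → V d} {s t a c : ℝ} (h : IsAC ζ g s t)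
    (h1 : s ≤ a) (h2 : a ≤ c) (h3 : c ≤ t) : (∫ τ in a..c, g τ) = ζ c - ζ a := by
  have h' := isAC_mono h h1 h2 h3
  have := h'.2.2 c ⟨h2, le_refl c⟩
  rw [this]; abel

lemma jensen {ζ g : ℝ → V d} {c : ℝ} (h : IsAC ζ g c (c+1)) :
    (1:ℝ)/2 * ‖ζ (c+1) - ζ c‖ ^ 2 ≤ ∫ τ in c..c+1, (1:ℝ)/2 * ‖g τ‖ ^ 2 := by
  have hc1 : c ≤ c + 1 := by linarith
  set I : V d := ζ (c+1) - ζ c with hI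
  have hIv : (∫ τ in c..c+1, g τ) = I := integral_velocity h (le_refl c) hc1 (le_refl _)
  have hgi : IntervalIntegrable g volume c (c+1) := intInt h.1 (le_refl c) hc1 (le_refl _)
  have hg2i : IntervalIntegrable (fun τ => ‖g τ‖ ^ 2) volume c (c+1) :=
    intInt h.2.1 (le_refl c) hc1 (le_refl _)
  have hinner : (∫ τ in c..c+1, (inner ℝ I (g τ) : ℝ)) = ‖I‖ ^ 2 := by
    have := (innerSL ℝ I).intervalIntegral_comp_comm hgi
    simp only [innerSL_apply_apply] at this
    rw [this, hIv, real_inner_self_eq_norm_sq]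
  have hpos : (0:ℝ) ≤ ∫ τ in c..c+1, (‖g τ‖ ^ 2 - 2 * (inner ℝ I (g τ) : ℝ) + ‖I‖ ^ 2) := by
    apply intervalIntegral.integral_nonneg hc1
    intro τ _
    have : ‖g τ - I‖ ^ 2 = ‖g τ‖ ^ 2 - 2 * (inner ℝ (g τ) I : ℝ) + ‖I‖ ^ 2 := by
      rw [norm_sub_sq_real]
    rw [real_inner_comm] at this
    nlinarith [sq_nonneg ‖g τ - I‖, this]
  have hIOn : IntegrableOn (fun τ => (inner ℝ I (g τ) : ℝ)) (Set.Icc c (c+1)) := by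
    have := (innerSL ℝ I).integrable_comp h.1
    simpa [IntegrableOn] using this
  have hii : IntervalIntegrable (fun τ => (inner ℝ I (g τ) : ℝ)) volume c (c+1) :=
    intInt hIOn (le_refl c) hc1 (le_refl _)
  have hsplit : (∫ τ in c..c+1, (‖g τ‖ ^ 2 - 2 * (inner ℝ I (g τ) : ℝ) + ‖I‖ ^ 2))
      = (∫ τ in c..c+1, ‖g τ‖ ^ 2) - 2 * (∫ τ in c..c+1, (inner ℝ I (g τ) : ℝ)) + ‖I‖ ^ 2 := by
    rw [intervalIntegral.integral_add (hg2i.sub ((hii.const_mul 2))) intervalIntegrable_const,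
      intervalIntegral.integral_sub hg2i (hii.const_mul 2),
      intervalIntegral.integral_const_mul, intervalIntegral.integral_const]
    simp
  rw [hsplit, hinner] at hpos
  have h12 : (∫ τ in c..c+1, (1:ℝ)/2 * ‖g τ‖ ^ 2) = 1/2 * ∫ τ in c..c+1, ‖g τ‖ ^ 2 :=
    intervalIntegral.integral_const_mul _ _
  rw [h12]
  nlinarith [hpos]

end withFb
section withFb2
variable {d : ℕ} {F : ℤ → Torus d → ℝ} {b : V d}

lemma action_ge {ζ g : ℝ → V d} {s t : ℝ} (hst : s ≤ t) (h : IsAC ζ g s t)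
    (MF : ℤ → ℝ) (hMF : ∀ j x, |F j x| ≤ MF j) :
    -(1/2 * ‖b‖ ^ 2 * (t - s)) - ∑ j ∈ Finset.Ico ⌈s⌉ ⌈t⌉, MF j ≤ action F b ζ g s t := by
  have hint : ((t - s) • (-(1/2 * ‖b‖ ^ 2)) : ℝ)
      ≤ ∫ τ in s..t, ((1:ℝ)/2 * ‖g τ‖ ^ 2 - (inner ℝ b (g τ) : ℝ)) := by
    rw [← intervalIntegral.integral_const (-(1/2 * ‖b‖ ^ 2) : ℝ)]
    apply intervalIntegral.integral_mono_on hst intervalIntegrable_const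
      (lag_intervalIntegrable (b := b) h (le_refl s) hst (le_refl t))
    intro x _
    have hexp : ‖g x - b‖ ^ 2 = ‖g x‖ ^ 2 - 2 * (inner ℝ (g x) b : ℝ) + ‖b‖ ^ 2 :=
      norm_sub_sq_real _ _
    have hcomm : (inner ℝ (g x) b : ℝ) = inner ℝ b (g x) := real_inner_comm _ _
    nlinarith [sq_nonneg ‖g x - b‖, hexp]
  have hsum : ∑ j ∈ Finset.Ico ⌈s⌉ ⌈t⌉, F j (projT (ζ (j : ℝ)))
      ≤ ∑ j ∈ Finset.Ico ⌈s⌉ ⌈t⌉, MF j :=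
    Finset.sum_le_sum fun j _ => (abs_le.mp (hMF j _)).2
  unfold action
  have : ((t - s) • (-(1/2 * ‖b‖ ^ 2)) : ℝ) = -(1/2 * ‖b‖ ^ 2 * (t - s)) := by
    rw [smul_eq_mul]; ring
  linarith [hint, hsum, this ▸ hint]

lemma action_split {ζ g : ℝ → V d} {m j n : ℤ} (h1 : m ≤ j) (h2 : j ≤ n)
    (h : IsAC ζ g (m : ℝ) (n : ℝ)) :
    action F b ζ g m n = action F b ζ g m j + action F b ζ g j n := by
  have hmj : (m:ℝ) ≤ (j:ℝ) := by exact_mod_cast h1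
  have hjn : (j:ℝ) ≤ (n:ℝ) := by exact_mod_cast h2
  have hint : (∫ τ in (m:ℝ)..(j:ℝ), ((1:ℝ)/2 * ‖g τ‖ ^ 2 - (inner ℝ b (g τ) : ℝ)))
      + ∫ τ in (j:ℝ)..(n:ℝ), ((1:ℝ)/2 * ‖g τ‖ ^ 2 - (inner ℝ b (g τ) : ℝ))
      = ∫ τ in (m:ℝ)..(n:ℝ), ((1:ℝ)/2 * ‖g τ‖ ^ 2 - (inner ℝ b (g τ) : ℝ)) :=
    intervalIntegral.integral_add_adjacent_intervals
      (lag_intervalIntegrable h (le_refl _) hmj hjn)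
      (lag_intervalIntegrable h hmj hjn (le_refl _))
  have hsum : ∑ i ∈ Finset.Ico ⌈(m:ℝ)⌉ ⌈(j:ℝ)⌉, F i (projT (ζ (i : ℝ)))
      + ∑ i ∈ Finset.Ico ⌈(j:ℝ)⌉ ⌈(n:ℝ)⌉, F i (projT (ζ (i : ℝ)))
      = ∑ i ∈ Finset.Ico ⌈(m:ℝ)⌉ ⌈(n:ℝ)⌉, F i (projT (ζ (i : ℝ))) := by
    simp only [Int.ceil_intCast]
    rw [← Finset.sum_union (Finset.Ico_disjoint_Ico_consecutive m j n)]
    rw [Finset.Ico_union_Ico_eq_Ico h1 h2]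
  unfold action
  linarith [hint, hsum]

/-- The affine curve on `[c-1, c]` from `S` with velocity `W`. -/
def affC (c : ℤ) (S W : V d) : ℝ → V d := fun τ => S + (τ - ((c:ℝ) - 1)) • W

lemma affC_isAC (c : ℤ) (S W : V d) : IsAC (affC c S W) (fun _ => W) ((c:ℝ) - 1) c := by
  refine ⟨?_, ?_, fun τ hτ => ?_⟩
  · exact integrableOn_const measure_Icc_lt_top.ne
  · exact integrableOn_const measure_Icc_lt_top.ne
  · rw [intervalIntegral.integral_const]
    unfold affC
    simp

lemma affC_start (c : ℤ) (S W : V d) : affC c S W ((c:ℝ) - 1) = S := by unfold affC; simp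

lemma affC_end (c : ℤ) (S W : V d) : affC c S W (c:ℝ) = S + W := by unfold affC; simp

lemma Ico_pred_self (c : ℤ) : Finset.Ico (c - 1) c = {c - 1} := by
  ext x; simp only [Finset.mem_Ico, Finset.mem_singleton]; omega

lemma affC_action (c : ℤ) (S W : V d) :
    action F b (affC c S W) (fun _ => W) ((c:ℝ) - 1) c
      = 1/2 * ‖W‖ ^ 2 - (inner ℝ b W : ℝ) - F (c - 1) (projT S) := by
  unfold action
  have h1 : (∫ _τ in ((c:ℝ) - 1)..(c:ℝ), ((1:ℝ)/2 * ‖W‖ ^ 2 - (inner ℝ b W : ℝ)))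
      = 1/2 * ‖W‖ ^ 2 - (inner ℝ b W : ℝ) := by
    rw [intervalIntegral.integral_const]; rw [smul_eq_mul]; ring_nf
  have h2 : ⌈(c:ℝ) - 1⌉ = c - 1 := by
    rw [show ((c:ℝ) - 1) = ((c - 1 : ℤ) : ℝ) by push_cast; ring, Int.ceil_intCast]
  have h3 : ⌈(c:ℝ)⌉ = c := Int.ceil_intCast c
  rw [h1, h2, h3, Ico_pred_self c, Finset.sum_singleton]
  have h4 : affC c S W ((c - 1 : ℤ) : ℝ) = S := by
    rw [show ((c - 1 : ℤ) : ℝ) = ((c:ℝ) - 1) by push_cast; ring, affC_start]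
  rw [h4]

end withFb2
section concat
variable {d : ℕ} {F : ℤ → Torus d → ℝ} {b : V d}

lemma concat {m j n : ℤ} (hmj : m < j) (hjn : j < n) {ζ₁ g₁ ζ₂ g₂ : ℝ → V d}
    (h₁ : IsAC ζ₁ g₁ (m : ℝ) (j : ℝ)) (h₂ : IsAC ζ₂ g₂ (j : ℝ) (n : ℝ))
    (k : Fin d → ℤ) (hk : ζ₂ (j : ℝ) = ζ₁ (j : ℝ) + intShift k) :
    ∃ ζ g : ℝ → V d, IsAC ζ g (m : ℝ) (n : ℝ) ∧ ζ (m : ℝ) = ζ₁ (m : ℝ) ∧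
      ζ (n : ℝ) = ζ₂ (n : ℝ) - intShift k ∧
      action F b ζ g (m : ℝ) (n : ℝ)
        = action F b ζ₁ g₁ (m : ℝ) (j : ℝ) + action F b ζ₂ g₂ (j : ℝ) (n : ℝ) := by
  have hmjR : (m:ℝ) ≤ (j:ℝ) := by exact_mod_cast hmj.le
  have hjnR : (j:ℝ) ≤ (n:ℝ) := by exact_mod_cast hjn.le
  set ζ : ℝ → V d := fun τ => if τ ≤ (j:ℝ) then ζ₁ τ else ζ₂ τ - intShift k with hζ
  set g : ℝ → V d := fun τ => if τ ≤ (j:ℝ) then g₁ τ else g₂ τ with hg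
  have hgEq1 : Set.EqOn g g₁ (Set.Icc (m:ℝ) (j:ℝ)) := fun τ hτ => if_pos hτ.2
  have hgEq2 : Set.EqOn g g₂ (Set.Ioc (j:ℝ) (n:ℝ)) := fun τ hτ => if_neg (not_le.mpr hτ.1)
  have hgi : IntegrableOn g (Set.Icc (m:ℝ) (n:ℝ)) := by
    rw [← Set.Icc_union_Ioc_eq_Icc hmjR hjnR]
    apply IntegrableOn.union
    · exact h₁.1.congr_fun (fun τ hτ => (hgEq1 hτ).symm) measurableSet_Icc
    · exact (h₂.1.mono_set Set.Ioc_subset_Icc_self).congr_fun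
        (fun τ hτ => (hgEq2 hτ).symm) measurableSet_Ioc
  have hg2i : IntegrableOn (fun τ => ‖g τ‖ ^ 2) (Set.Icc (m:ℝ) (n:ℝ)) := by
    rw [← Set.Icc_union_Ioc_eq_Icc hmjR hjnR]
    apply IntegrableOn.union
    · exact h₁.2.1.congr_fun (fun τ hτ => by rw [hgEq1 hτ]) measurableSet_Icc
    · exact (h₂.2.1.mono_set Set.Ioc_subset_Icc_self).congr_fun
        (fun τ hτ => by rw [hgEq2 hτ]) measurableSet_Ioc
  -- integrals of g agree with pieces
  have hint1 : ∀ τ : ℝ, (m:ℝ) ≤ τ → τ ≤ (j:ℝ) → (∫ u in (m:ℝ)..τ, g u) = ∫ u in (m:ℝ)..τ, g₁ u := by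
    intro τ hτ1 hτ2
    apply intervalIntegral.integral_congr
    intro u hu
    rw [Set.uIcc_of_le hτ1] at hu
    exact hgEq1 ⟨hu.1, le_trans hu.2 hτ2⟩
  have hint2 : ∀ τ : ℝ, (j:ℝ) ≤ τ → τ ≤ (n:ℝ) → (∫ u in (j:ℝ)..τ, g u) = ∫ u in (j:ℝ)..τ, g₂ u := by
    intro τ hτ1 hτ2
    apply intervalIntegral.integral_congr_ae
    apply Filter.Eventually.of_forall
    intro u hmem
    rw [Set.uIoc_of_le hτ1] at hmem
    exact hgEq2 ⟨hmem.1, le_trans hmem.2 hτ2⟩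
  have hζval : ∀ τ ∈ Set.Icc (m:ℝ) (n:ℝ), ζ τ = ζ (m:ℝ) + ∫ u in (m:ℝ)..τ, g u := by
    intro τ hτ
    have hζm : ζ (m:ℝ) = ζ₁ (m:ℝ) := if_pos hmjR
    rcases le_or_gt τ (j:ℝ) with hc | hc
    · rw [show ζ τ = ζ₁ τ from if_pos hc, hζm, hint1 τ hτ.1 hc]
      exact h₁.2.2 τ ⟨hτ.1, hc⟩
    · have hsplit : (∫ u in (m:ℝ)..τ, g u)
          = (∫ u in (m:ℝ)..(j:ℝ), g u) + ∫ u in (j:ℝ)..τ, g u := by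
        symm
        apply intervalIntegral.integral_add_adjacent_intervals
        · exact intInt hgi (le_refl _) hmjR (le_trans hc.le hτ.2)
        · exact intInt hgi hmjR hc.le hτ.2
      rw [show ζ τ = ζ₂ τ - intShift k from if_neg (not_le.mpr hc), hζm, hsplit,
        hint1 (j:ℝ) hmjR (le_refl _), hint2 τ hc.le hτ.2,
        integral_velocity h₁ (le_refl _) hmjR (le_refl _),
        integral_velocity h₂ (le_refl _) hc.le hτ.2, hk]
      abel
  have hAC : IsAC ζ g (m:ℝ) (n:ℝ) := ⟨hgi, hg2i, hζval⟩
  refine ⟨ζ, g, hAC, if_pos hmjR, if_neg (not_le.mpr (by exact_mod_cast hjn)), ?_⟩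
  -- action equality
  have hI1 : (∫ τ in (m:ℝ)..(j:ℝ), ((1:ℝ)/2 * ‖g τ‖ ^ 2 - (inner ℝ b (g τ) : ℝ)))
      = ∫ τ in (m:ℝ)..(j:ℝ), ((1:ℝ)/2 * ‖g₁ τ‖ ^ 2 - (inner ℝ b (g₁ τ) : ℝ)) := by
    apply intervalIntegral.integral_congr
    intro u hu
    rw [Set.uIcc_of_le hmjR] at hu
    simp only [hgEq1 hu]
  have hI2 : (∫ τ in (j:ℝ)..(n:ℝ), ((1:ℝ)/2 * ‖g τ‖ ^ 2 - (inner ℝ b (g τ) : ℝ)))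
      = ∫ τ in (j:ℝ)..(n:ℝ), ((1:ℝ)/2 * ‖g₂ τ‖ ^ 2 - (inner ℝ b (g₂ τ) : ℝ)) := by
    apply intervalIntegral.integral_congr_ae
    apply Filter.Eventually.of_forall
    intro u hmem
    rw [Set.uIoc_of_le hjnR] at hmem
    simp only [hgEq2 ⟨hmem.1, hmem.2⟩]
  have hIadd : (∫ τ in (m:ℝ)..(n:ℝ), ((1:ℝ)/2 * ‖g τ‖ ^ 2 - (inner ℝ b (g τ) : ℝ)))
      = (∫ τ in (m:ℝ)..(j:ℝ), ((1:ℝ)/2 * ‖g τ‖ ^ 2 - (inner ℝ b (g τ) : ℝ)))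
        + ∫ τ in (j:ℝ)..(n:ℝ), ((1:ℝ)/2 * ‖g τ‖ ^ 2 - (inner ℝ b (g τ) : ℝ)) := by
    symm
    exact intervalIntegral.integral_add_adjacent_intervals
      (lag_intervalIntegrable hAC (le_refl _) hmjR hjnR)
      (lag_intervalIntegrable hAC hmjR hjnR (le_refl _))
  have hkick : ∑ i ∈ Finset.Ico ⌈(m:ℝ)⌉ ⌈(n:ℝ)⌉, F i (projT (ζ (i : ℝ)))
      = (∑ i ∈ Finset.Ico ⌈(m:ℝ)⌉ ⌈(j:ℝ)⌉, F i (projT (ζ₁ (i : ℝ))))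
        + ∑ i ∈ Finset.Ico ⌈(j:ℝ)⌉ ⌈(n:ℝ)⌉, F i (projT (ζ₂ (i : ℝ))) := by
    simp only [Int.ceil_intCast]
    rw [← Finset.Ico_union_Ico_eq_Ico hmj.le hjn.le,
      Finset.sum_union (Finset.Ico_disjoint_Ico_consecutive m j n)]
    congr 1
    · apply Finset.sum_congr rfl
      intro i hi
      rw [Finset.mem_Ico] at hi
      have : ((i:ℝ)) ≤ (j:ℝ) := by exact_mod_cast hi.2.le
      rw [show ζ (i:ℝ) = ζ₁ (i:ℝ) from if_pos this]
    · apply Finset.sum_congr rfl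
      intro i hi
      rw [Finset.mem_Ico] at hi
      rcases eq_or_lt_of_le hi.1 with hij | hij
      · subst hij
        rw [show ζ (j:ℝ) = ζ₁ (j:ℝ) from if_pos (le_refl _),
          show ζ₁ (j:ℝ) = ζ₂ (j:ℝ) - intShift k from by rw [hk]; abel,
          projT_sub_intShift]
      · rw [show ζ (i:ℝ) = ζ₂ (i:ℝ) - intShift k from if_neg (not_le.mpr (by exact_mod_cast hij)),
          projT_sub_intShift]
  unfold action
  rw [hIadd, hI1, hI2, hkick]
  ring

end concat
section value
variable {d : ℕ} {F : ℤ → Torus d → ℝ} {b : V d} {MF : ℤ → ℝ} {φ : Torus d → ℝ}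

/-- Lower bound for the action over `[s,t]`. -/
def lbv (F : ℤ → Torus d → ℝ) (b : V d) (MF : ℤ → ℝ) (s t : ℝ) : ℝ :=
  -(1/2 * ‖b‖ ^ 2 * (t - s)) - ∑ j ∈ Finset.Ico ⌈s⌉ ⌈t⌉, MF j

lemma actSet_nonempty {s t : ℝ} (hst : s < t) (x x' : Torus d) :
    {a | ∃ ζ g : ℝ → V d, IsAC ζ g s t ∧ projT (ζ s) = x ∧ projT (ζ t) = x' ∧
      action F b ζ g s t = a}.Nonempty := by
  obtain ⟨X, hX⟩ := projT_surjective x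
  obtain ⟨X', hX'⟩ := projT_surjective x'
  set W : V d := (1 / (t - s)) • (X' - X) with hW
  set ζ : ℝ → V d := fun τ => X + (τ - s) • W with hζ
  have hAC : IsAC ζ (fun _ => W) s t := by
    refine ⟨integrableOn_const measure_Icc_lt_top.ne,
      integrableOn_const measure_Icc_lt_top.ne, fun τ _ => ?_⟩
    rw [intervalIntegral.integral_const]
    simp [hζ]
  refine ⟨action F b ζ (fun _ => W) s t, ζ, fun _ => W, hAC, ?_, ?_, rfl⟩
  · rw [show ζ s = X by simp [hζ]]; exact hX
  · have : ζ t = X + (t - s) • W := by simp [hζ]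
    rw [this, hW, smul_smul]
    rw [show (t - s) * (1 / (t - s)) = 1 by
      rw [mul_one_div]
      exact div_self (sub_ne_zero.mpr hst.ne')]
    simp [hX']

lemma mem_actSet_ge {s t : ℝ} (hst : s ≤ t) (hMF : ∀ j x, |F j x| ≤ MF j) {x x' : Torus d}
    {a : ℝ} (ha : a ∈ {a | ∃ ζ g : ℝ → V d, IsAC ζ g s t ∧ projT (ζ s) = x ∧
      projT (ζ t) = x' ∧ action F b ζ g s t = a}) : lbv F b MF s t ≤ a := by
  obtain ⟨ζ, g, hAC, _, _, rfl⟩ := ha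
  exact action_ge hst hAC MF hMF

lemma actFn_le_action {s t : ℝ} (hst : s ≤ t) (hMF : ∀ j x, |F j x| ≤ MF j)
    {ζ g : ℝ → V d} (h : IsAC ζ g s t) :
    actFn F b s t (projT (ζ s)) (projT (ζ t)) ≤ action F b ζ g s t := by
  apply csInf_le ⟨lbv F b MF s t, fun a ha => mem_actSet_ge hst hMF ha⟩
  exact ⟨ζ, g, h, rfl, rfl, rfl⟩

lemma le_actFn {s t : ℝ} (hst : s < t) {x x' : Torus d} {c : ℝ}
    (hc : ∀ ζ g : ℝ → V d, IsAC ζ g s t → projT (ζ s) = x → projT (ζ t) = x' →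
      c ≤ action F b ζ g s t) : c ≤ actFn F b s t x x' := by
  apply le_csInf (actSet_nonempty hst x x')
  rintro a ⟨ζ, g, hAC, h1, h2, rfl⟩
  exact hc ζ g hAC h1 h2

lemma lbv_le_actFn {s t : ℝ} (hst : s < t) (hMF : ∀ j x, |F j x| ≤ MF j) (x x' : Torus d) :
    lbv F b MF s t ≤ actFn F b s t x x' :=
  le_actFn hst fun ζ g hAC _ _ => action_ge hst.le hAC MF hMF

lemma KOp_eq {s t : ℝ} (hst : s < t) (x : Torus d) :
    KOp F b s t φ x = sInf {a | ∃ y : Torus d, a = φ y + actFn F b s t y x} := by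
  unfold KOp; rw [if_pos hst]

lemma KOp_le {s t : ℝ} (hst : s < t) (hMF : ∀ j x, |F j x| ≤ MF j)
    {mφ : ℝ} (hmφ : ∀ y, mφ ≤ φ y) (y x : Torus d) :
    KOp F b s t φ x ≤ φ y + actFn F b s t y x := by
  rw [KOp_eq hst]
  apply csInf_le
  · refine ⟨mφ + lbv F b MF s t, ?_⟩
    rintro a ⟨y', rfl⟩
    have h1 := lbv_le_actFn (b := b) hst hMF y' x
    have h2 := hmφ y'
    linarith
  · exact ⟨y, rfl⟩

lemma le_KOp {s t : ℝ} (hst : s < t) {c : ℝ} {x : Torus d}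
    (hc : ∀ y, c ≤ φ y + actFn F b s t y x) : c ≤ KOp F b s t φ x := by
  rw [KOp_eq hst]
  apply le_csInf
  · exact ⟨φ (fun _ => 0) + actFn F b s t (fun _ => 0) x, ⟨_, rfl⟩⟩
  · rintro a ⟨y, rfl⟩; exact hc y

lemma KChk_eq {s t : ℝ} (hst : s < t) (x : Torus d) :
    KChk F b s t φ x = sSup {a | ∃ y : Torus d, a = φ y - actFn F b s t x y} := by
  unfold KChk; rw [if_pos hst]

lemma KChk_ge {s t : ℝ} (hst : s < t) (hMF : ∀ j x, |F j x| ≤ MF j)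
    {Mφ : ℝ} (hMφ : ∀ y, φ y ≤ Mφ) (y x : Torus d) :
    φ y - actFn F b s t x y ≤ KChk F b s t φ x := by
  rw [KChk_eq hst]
  apply le_csSup
  · refine ⟨Mφ - lbv F b MF s t, ?_⟩
    rintro a ⟨y', rfl⟩
    have h1 := lbv_le_actFn (b := b) hst hMF x y'
    have h2 := hMφ y'
    linarith
  · exact ⟨y, rfl⟩

lemma KChk_le {s t : ℝ} (hst : s < t) {c : ℝ} {x : Torus d}
    (hc : ∀ y, φ y - actFn F b s t x y ≤ c) : KChk F b s t φ x ≤ c := by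
  rw [KChk_eq hst]
  apply csSup_le
  · exact ⟨φ (fun _ => 0) - actFn F b s t x (fun _ => 0), ⟨_, rfl⟩⟩
  · rintro a ⟨y, rfl⟩; exact hc y

end value
section core
variable {d : ℕ} {F : ℤ → Torus d → ℝ} {b : V d}

lemma action_unit_ge {ζ g : ℝ → V d} (c : ℤ) (h : IsAC ζ g ((c:ℝ) - 1) (c:ℝ)) :
    1/2 * ‖ζ (c:ℝ) - ζ ((c:ℝ) - 1)‖ ^ 2 - (inner ℝ b (ζ (c:ℝ) - ζ ((c:ℝ) - 1)) : ℝ)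
      - F (c - 1) (projT (ζ ((c:ℝ) - 1)))
    ≤ action F b ζ g ((c:ℝ) - 1) (c:ℝ) := by
  have hle : (c:ℝ) - 1 ≤ (c:ℝ) := by linarith
  set W : V d := ζ (c:ℝ) - ζ ((c:ℝ) - 1) with hW
  have hvel : (∫ τ in ((c:ℝ) - 1)..(c:ℝ), g τ) = W :=
    integral_velocity h (le_refl _) hle (le_refl _)
  have hgi : IntervalIntegrable g volume ((c:ℝ) - 1) (c:ℝ) :=
    intInt h.1 (le_refl _) hle (le_refl _)
  have hg2i : IntervalIntegrable (fun τ => (1:ℝ)/2 * ‖g τ‖ ^ 2) volume ((c:ℝ) - 1) (c:ℝ) :=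
    (intInt h.2.1 (le_refl _) hle (le_refl _)).const_mul _
  have hbi : IntervalIntegrable (fun τ => (inner ℝ b (g τ) : ℝ)) volume ((c:ℝ) - 1) (c:ℝ) := by
    refine intInt ?_ (le_refl _) hle (le_refl _)
    have := (innerSL ℝ b).integrable_comp h.1
    simpa [IntegrableOn] using this
  have hsplit : (∫ τ in ((c:ℝ) - 1)..(c:ℝ), ((1:ℝ)/2 * ‖g τ‖ ^ 2 - (inner ℝ b (g τ) : ℝ)))
      = (∫ τ in ((c:ℝ) - 1)..(c:ℝ), (1:ℝ)/2 * ‖g τ‖ ^ 2)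
        - ∫ τ in ((c:ℝ) - 1)..(c:ℝ), (inner ℝ b (g τ) : ℝ) :=
    intervalIntegral.integral_sub hg2i hbi
  have hinner : (∫ τ in ((c:ℝ) - 1)..(c:ℝ), (inner ℝ b (g τ) : ℝ)) = (inner ℝ b W : ℝ) := by
    have := (innerSL ℝ b).intervalIntegral_comp_comm hgi
    simp only [innerSL_apply_apply] at this
    rw [this, hvel]
  have hJ : 1/2 * ‖W‖ ^ 2 ≤ ∫ τ in ((c:ℝ) - 1)..(c:ℝ), (1:ℝ)/2 * ‖g τ‖ ^ 2 := by
    have h' : IsAC ζ g ((c:ℝ) - 1) (((c:ℝ) - 1) + 1) := by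
      rw [show ((c:ℝ) - 1) + 1 = (c:ℝ) by ring]; exact h
    have := jensen h'
    rw [show ((c:ℝ) - 1) + 1 = (c:ℝ) by ring] at this
    exact this
  have hkick : ∑ i ∈ Finset.Ico ⌈(c:ℝ) - 1⌉ ⌈(c:ℝ)⌉, F i (projT (ζ (i : ℝ)))
      = F (c - 1) (projT (ζ ((c:ℝ) - 1))) := by
    have h2 : ⌈(c:ℝ) - 1⌉ = c - 1 := by
      rw [show ((c:ℝ) - 1) = ((c - 1 : ℤ) : ℝ) by push_cast; ring, Int.ceil_intCast]
    rw [h2, Int.ceil_intCast, Ico_pred_self c, Finset.sum_singleton,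
      show ((c - 1 : ℤ) : ℝ) = (c:ℝ) - 1 by push_cast; ring]
  unfold action
  rw [hsplit, hinner, hkick]
  linarith

/-- Modified past curve on `[m,j]`, ending at `ζ j + w`. -/
lemma modified_past_curve {m n j : ℤ} (hj1 : m < j) (hj2 : j ≤ n) {ζ g : ℝ → V d}
    {v : ℤ → V d} (hAC : IsAC ζ g (m:ℝ) (n:ℝ)) (haff : AffineOnUnit ζ v m n) (w : V d) :
    ∃ ζ₁ g₁ : ℝ → V d, IsAC ζ₁ g₁ (m:ℝ) (j:ℝ) ∧ ζ₁ (m:ℝ) = ζ (m:ℝ) ∧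
      ζ₁ (j:ℝ) = ζ (j:ℝ) + w ∧
      action F b ζ₁ g₁ (m:ℝ) (j:ℝ)
        ≤ action F b ζ g (m:ℝ) (j:ℝ) + (inner ℝ (v j - b) w : ℝ) + 1/2 * ‖w‖ ^ 2 := by
  have hmjR : (m:ℝ) ≤ (j:ℝ) := by exact_mod_cast hj1.le
  have hjnR : (j:ℝ) ≤ (n:ℝ) := by exact_mod_cast hj2
  have hm1R : (m:ℝ) ≤ (j:ℝ) - 1 := by
    have h0 : m ≤ j - 1 := by omega
    have h1 : ((m:ℤ):ℝ) ≤ ((j - 1 : ℤ):ℝ) := by exact_mod_cast h0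
    push_cast at h1; linarith
  have hj1R : (j:ℝ) - 1 ≤ (j:ℝ) := by linarith
  -- velocity identity
  have hvj : ζ ((j:ℝ) - 1) = ζ (j:ℝ) - v j := by
    have := haff j hj1 hj2 ((j:ℝ) - 1) ⟨le_refl _, by linarith⟩
    rw [this, show ((j:ℝ) - 1) - (j:ℝ) = -1 by ring, neg_one_smul]
    abel
  -- the restricted action bound on [j-1, j]
  have hACu : IsAC ζ g ((j:ℝ) - 1) (j:ℝ) := isAC_mono hAC hm1R hj1R hjnR
  have hunit := action_unit_ge (F := F) (b := b) j hACu
  rw [hvj] at hunit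
  have hunit' : 1/2 * ‖v j‖ ^ 2 - (inner ℝ b (v j) : ℝ) - F (j - 1) (projT (ζ (j:ℝ) - v j))
      ≤ action F b ζ g ((j:ℝ) - 1) (j:ℝ) := by
    have he : ζ (j:ℝ) - (ζ (j:ℝ) - v j) = v j := by abel
    rw [he] at hunit
    exact hunit
  -- the affine replacement on [j-1, j]
  set S : V d := ζ (j:ℝ) - v j with hS
  set W : V d := v j + w with hWd
  have haffAC : IsAC (affC j S W) (fun _ => W) ((j:ℝ) - 1) (j:ℝ) := affC_isAC j S W
  have haffact : action F b (affC j S W) (fun _ => W) ((j:ℝ) - 1) (j:ℝ)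
      = 1/2 * ‖W‖ ^ 2 - (inner ℝ b W : ℝ) - F (j - 1) (projT S) := affC_action j S W
  have hend : affC j S W (j:ℝ) = ζ (j:ℝ) + w := by
    rw [affC_end]; rw [hS, hWd]; abel
  have hstart : affC j S W ((j:ℝ) - 1) = ζ ((j:ℝ) - 1) := by rw [affC_start, hS, hvj]
  have hcost : action F b (affC j S W) (fun _ => W) ((j:ℝ) - 1) (j:ℝ)
      ≤ action F b ζ g ((j:ℝ) - 1) (j:ℝ) + (inner ℝ (v j - b) w : ℝ) + 1/2 * ‖w‖ ^ 2 := by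
    rw [haffact]
    have hexp : ‖W‖ ^ 2 = ‖v j‖ ^ 2 + 2 * (inner ℝ (v j) w : ℝ) + ‖w‖ ^ 2 := by
      rw [hWd]; exact norm_add_sq_real _ _
    have hbW : (inner ℝ b W : ℝ) = inner ℝ b (v j) + inner ℝ b w := by rw [hWd, inner_add_right]
    have hvbw : (inner ℝ (v j - b) w : ℝ) = inner ℝ (v j) w - inner ℝ b w := inner_sub_left _ _ _
    rw [hS] at *
    nlinarith [hunit', hexp, hbW, hvbw]
  rcases eq_or_lt_of_le hm1R with hcase | hcase
  · -- m = j - 1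
    refine ⟨affC j S W, fun _ => W, ?_, ?_, hend, ?_⟩
    · rw [hcase]; exact haffAC
    · rw [hcase, hstart]
    · rw [hcase]
      exact hcost
  · -- m < j - 1 : concatenate
    have hmj1 : m < j - 1 := by
      have : (m:ℝ) < ((j - 1 : ℤ) : ℝ) := by push_cast; linarith
      exact_mod_cast this
    have hcast : ((j - 1 : ℤ) : ℝ) = (j:ℝ) - 1 := by push_cast; ring
    have hACm1 : IsAC ζ g (m:ℝ) ((j - 1 : ℤ) : ℝ) := by
      rw [hcast]; exact isAC_mono hAC (le_refl _) hm1R (le_trans hj1R hjnR)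
    have haffAC' : IsAC (affC j S W) (fun _ => W) ((j - 1 : ℤ) : ℝ) (j:ℝ) := by
      rw [hcast]; exact haffAC
    have hk0 : affC j S W ((j - 1 : ℤ) : ℝ) = ζ ((j - 1 : ℤ) : ℝ) + intShift (fun _ => 0) := by
      rw [hcast, hstart]
      have : intShift (d := d) (fun _ => 0) = 0 := by
        ext i; rw [intShift_apply]; simp
      rw [this, add_zero]
    obtain ⟨ζ₁, g₁, hAC₁, hm₁, hj₁, hact₁⟩ :=
      concat (F := F) (b := b) hmj1 (by omega : j - 1 < j) hACm1 haffAC' (fun _ => 0) hk0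
    refine ⟨ζ₁, g₁, hAC₁, hm₁, ?_, ?_⟩
    · rw [hj₁, hend]
      have : intShift (d := d) (fun _ => 0) = 0 := by
        ext i; rw [intShift_apply]; simp
      rw [this, sub_zero]
    · rw [hact₁]
      have hsplitζ : action F b ζ g (m:ℝ) (j:ℝ)
          = action F b ζ g (m:ℝ) ((j - 1 : ℤ) : ℝ) + action F b ζ g ((j - 1 : ℤ) : ℝ) (j:ℝ) := by
        have := action_split (F := F) (b := b) (by omega : m ≤ j - 1) (by omega : j - 1 ≤ j)
          (isAC_mono hAC (le_refl _) hmjR hjnR)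
        exact this
      have hcost' : action F b (affC j S W) (fun _ => W) ((j - 1 : ℤ) : ℝ) (j:ℝ)
          ≤ action F b ζ g ((j - 1 : ℤ) : ℝ) (j:ℝ) + (inner ℝ (v j - b) w : ℝ) + 1/2 * ‖w‖ ^ 2 := by
        rw [hcast]; exact hcost
      linarith [hsplitζ, hcost']

/-- Modified future curve on `[j,n]`, starting at `ζ j + w`. -/
lemma modified_future_curve {m n j : ℤ} (hj1 : m ≤ j) (hj2 : j < n) {ζ g : ℝ → V d}
    {v : ℤ → V d} (hAC : IsAC ζ g (m:ℝ) (n:ℝ)) (haff : AffineOnUnit ζ v m n) (w : V d) :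
    ∃ ζ₂ g₂ : ℝ → V d, IsAC ζ₂ g₂ (j:ℝ) (n:ℝ) ∧ ζ₂ (j:ℝ) = ζ (j:ℝ) + w ∧
      ζ₂ (n:ℝ) = ζ (n:ℝ) ∧
      action F b ζ₂ g₂ (j:ℝ) (n:ℝ)
        ≤ action F b ζ g (j:ℝ) (n:ℝ) - (inner ℝ (v (j+1) - b) w : ℝ) + 1/2 * ‖w‖ ^ 2
          - F j (projT (ζ (j:ℝ) + w)) + F j (projT (ζ (j:ℝ))) := by
  have hmjR : (m:ℝ) ≤ (j:ℝ) := by exact_mod_cast hj1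
  have hjnR : (j:ℝ) ≤ (n:ℝ) := by exact_mod_cast hj2.le
  have hj1R : (j:ℝ) + 1 ≤ (n:ℝ) := by
    have h0 : j + 1 ≤ n := by omega
    have h1 : ((j + 1 : ℤ):ℝ) ≤ ((n:ℤ):ℝ) := by exact_mod_cast h0
    push_cast at h1; linarith
  have hcast1 : ((j + 1 : ℤ) : ℝ) = (j:ℝ) + 1 := by push_cast; ring
  -- velocity identity at j+1
  have hvj1 : ζ ((j:ℝ) + 1) = ζ (j:ℝ) + v (j+1) := by
    have := haff (j+1) (by omega) (by omega) ((j:ℝ)) ⟨by rw [hcast1]; linarith, by rw [hcast1]; linarith⟩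
    rw [hcast1] at this
    rw [show ζ (j:ℝ) = ζ ((j:ℝ)+1) + ((j:ℝ) - ((j:ℝ)+1)) • v (j+1) from this,
      show (j:ℝ) - ((j:ℝ)+1) = -1 by ring, neg_one_smul]
    abel
  -- unit action bound on [j, j+1]
  have hACu : IsAC ζ g ((j:ℝ)) ((j:ℝ)+1) := isAC_mono hAC hmjR (by linarith) hj1R
  have hACu' : IsAC ζ g (((j+1:ℤ):ℝ) - 1) ((j+1:ℤ):ℝ) := by
    rw [hcast1, show ((j:ℝ) + 1) - 1 = (j:ℝ) by ring]; exact hACu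
  have hunit := action_unit_ge (F := F) (b := b) (j+1) hACu'
  rw [show ((j+1:ℤ):ℝ) - 1 = (j:ℝ) by rw [hcast1]; ring, hcast1, hvj1] at hunit
  have hunit' : 1/2 * ‖v (j+1)‖ ^ 2 - (inner ℝ b (v (j+1)) : ℝ) - F j (projT (ζ (j:ℝ)))
      ≤ action F b ζ g (j:ℝ) ((j:ℝ) + 1) := by
    have he : ζ (j:ℝ) + v (j+1) - ζ (j:ℝ) = v (j+1) := by abel
    rw [he, show j + 1 - 1 = j by ring] at hunit
    exact hunit
  -- affine replacement on [j, j+1]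
  set S : V d := ζ (j:ℝ) + w with hS
  set W : V d := v (j+1) - w with hWd
  have haffAC : IsAC (affC (j+1) S W) (fun _ => W) (((j+1:ℤ):ℝ) - 1) ((j+1:ℤ):ℝ) :=
    affC_isAC (j+1) S W
  have haffact := affC_action (F := F) (b := b) (j+1) S W
  have hstart : affC (j+1) S W (((j+1:ℤ):ℝ) - 1) = S := affC_start _ _ _
  have hendaff : affC (j+1) S W ((j+1:ℤ):ℝ) = ζ ((j:ℝ)+1) := by
    rw [affC_end, hS, hWd, hvj1]; abel
  have hcost : action F b (affC (j+1) S W) (fun _ => W) (((j+1:ℤ):ℝ) - 1) ((j+1:ℤ):ℝ)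
      ≤ action F b ζ g (j:ℝ) ((j:ℝ)+1) - (inner ℝ (v (j+1) - b) w : ℝ) + 1/2 * ‖w‖ ^ 2
        - F j (projT (ζ (j:ℝ) + w)) + F j (projT (ζ (j:ℝ))) := by
    rw [haffact]
    have hexp : ‖W‖ ^ 2 = ‖v (j+1)‖ ^ 2 - 2 * (inner ℝ (v (j+1)) w : ℝ) + ‖w‖ ^ 2 := by
      rw [hWd]; exact norm_sub_sq_real _ _
    have hbW : (inner ℝ b W : ℝ) = inner ℝ b (v (j+1)) - inner ℝ b w := by rw [hWd, inner_sub_right]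
    have hvbw : (inner ℝ (v (j+1) - b) w : ℝ) = inner ℝ (v (j+1)) w - inner ℝ b w := inner_sub_left _ _ _
    have hFS : F (j + 1 - 1) (projT S) = F j (projT (ζ (j:ℝ) + w)) := by
      rw [show j + 1 - 1 = j by ring, hS]
    rw [hFS]
    nlinarith [hunit', hexp, hbW, hvbw]
  rcases eq_or_lt_of_le hj1R with hcase | hcase
  · -- j + 1 = n
    have hc2 : ((j+1:ℤ):ℝ) = (n:ℝ) := by rw [hcast1, hcase]
    have hc3 : ((j+1:ℤ):ℝ) - 1 = (j:ℝ) := by rw [hcast1]; ring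
    refine ⟨affC (j+1) S W, fun _ => W, ?_, ?_, ?_, ?_⟩
    · rw [← hc2, ← hc3]; exact haffAC
    · rw [← hc3]; rw [hstart, hS]
    · rw [← hc2, hendaff, hcast1, hcase]
    · have := hcost
      rw [hc3, hc2] at this
      calc action F b (affC (j+1) S W) (fun _ => W) (j:ℝ) (n:ℝ)
          ≤ action F b ζ g (j:ℝ) ((j:ℝ)+1) - (inner ℝ (v (j+1) - b) w : ℝ) + 1/2 * ‖w‖ ^ 2
            - F j (projT (ζ (j:ℝ) + w)) + F j (projT (ζ (j:ℝ))) := this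
        _ = action F b ζ g (j:ℝ) (n:ℝ) - (inner ℝ (v (j+1) - b) w : ℝ) + 1/2 * ‖w‖ ^ 2
            - F j (projT (ζ (j:ℝ) + w)) + F j (projT (ζ (j:ℝ))) := by rw [hcase]
  · -- j + 1 < n : concatenate affine with ζ on [j+1, n]
    have hj1n : j + 1 < n := by
      have : ((j+1:ℤ):ℝ) < (n:ℝ) := by rw [hcast1]; exact hcase
      exact_mod_cast this
    have haffAC2 : IsAC (affC (j+1) S W) (fun _ => W) ((j:ℤ):ℝ) ((j+1:ℤ):ℝ) := by
      have := haffAC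
      rw [show ((j+1:ℤ):ℝ) - 1 = ((j:ℤ):ℝ) by rw [hcast1]; push_cast; ring] at this
      exact this
    have hACrest : IsAC ζ g ((j+1:ℤ):ℝ) ((n:ℤ):ℝ) := by
      rw [hcast1]; exact isAC_mono hAC (by linarith) hcase.le (le_refl _)
    have hk0 : ζ ((j+1:ℤ):ℝ) = affC (j+1) S W ((j+1:ℤ):ℝ) + intShift (fun _ => 0) := by
      rw [hendaff, hcast1]
      have : intShift (d := d) (fun _ => 0) = 0 := by
        ext i; rw [intShift_apply]; simp
      rw [this, add_zero]
    obtain ⟨ζ₂, g₂, hAC₂, hj₂, hn₂, hact₂⟩ :=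
      concat (F := F) (b := b) (by omega : j < j + 1) hj1n haffAC2 hACrest (fun _ => 0) hk0
    have hzero : intShift (d := d) (fun _ => 0) = 0 := by
      ext i; rw [intShift_apply]; simp
    refine ⟨ζ₂, g₂, hAC₂, ?_, ?_, ?_⟩
    · rw [hj₂]
      have : affC (j+1) S W ((j:ℤ):ℝ) = S := by
        have := hstart
        rw [show ((j+1:ℤ):ℝ) - 1 = ((j:ℤ):ℝ) by rw [hcast1]; push_cast; ring] at this
        exact this
      rw [this, hS]
    · rw [hn₂, hzero, sub_zero]
    · rw [hact₂]
      have hsplitζ : action F b ζ g (j:ℝ) (n:ℝ)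
          = action F b ζ g ((j:ℤ):ℝ) ((j+1:ℤ):ℝ) + action F b ζ g ((j+1:ℤ):ℝ) ((n:ℤ):ℝ) := by
        exact action_split (by omega : j ≤ j + 1) (by omega : j + 1 ≤ n)
          (isAC_mono hAC hmjR hjnR (le_refl _))
      have hcost2 : action F b (affC (j+1) S W) (fun _ => W) ((j:ℤ):ℝ) ((j+1:ℤ):ℝ)
          ≤ action F b ζ g (j:ℝ) ((j:ℝ)+1) - (inner ℝ (v (j+1) - b) w : ℝ) + 1/2 * ‖w‖ ^ 2
            - F j (projT (ζ (j:ℝ) + w)) + F j (projT (ζ (j:ℝ))) := by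
        have := hcost
        rw [show ((j+1:ℤ):ℝ) - 1 = ((j:ℤ):ℝ) by rw [hcast1]; push_cast; ring] at this
        exact this
      have hcast2 : action F b ζ g ((j:ℤ):ℝ) ((j+1:ℤ):ℝ) = action F b ζ g (j:ℝ) ((j:ℝ)+1) := by
        rw [hcast1]
      linarith [hsplitζ, hcost2, hcast2 ▸ hsplitζ]

end core
section cores
variable {d : ℕ} {F : ℤ → Torus d → ℝ} {b : V d} {MF : ℤ → ℝ} {φ : Torus d → ℝ}

lemma min_core (hMF : ∀ j x, |F j x| ≤ MF j) {mφ : ℝ} (hmφ : ∀ y, mφ ≤ φ y)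
    {m n j : ℤ} (hj1 : m < j) (hj2 : j < n)
    {ζ g : ℝ → V d} {v : ℤ → V d}
    (hmin : IsMinimizer F b m n φ ζ g) (haff : AffineOnUnit ζ v m n) :
    (∀ w, KOp F b (m:ℝ) (j:ℝ) φ (projT (ζ (j:ℝ) + w))
        ≤ KOp F b (m:ℝ) (j:ℝ) φ (projT (ζ (j:ℝ))) + (inner ℝ (v j - b) w : ℝ) + 1/2 * ‖w‖ ^ 2) ∧
    (∀ w, KOp F b (m:ℝ) (j:ℝ) φ (projT (ζ (j:ℝ)))
          + (inner ℝ (v (j+1) - b) w : ℝ) - 1/2 * ‖w‖ ^ 2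
          + F j (projT (ζ (j:ℝ) + w)) - F j (projT (ζ (j:ℝ)))
        ≤ KOp F b (m:ℝ) (j:ℝ) φ (projT (ζ (j:ℝ) + w))) := by
  obtain ⟨hAC, heq⟩ := hmin
  have hmjR : (m:ℝ) < (j:ℝ) := by exact_mod_cast hj1
  have hjnR : (j:ℝ) < (n:ℝ) := by exact_mod_cast hj2
  have hmnR : (m:ℝ) < (n:ℝ) := hmjR.trans hjnR
  have hACmj : IsAC ζ g (m:ℝ) (j:ℝ) := isAC_mono hAC (le_refl _) hmjR.le hjnR.le
  have hACjn : IsAC ζ g (j:ℝ) (n:ℝ) := isAC_mono hAC hmjR.le hjnR.le (le_refl _)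
  have hsplitmn : action F b ζ g (m:ℝ) (n:ℝ)
      = action F b ζ g (m:ℝ) (j:ℝ) + action F b ζ g (j:ℝ) (n:ℝ) :=
    action_split hj1.le hj2.le hAC
  have hE1 : ∀ (z : V d) (ζ₁ g₁ : ℝ → V d), IsAC ζ₁ g₁ (m:ℝ) (j:ℝ) →
      projT (ζ₁ (j:ℝ)) = projT z →
      KOp F b (m:ℝ) (j:ℝ) φ (projT z) ≤ φ (projT (ζ₁ (m:ℝ))) + action F b ζ₁ g₁ (m:ℝ) (j:ℝ) := by
    intro z ζ₁ g₁ hAC₁ hend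
    have h1 := KOp_le (b := b) (φ := φ) hmjR hMF hmφ (projT (ζ₁ (m:ℝ))) (projT z)
    have h2 : actFn F b (m:ℝ) (j:ℝ) (projT (ζ₁ (m:ℝ))) (projT z)
        ≤ action F b ζ₁ g₁ (m:ℝ) (j:ℝ) := by
      rw [← hend]; exact actFn_le_action hmjR.le hMF hAC₁
    linarith
  have hE1n : ∀ (z : V d) (ζ₁ g₁ : ℝ → V d), IsAC ζ₁ g₁ (m:ℝ) (n:ℝ) →
      projT (ζ₁ (n:ℝ)) = projT z →
      KOp F b (m:ℝ) (n:ℝ) φ (projT z) ≤ φ (projT (ζ₁ (m:ℝ))) + action F b ζ₁ g₁ (m:ℝ) (n:ℝ) := by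
    intro z ζ₁ g₁ hAC₁ hend
    have h1 := KOp_le (b := b) (φ := φ) hmnR hMF hmφ (projT (ζ₁ (m:ℝ))) (projT z)
    have h2 : actFn F b (m:ℝ) (n:ℝ) (projT (ζ₁ (m:ℝ))) (projT z)
        ≤ action F b ζ₁ g₁ (m:ℝ) (n:ℝ) := by
      rw [← hend]; exact actFn_le_action hmnR.le hMF hAC₁
    linarith
  have hE2 : KOp F b (m:ℝ) (j:ℝ) φ (projT (ζ (j:ℝ)))
      = φ (projT (ζ (m:ℝ))) + action F b ζ g (m:ℝ) (j:ℝ) := by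
    apply le_antisymm
    · exact hE1 (ζ (j:ℝ)) ζ g hACmj rfl
    · apply le_KOp hmjR
      intro y
      have hkey : φ (projT (ζ (m:ℝ))) + action F b ζ g (m:ℝ) (j:ℝ) - φ y
          ≤ actFn F b (m:ℝ) (j:ℝ) y (projT (ζ (j:ℝ))) := by
        apply le_actFn hmjR
        intro ζ₁ g₁ hAC₁ hst hen
        obtain ⟨k, hk⟩ := exists_intShift_of_projT_eq hen
        obtain ⟨ζs, gs, hACs, hsm, hsn, hacts⟩ :=
          concat (F := F) (b := b) hj1 hj2 hAC₁ hACjn k hk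
        have hKn := hE1n (ζ (n:ℝ)) ζs gs hACs (by rw [hsn, projT_sub_intShift])
        rw [hsm, hst] at hKn
        rw [heq, hsplitmn] at hKn
        rw [hacts] at hKn
        linarith
      linarith
  constructor
  · -- E3 : semiconcavity
    intro w
    obtain ⟨ζ₁, g₁, hAC₁, hm₁, hj₁, hact₁⟩ := modified_past_curve (F := F) (b := b) hj1 hj2.le hAC haff w
    have h1 := hE1 (ζ (j:ℝ) + w) ζ₁ g₁ hAC₁ (by rw [hj₁])
    rw [hm₁] at h1
    linarith [h1, hact₁, hE2]
  · -- E4 : semiconvexity along the minimizer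
    intro w
    obtain ⟨ζ₂, g₂, hAC₂, hj₂, hn₂, hact₂⟩ := modified_future_curve (F := F) (b := b) hj1.le hj2 hAC haff w
    have hclaim : KOp F b (m:ℝ) (n:ℝ) φ (projT (ζ (n:ℝ))) - action F b ζ₂ g₂ (j:ℝ) (n:ℝ)
        ≤ KOp F b (m:ℝ) (j:ℝ) φ (projT (ζ (j:ℝ) + w)) := by
      apply le_KOp hmjR
      intro y
      have hkey : KOp F b (m:ℝ) (n:ℝ) φ (projT (ζ (n:ℝ))) - action F b ζ₂ g₂ (j:ℝ) (n:ℝ) - φ y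
          ≤ actFn F b (m:ℝ) (j:ℝ) y (projT (ζ (j:ℝ) + w)) := by
        apply le_actFn hmjR
        intro ζ₁ g₁ hAC₁ hst hen
        obtain ⟨k, hk⟩ := exists_intShift_of_projT_eq
          (show projT (ζ₁ (j:ℝ)) = projT (ζ₂ (j:ℝ)) by rw [hen, hj₂])
        obtain ⟨ζs, gs, hACs, hsm, hsn, hacts⟩ :=
          concat (F := F) (b := b) hj1 hj2 hAC₁ hAC₂ k hk
        have hKn := hE1n (ζ (n:ℝ)) ζs gs hACs (by rw [hsn, projT_sub_intShift, hn₂])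
        rw [hsm, hst] at hKn
        rw [hacts] at hKn
        linarith
      linarith
    rw [heq] at hclaim
    linarith [hclaim, hact₂, hsplitmn, hE2]

lemma max_core (hMF : ∀ j x, |F j x| ≤ MF j) {Mφ : ℝ} (hMφ : ∀ y, φ y ≤ Mφ)
    {m n j : ℤ} (hj1 : m < j) (hj2 : j < n)
    {ζ g : ℝ → V d} {v : ℤ → V d}
    (hmax : IsMaximizer F b m n φ ζ g) (haff : AffineOnUnit ζ v m n) :
    (∀ w, KChk F b (j:ℝ) (n:ℝ) φ (projT (ζ (j:ℝ) + w))
        ≤ KChk F b (j:ℝ) (n:ℝ) φ (projT (ζ (j:ℝ))) + (inner ℝ (v j - b) w : ℝ) + 1/2 * ‖w‖ ^ 2) ∧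
    (∀ w, KChk F b (j:ℝ) (n:ℝ) φ (projT (ζ (j:ℝ)))
          + (inner ℝ (v (j+1) - b) w : ℝ) - 1/2 * ‖w‖ ^ 2
          + F j (projT (ζ (j:ℝ) + w)) - F j (projT (ζ (j:ℝ)))
        ≤ KChk F b (j:ℝ) (n:ℝ) φ (projT (ζ (j:ℝ) + w))) := by
  obtain ⟨hAC, heq⟩ := hmax
  have hmjR : (m:ℝ) < (j:ℝ) := by exact_mod_cast hj1
  have hjnR : (j:ℝ) < (n:ℝ) := by exact_mod_cast hj2
  have hmnR : (m:ℝ) < (n:ℝ) := hmjR.trans hjnR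
  have hACmj : IsAC ζ g (m:ℝ) (j:ℝ) := isAC_mono hAC (le_refl _) hmjR.le hjnR.le
  have hACjn : IsAC ζ g (j:ℝ) (n:ℝ) := isAC_mono hAC hmjR.le hjnR.le (le_refl _)
  have hsplitmn : action F b ζ g (m:ℝ) (n:ℝ)
      = action F b ζ g (m:ℝ) (j:ℝ) + action F b ζ g (j:ℝ) (n:ℝ) :=
    action_split hj1.le hj2.le hAC
  -- easy lower bound for χ against any future competitor curve
  have hE1 : ∀ (z : V d) (ζ₂ g₂ : ℝ → V d), IsAC ζ₂ g₂ (j:ℝ) (n:ℝ) →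
      projT (ζ₂ (j:ℝ)) = projT z →
      φ (projT (ζ₂ (n:ℝ))) - action F b ζ₂ g₂ (j:ℝ) (n:ℝ) ≤ KChk F b (j:ℝ) (n:ℝ) φ (projT z) := by
    intro z ζ₂ g₂ hAC₂ hstart
    have h1 := KChk_ge (b := b) (φ := φ) hjnR hMF hMφ (projT (ζ₂ (n:ℝ))) (projT z)
    have h2 : actFn F b (j:ℝ) (n:ℝ) (projT z) (projT (ζ₂ (n:ℝ)))
        ≤ action F b ζ₂ g₂ (j:ℝ) (n:ℝ) := by
      rw [← hstart]; exact actFn_le_action hjnR.le hMF hAC₂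
    linarith
  have hE1n : ∀ (z : V d) (ζ₂ g₂ : ℝ → V d), IsAC ζ₂ g₂ (m:ℝ) (n:ℝ) →
      projT (ζ₂ (m:ℝ)) = projT z →
      φ (projT (ζ₂ (n:ℝ))) - action F b ζ₂ g₂ (m:ℝ) (n:ℝ) ≤ KChk F b (m:ℝ) (n:ℝ) φ (projT z) := by
    intro z ζ₂ g₂ hAC₂ hstart
    have h1 := KChk_ge (b := b) (φ := φ) hmnR hMF hMφ (projT (ζ₂ (n:ℝ))) (projT z)
    have h2 : actFn F b (m:ℝ) (n:ℝ) (projT z) (projT (ζ₂ (n:ℝ)))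
        ≤ action F b ζ₂ g₂ (m:ℝ) (n:ℝ) := by
      rw [← hstart]; exact actFn_le_action hmnR.le hMF hAC₂
    linarith
  have hE2 : KChk F b (j:ℝ) (n:ℝ) φ (projT (ζ (j:ℝ)))
      = φ (projT (ζ (n:ℝ))) - action F b ζ g (j:ℝ) (n:ℝ) := by
    apply le_antisymm
    · apply KChk_le hjnR
      intro y
      have hkey : φ y - (φ (projT (ζ (n:ℝ))) - action F b ζ g (j:ℝ) (n:ℝ))
          ≤ actFn F b (j:ℝ) (n:ℝ) (projT (ζ (j:ℝ))) y := by
        apply le_actFn hjnR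
        intro ζ₂ g₂ hAC₂ hst hen
        obtain ⟨k, hk⟩ := exists_intShift_of_projT_eq hst.symm
        -- hk : ζ₂ j = ζ j + intShift k
        obtain ⟨ζs, gs, hACs, hsm, hsn, hacts⟩ :=
          concat (F := F) (b := b) hj1 hj2 hACmj hAC₂ k hk
        have hKn := hE1n (ζ (m:ℝ)) ζs gs hACs (by rw [hsm])
        rw [heq] at hKn
        rw [hacts, hsn, projT_sub_intShift, hen] at hKn
        linarith [hsplitmn]
      linarith
    · exact hE1 (ζ (j:ℝ)) ζ g hACjn rfl
  constructor
  · -- upper bound via modified past curve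
    intro w
    obtain ⟨ζ₁, g₁, hAC₁, hm₁, hj₁, hact₁⟩ := modified_past_curve (F := F) (b := b) hj1 hj2.le hAC haff w
    apply KChk_le hjnR
    intro y
    have hkey : φ y - (KChk F b (j:ℝ) (n:ℝ) φ (projT (ζ (j:ℝ)))
          + (inner ℝ (v j - b) w : ℝ) + 1/2 * ‖w‖ ^ 2)
        ≤ actFn F b (j:ℝ) (n:ℝ) (projT (ζ (j:ℝ) + w)) y := by
      apply le_actFn hjnR
      intro ζ₂ g₂ hAC₂ hst hen
      obtain ⟨k, hk⟩ := exists_intShift_of_projT_eq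
        (show projT (ζ₁ (j:ℝ)) = projT (ζ₂ (j:ℝ)) by rw [hj₁, hst])
      obtain ⟨ζs, gs, hACs, hsm, hsn, hacts⟩ :=
        concat (F := F) (b := b) hj1 hj2 hAC₁ hAC₂ k hk
      have hKn := hE1n (ζ (m:ℝ)) ζs gs hACs (by rw [hsm, hm₁])
      rw [heq] at hKn
      rw [hacts, hsn, projT_sub_intShift, hen] at hKn
      linarith [hsplitmn, hact₁, hE2]
    linarith
  · -- lower bound via modified future curve
    intro w
    obtain ⟨ζ₂, g₂, hAC₂, hj₂, hn₂, hact₂⟩ := modified_future_curve (F := F) (b := b) hj1.le hj2 hAC haff w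
    have h1 := hE1 (ζ (j:ℝ) + w) ζ₂ g₂ hAC₂ (by rw [hj₂])
    rw [hn₂] at h1
    linarith [h1, hact₂, hE2]

end cores
end S7

open S7 in
theorem statement7 {d : ℕ} (F : ℤ → Torus d → ℝ)
    (hF : ∀ j : ℤ, ContDiff ℝ 2 fun x : V d => F j (projT x)) (b : V d)
    (m n : ℤ) (hmn : m < n) (h2 : 2 ≤ n - m) (j : ℤ) (hj1 : m < j) (hj2 : j < n) :
    ∃ K : ℝ, 0 ≤ K ∧
      (∀ φ : Torus d → ℝ, Continuous φ → ∀ ζ g ζ' g' : ℝ → V d, ∀ v η : ℤ → V d,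
        IsMinimizer F b m n φ ζ g → IsMinimizer F b m n φ ζ' g' →
        AffineOnUnit ζ v m n → AffineOnUnit ζ' η m n →
        ‖v j - η j‖ ≤ K * dist (projT (ζ (j : ℝ))) (projT (ζ' (j : ℝ)))) ∧
      (∀ φ : Torus d → ℝ, Continuous φ → ∀ ζ g ζ' g' : ℝ → V d, ∀ v η : ℤ → V d,
        IsMaximizer F b m n φ ζ g → IsMaximizer F b m n φ ζ' g' →
        AffineOnUnit ζ v m n → AffineOnUnit ζ' η m n →
        ‖v j - η j‖ ≤ K * dist (projT (ζ (j : ℝ))) (projT (ζ' (j : ℝ)))) := by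
  classical
  set Fh : V d → ℝ := fun x => F j (projT x) with hFh
  have hFhper : ∀ (x : V d) (k : Fin d → ℤ), Fh (x + intShift k) = Fh x := by
    intro x k; show F j (projT (x + intShift k)) = F j (projT x); rw [projT_add_intShift]
  obtain ⟨L, hL0, hT⟩ := taylor_bound Fh (hF j) hFhper
  have hbound : ∀ i : ℤ, ∃ Mi : ℝ, ∀ x : Torus d, |F i x| ≤ Mi := by
    intro i
    obtain ⟨Mi, hMi⟩ := periodic_bounded (fun x => F i (projT x)) (hF i).continuous
      (fun x k => by show F i (projT (x + intShift k)) = F i (projT x); rw [projT_add_intShift])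
    refine ⟨Mi, fun x => ?_⟩
    obtain ⟨X, rfl⟩ := projT_surjective x
    simpa [Real.norm_eq_abs] using hMi X
  choose MF hMF using hbound
  have hC0 : (0:ℝ) ≤ 1/2 + L := by linarith
  refine ⟨6 * (1/2 + L) * Real.sqrt d, by positivity, ?_, ?_⟩
  · -- minimizers
    intro φ hφ ζ g ζ' g' v η hmin hmin' haff haff'
    have : Nonempty (Torus d) := ⟨fun _ => 0⟩
    obtain ⟨xmin, -, hxmin⟩ := IsCompact.exists_isMinOn (isCompact_univ : IsCompact (Set.univ : Set (Torus d)))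
      ⟨Classical.arbitrary _, Set.mem_univ _⟩ hφ.continuousOn
    have hmφ : ∀ y, φ xmin ≤ φ y := fun y => hxmin (Set.mem_univ y)
    obtain ⟨hup1, hlo1⟩ := min_core hMF hmφ hj1 hj2 hmin haff
    obtain ⟨hup2, hlo2⟩ := min_core hMF hmφ hj1 hj2 hmin' haff'
    set f : V d → ℝ := fun z => KOp F b (m:ℝ) (j:ℝ) φ (projT z) with hf
    obtain ⟨k, hk⟩ := exists_good_lift (ζ (j:ℝ)) (ζ' (j:ℝ))
    set y₀ : V d := ζ' (j:ℝ) + intShift k with hy₀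
    have hfper : ∀ z : V d, f (z + intShift k) = f z := by
      intro z; show KOp F b (m:ℝ) (j:ℝ) φ (projT (z + intShift k)) = _
      rw [projT_add_intShift]
    -- transfer curve-2 bounds to the shifted base point y₀
    have hup2' : ∀ w, f (y₀ + w) ≤ f y₀ + (inner ℝ (η j - b) w : ℝ) + 1/2 * ‖w‖ ^ 2 := by
      intro w
      have e : y₀ + w = (ζ' (j:ℝ) + w) + intShift k := by rw [hy₀]; abel
      rw [e, hfper, hy₀, hfper]
      exact hup2 w
    have hlo2' : ∀ w, f y₀ + (inner ℝ (η (j+1) - b) w : ℝ) - 1/2 * ‖w‖ ^ 2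
        + Fh (y₀ + w) - Fh y₀ ≤ f (y₀ + w) := by
      intro w
      have e : y₀ + w = (ζ' (j:ℝ) + w) + intShift k := by rw [hy₀]; abel
      rw [e, hfper, hFhper, hy₀, hfper, hFhper]
      exact hlo2 w
    -- upgrade lower bounds to slope-matching form
    have hlo1u := lower_bound_upgrade L hL0 Fh hT f (ζ (j:ℝ)) (v j - b) (v (j+1) - b) hup1 hlo1
    have hlo2u := lower_bound_upgrade L hL0 Fh hT f y₀ (η j - b) (η (j+1) - b) hup2' hlo2'
    have hup1c : ∀ w, f (ζ (j:ℝ) + w) ≤ f (ζ (j:ℝ)) + (inner ℝ (v j - b) w : ℝ)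
        + (1/2 + L) * ‖w‖ ^ 2 := by
      intro w; have := hup1 w; nlinarith [sq_nonneg ‖w‖, hL0]
    have hup2c : ∀ w, f (y₀ + w) ≤ f y₀ + (inner ℝ (η j - b) w : ℝ) + (1/2 + L) * ‖w‖ ^ 2 := by
      intro w; have := hup2' w; nlinarith [sq_nonneg ‖w‖, hL0]
    have hmain := slope_compare (1/2 + L) hC0 f (ζ (j:ℝ)) y₀ (v j - b) (η j - b)
      hup1c hlo1u hup2c
    rw [sub_sub_sub_cancel_right] at hmain
    calc ‖v j - η j‖ ≤ 6 * (1/2 + L) * ‖y₀ - ζ (j:ℝ)‖ := hmain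
      _ ≤ 6 * (1/2 + L) * (Real.sqrt d * dist (projT (ζ (j:ℝ))) (projT (ζ' (j:ℝ)))) := by
          apply mul_le_mul_of_nonneg_left hk (by linarith)
      _ = 6 * (1/2 + L) * Real.sqrt d * dist (projT (ζ (j:ℝ))) (projT (ζ' (j:ℝ))) := by ring
  · -- maximizers
    intro φ hφ ζ g ζ' g' v η hmax hmax' haff haff'
    have : Nonempty (Torus d) := ⟨fun _ => 0⟩
    obtain ⟨xmax, -, hxmax⟩ := IsCompact.exists_isMaxOn (isCompact_univ : IsCompact (Set.univ : Set (Torus d)))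
      ⟨Classical.arbitrary _, Set.mem_univ _⟩ hφ.continuousOn
    have hMφ : ∀ y, φ y ≤ φ xmax := fun y => hxmax (Set.mem_univ y)
    obtain ⟨hup1, hlo1⟩ := max_core hMF hMφ hj1 hj2 hmax haff
    obtain ⟨hup2, hlo2⟩ := max_core hMF hMφ hj1 hj2 hmax' haff'
    set f : V d → ℝ := fun z => KChk F b (j:ℝ) (n:ℝ) φ (projT z) with hf
    obtain ⟨k, hk⟩ := exists_good_lift (ζ (j:ℝ)) (ζ' (j:ℝ))
    set y₀ : V d := ζ' (j:ℝ) + intShift k with hy₀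
    have hfper : ∀ z : V d, f (z + intShift k) = f z := by
      intro z; show KChk F b (j:ℝ) (n:ℝ) φ (projT (z + intShift k)) = _
      rw [projT_add_intShift]
    have hup2' : ∀ w, f (y₀ + w) ≤ f y₀ + (inner ℝ (η j - b) w : ℝ) + 1/2 * ‖w‖ ^ 2 := by
      intro w
      have e : y₀ + w = (ζ' (j:ℝ) + w) + intShift k := by rw [hy₀]; abel
      rw [e, hfper, hy₀, hfper]
      exact hup2 w
    have hlo2' : ∀ w, f y₀ + (inner ℝ (η (j+1) - b) w : ℝ) - 1/2 * ‖w‖ ^ 2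
        + Fh (y₀ + w) - Fh y₀ ≤ f (y₀ + w) := by
      intro w
      have e : y₀ + w = (ζ' (j:ℝ) + w) + intShift k := by rw [hy₀]; abel
      rw [e, hfper, hFhper, hy₀, hfper, hFhper]
      exact hlo2 w
    have hlo1u := lower_bound_upgrade L hL0 Fh hT f (ζ (j:ℝ)) (v j - b) (v (j+1) - b) hup1 hlo1
    have hlo2u := lower_bound_upgrade L hL0 Fh hT f y₀ (η j - b) (η (j+1) - b) hup2' hlo2'
    have hup1c : ∀ w, f (ζ (j:ℝ) + w) ≤ f (ζ (j:ℝ)) + (inner ℝ (v j - b) w : ℝ)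
        + (1/2 + L) * ‖w‖ ^ 2 := by
      intro w; have := hup1 w; nlinarith [sq_nonneg ‖w‖, hL0]
    have hup2c : ∀ w, f (y₀ + w) ≤ f y₀ + (inner ℝ (η j - b) w : ℝ) + (1/2 + L) * ‖w‖ ^ 2 := by
      intro w; have := hup2' w; nlinarith [sq_nonneg ‖w‖, hL0]
    have hmain := slope_compare (1/2 + L) hC0 f (ζ (j:ℝ)) y₀ (v j - b) (η j - b)
      hup1c hlo1u hup2c
    rw [sub_sub_sub_cancel_right] at hmain
    calc ‖v j - η j‖ ≤ 6 * (1/2 + L) * ‖y₀ - ζ (j:ℝ)‖ := hmain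
      _ ≤ 6 * (1/2 + L) * (Real.sqrt d * dist (projT (ζ (j:ℝ))) (projT (ζ' (j:ℝ)))) := by
          apply mul_le_mul_of_nonneg_left hk (by linarith)
      _ = 6 * (1/2 + L) * Real.sqrt d * dist (projT (ζ (j:ℝ))) (projT (ζ' (j:ℝ))) := by ring
end
end
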